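/- arXiv:1010.2761 — 6 statements merged into one kernel-verified Lean document; each statement's English description precedes it below -/
import Mathlib

section
/- Every finite-dimensional F-linear representation of the dihedral group G = D_{2p} decomposes as a direct sum of subrepresentations, each of which is isomorphic either to the 1-dimensional trivial representation or to W_i for some 0 ≤ i ≤ (p-1)/2. -/
open Submodule

open Submodule

section auxlat
variable {α : Type*} [CompleteLattice α] [IsModularLattice α] {ι γ : Type*}

lemma iSupIndep_of_partition (Φ : ι → α) (g : ι → γ) (S : γ → α)
    (hle : ∀ i, Φ i ≤ S (g i)) (hS : iSupIndep S)
    (hfib : ∀ i0, Disjoint (Φ i0) (⨆ (j) (_ : g j = g i0 ∧ j ≠ i0), Φ j)) :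
    iSupIndep Φ := by
  rw [iSupIndep_def]
  intro i0
  set b := ⨆ (j) (_ : g j = g i0 ∧ j ≠ i0), Φ j with hbdef
  set c := ⨆ (d : γ) (_ : d ≠ g i0), S d with hcdef
  have hc : Disjoint (Φ i0 ⊔ b) c := by
    refine Disjoint.mono_left ?_ (iSupIndep_def.mp hS (g i0))
    refine sup_le (hle i0) (iSup_le fun j => iSup_le fun hj => ?_)
    exact le_trans (hle j) (le_of_eq (by rw [hj.1]))
  have hmain : (⨆ (j) (_ : j ≠ i0), Φ j) ≤ b ⊔ c := by
    refine iSup_le fun j => iSup_le fun hj => ?_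
    by_cases hgj : g j = g i0
    · exact le_sup_of_le_left
        (le_iSup₂ (f := fun j (_ : g j = g i0 ∧ j ≠ i0) => Φ j) j ⟨hgj, hj⟩)
    · exact le_sup_of_le_right (le_trans (hle j)
        (le_iSup₂ (f := fun d (_ : d ≠ g i0) => S d) (g j) hgj))
  exact (((hfib i0).disjoint_sup_right_of_disjoint_sup_left hc).mono_right hmain)

end auxlat

section auxspan
variable {F V : Type*} [Field F] [AddCommGroup V] [Module F V]

lemma span_image_isInternal {ι n : Type*} [DecidableEq n] (b : Module.Basis ι F V) (π : ι → n) :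
    DirectSum.IsInternal (fun k => Submodule.span F (b '' (π ⁻¹' {k}))) := by
  rw [DirectSum.isInternal_submodule_iff_iSupIndep_and_iSup_eq_top]
  constructor
  · rw [iSupIndep_def]
    intro k
    rw [Submodule.disjoint_def]
    intro x hx1 hx2
    have h2 : x ∈ span F (b '' (π ⁻¹' {k})ᶜ) := by
      have hle : (⨆ (j) (_ : j ≠ k), span F (b '' (π ⁻¹' {j}))) ≤ span F (b '' (π ⁻¹' {k})ᶜ) := by
        refine iSup_le fun j => iSup_le fun hj => span_mono (Set.image_mono ?_)
        intro i hi
        simp only [Set.mem_preimage, Set.mem_singleton_iff] at hi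
        simp [Set.mem_compl_iff, hi, hj]
      exact hle hx2
    rw [Module.Basis.mem_span_image] at hx1 h2
    have hsupp : (b.repr x).support = ∅ := by
      rw [← Finset.subset_empty]
      intro i hi
      exact absurd (h2 hi) (by simpa using hx1 hi)
    have : b.repr x = 0 := Finsupp.support_eq_empty.mp hsupp
    have hx0 : b.repr x = b.repr 0 := by simpa using this
    exact b.repr.injective hx0
  · rw [eq_top_iff, ← b.span_eq, span_le]
    rintro x ⟨i, -, rfl⟩
    exact (le_iSup (fun k => span F (b '' (π ⁻¹' {k}))) (π i))
      (subset_span ⟨i, by simp, rfl⟩)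

lemma linearIndependent_pair_of_basis {ι : Type*} (b : Module.Basis ι F V) {i j : ι} (h : i ≠ j) :
    LinearIndependent F ![b i, b j] := by
  have hinj : Function.Injective ![i, j] := by
    intro x y hxy
    fin_cases x <;> fin_cases y <;> simp_all
  have := b.linearIndependent.comp ![i, j] hinj
  convert this using 1
  funext k; fin_cases k <;> simp

lemma linearIndependent_pair_add {x y : V} (h : LinearIndependent F ![x, y]) :
    LinearIndependent F ![x, x + y] := by
  rw [LinearIndependent.pair_iff] at h ⊢
  intro s t hst
  have h' : (s + t) • x + t • y = 0 := by
    rw [← hst, smul_add, add_smul]; abel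
  obtain ⟨h1, h2⟩ := h (s + t) t h'
  constructor
  · have : s = s + t := by rw [h2, add_zero]
    rw [this, h1]
  · exact h2

lemma span_pair_add (x y : V) : span F ({x, x + y} : Set V) = span F ({x, y} : Set V) := by
  apply le_antisymm
  · rw [span_le]
    intro z hz
    rcases Set.mem_insert_iff.mp hz with rfl | hz'
    · exact subset_span (by simp)
    · rw [Set.mem_singleton_iff] at hz'
      rw [hz']
      exact add_mem (subset_span (by simp)) (subset_span (by simp))
  · rw [span_le]
    intro z hz
    rcases Set.mem_insert_iff.mp hz with rfl | hz'
    · exact subset_span (by simp)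
    · rw [Set.mem_singleton_iff] at hz'
      rw [hz']
      have hx : x ∈ span F ({x, x + y} : Set V) := subset_span (by simp)
      have hxy : x + y ∈ span F ({x, x + y} : Set V) := subset_span (by simp)
      simpa using sub_mem hxy hx

lemma mem_map_of_span {s : Set V} (f : V →ₗ[F] V) (W : Submodule F V)
    (h : ∀ x ∈ s, f x ∈ W) : ∀ v ∈ span F s, f v ∈ W := by
  intro v hv
  exact (span_le.mpr h : span F s ≤ W.comap f) hv

end auxspan

section auxrel
variable {F V : Type*} [Field F] [AddCommGroup V] [Module F V]

lemma exists_relcompl (A B : Submodule F V) (h : A ≤ B) :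
    ∃ C : Submodule F V, C ≤ B ∧ A ⊓ C = ⊥ ∧ A ⊔ C = B := by
  obtain ⟨D, hD⟩ := Submodule.exists_isCompl (Submodule.comap B.subtype A)
  have hinj : Function.Injective B.subtype := Subtype.val_injective
  refine ⟨D.map B.subtype, Submodule.map_subtype_le B D, ?_, ?_⟩
  · have h1 : A = (Submodule.comap B.subtype A).map B.subtype := by
      rw [Submodule.map_comap_subtype, inf_eq_right.mpr h]
    rw [h1, ← Submodule.map_inf _ hinj, hD.inf_eq_bot, Submodule.map_bot]
  · have h1 : A = (Submodule.comap B.subtype A).map B.subtype := by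
      rw [Submodule.map_comap_subtype, inf_eq_right.mpr h]
    rw [h1, ← Submodule.map_sup, hD.sup_eq_top, Submodule.map_top, Submodule.range_subtype]

end auxrel

section auxdih
variable {F V : Type*} [Field F] [AddCommGroup V] [Module F V]
variable {p : ℕ} [NeZero p] (θ : Representation F (DihedralGroup p) V)

lemma dihedral_r_eq (a : ZMod p) : (DihedralGroup.r a : DihedralGroup p) = (DihedralGroup.r 1) ^ a.val := by
  rw [DihedralGroup.r_one_pow]
  congr 1
  exact (ZMod.natCast_rightInverse a).symm

lemma dihedral_sr_eq (a : ZMod p) :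
    (DihedralGroup.sr a : DihedralGroup p) = DihedralGroup.sr 0 * DihedralGroup.r a := by
  rw [DihedralGroup.sr_mul_r, zero_add]

lemma rep_closure (W : Submodule F V)
    (h1 : ∀ v ∈ W, θ (DihedralGroup.r 1) v ∈ W)
    (h2 : ∀ v ∈ W, θ (DihedralGroup.sr 0) v ∈ W) :
    ∀ (g : DihedralGroup p) (v : V), v ∈ W → θ g v ∈ W := by
  have hpow : ∀ (n : ℕ) (v : V), v ∈ W → (θ (DihedralGroup.r 1) ^ n) v ∈ W := by
    intro n
    induction n with
    | zero => intro v hv; simpa using hv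
    | succ n ih =>
      intro v hv
      rw [pow_succ, Module.End.mul_apply]
      exact ih _ (h1 v hv)
  rintro (a | a) v hv
  · rw [dihedral_r_eq a, map_pow]
    exact hpow _ v hv
  · rw [dihedral_sr_eq a, map_mul, Module.End.mul_apply, dihedral_r_eq a, map_pow]
    exact h2 _ (hpow _ v hv)

lemma rep_fixed {v : V}
    (h1 : θ (DihedralGroup.r 1) v = v) (h2 : θ (DihedralGroup.sr 0) v = v) :
    ∀ g : DihedralGroup p, θ g v = v := by
  have hpow : ∀ n : ℕ, (θ (DihedralGroup.r 1) ^ n) v = v := by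
    intro n
    induction n with
    | zero => simp
    | succ n ih => rw [pow_succ, Module.End.mul_apply, h1, ih]
  rintro (a | a)
  · rw [dihedral_r_eq a, map_pow]; exact hpow _
  · rw [dihedral_sr_eq a, map_mul, Module.End.mul_apply, dihedral_r_eq a, map_pow, hpow, h2]

end auxdih

open Submodule Module Module.End Polynomial



/-- Every finite-dimensional `F`-linear representation of the dihedral group
`G = D_{2p}` (`p ≥ 3` odd, `F` algebraically closed of characteristic two)
decomposes as a direct sum of subrepresentations, each of which is isomorphic
either to the one-dimensional trivial representation or to `W_i`
for some `0 ≤ i ≤ (p-1)/2`, where `W_i` has a basis `v1, v2` with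
`ρ v1 = λ⁻ⁱ v1`, `ρ v2 = λⁱ v2`, `σ v1 = v2`, `σ v2 = v1`. -/
theorem dihedral_decomposition
    (p : ℕ) (hp_odd : Odd p) (hp : 3 ≤ p)
    (F : Type*) [Field F] [IsAlgClosed F] [CharP F 2]
    (lam : F) (hlam : IsPrimitiveRoot lam p)
    (V : Type*) [AddCommGroup V] [Module F V] [FiniteDimensional F V]
    (θ : Representation F (DihedralGroup p) V) :
    ∃ (n : ℕ) (W : Fin n → Submodule F V),
      DirectSum.IsInternal W ∧
      (∀ (k : Fin n) (g : DihedralGroup p) (v : V), v ∈ W k → θ g v ∈ W k) ∧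
      (∀ k : Fin n,
        (Module.finrank F (W k) = 1 ∧
          ∀ (g : DihedralGroup p) (v : V), v ∈ W k → θ g v = v) ∨
        (∃ i : ℕ, i ≤ (p - 1) / 2 ∧ ∃ v1 v2 : V,
          v1 ∈ W k ∧ v2 ∈ W k ∧
          W k = Submodule.span F {v1, v2} ∧
          LinearIndependent F ![v1, v2] ∧
          θ (DihedralGroup.r 1) v1 = lam⁻¹ ^ i • v1 ∧
          θ (DihedralGroup.r 1) v2 = lam ^ i • v2 ∧
          θ (DihedralGroup.sr 0) v1 = v2 ∧
          θ (DihedralGroup.sr 0) v2 = v1)) := by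
  haveI : NeZero p := ⟨by omega⟩
  set q := (p - 1) / 2 with hqdef
  have hpq : p = 2 * q + 1 := by
    obtain ⟨k, hk⟩ := hp_odd; omega
  set rr : Module.End F V := θ (DihedralGroup.r 1) with hrrdef
  set ss : Module.End F V := θ (DihedralGroup.sr 0) with hssdef
  -- basic relations
  have hss2 : ∀ v : V, ss (ss v) = v := by
    intro v
    have : ss * ss = 1 := by
      rw [hssdef, ← map_mul, DihedralGroup.sr_mul_sr, sub_self, ← DihedralGroup.one_def, map_one]
    calc ss (ss v) = (ss * ss) v := rfl
    _ = v := by rw [this]; rfl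
  have hrp : rr ^ p = 1 := by
    rw [hrrdef, ← map_pow, DihedralGroup.r_one_pow, ZMod.natCast_self, ← DihedralGroup.one_def,
      map_one]
  have hrs : rr * ss = ss * rr ^ (p - 1) := by
    rw [hrrdef, hssdef, ← map_pow, DihedralGroup.r_one_pow, ← map_mul, ← map_mul]
    congr 1
    rw [DihedralGroup.r_mul_sr, DihedralGroup.sr_mul_r, zero_add, zero_sub]
    congr 1
    have : ((p : ℕ) : ZMod p) = 0 := ZMod.natCast_self p
    push_cast [Nat.cast_sub (by omega : 1 ≤ p)]
    rw [this]; ring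
  -- char 2
  have h2F : (2 : F) = 0 := by
    have := CharP.cast_eq_zero F 2
    exact_mod_cast this
  have h2V : ∀ v : V, v + v = 0 := by
    intro v
    have : (2 : F) • v = v + v := two_smul F v
    rw [h2F, zero_smul] at this
    exact this.symm
  -- N = ss - 1
  set N : Module.End F V := ss - 1 with hNdef
  have hNapp : ∀ v : V, N v = ss v - v := by
    intro v; simp [hNdef]
  have hNN : ∀ v : V, N (N v) = 0 := by
    intro v
    rw [hNapp, hNapp, map_sub, hss2]
    have h1 : v - ss v - (ss v - v) = (v + v) - (ss v + ss v) := by abel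
    rw [h1, h2V, h2V, sub_zero]
  -- eigenvector powers
  have heigpow : ∀ (μ : F) (v : V), rr v = μ • v → ∀ n : ℕ, (rr ^ n) v = μ ^ n • v := by
    intro μ v hv n
    induction n with
    | zero => simp
    | succ n ih =>
      rw [pow_succ, Module.End.mul_apply, hv, map_smul, ih, smul_smul, pow_succ]
      ring_nf
  -- semisimplicity of rr
  have hpF : (p : F) ≠ 0 := by
    intro h
    have := (CharP.cast_eq_zero_iff F 2 p).mp h
    obtain ⟨c, hc⟩ := this
    obtain ⟨k, hk⟩ := hp_odd
    omega
  have haev : (Polynomial.aeval rr) (X ^ p - 1 : F[X]) = 0 := by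
    rw [map_sub, map_pow, aeval_X, map_one, hrp, sub_self]
  have hsq : Squarefree (X ^ p - 1 : F[X]) := by
    have hsep : (X ^ p - C (1 : F)).Separable :=
      Polynomial.separable_X_pow_sub_C (1 : F) hpF one_ne_zero
    rw [map_one] at hsep
    exact hsep.squarefree
  have hsemi : rr.IsFinitelySemisimple :=
    (Module.End.isSemisimple_of_squarefree_aeval_eq_zero hsq haev).isFinitelySemisimple
  have htop : (⨆ μ : F, rr.eigenspace μ) = ⊤ := by
    have h1 := Module.End.iSup_maxGenEigenspace_eq_top rr
    calc (⨆ μ : F, rr.eigenspace μ) = ⨆ μ : F, rr.maxGenEigenspace μ := by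
          refine iSup_congr fun μ => ?_
          exact (hsemi.maxGenEigenspace_eq_eigenspace μ).symm
    _ = ⊤ := h1
  -- ss maps eigenspace μ to eigenspace μ⁻¹
  have hssEig : ∀ μ : F, μ ^ p = 1 → ∀ v ∈ rr.eigenspace μ, ss v ∈ rr.eigenspace μ⁻¹ := by
    intro μ hμ v hv
    rw [Module.End.mem_eigenspace_iff] at hv ⊢
    have h1 : rr (ss v) = ss ((rr ^ (p - 1)) v) := by
      calc rr (ss v) = (rr * ss) v := rfl
      _ = (ss * rr ^ (p - 1)) v := by rw [hrs]
      _ = ss ((rr ^ (p - 1)) v) := rfl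
    have h2 : (rr ^ (p - 1)) v = μ ^ (p - 1) • v := heigpow μ v hv (p - 1)
    have h3 : μ ^ (p - 1) = μ⁻¹ := by
      have hμμ : μ * μ ^ (p - 1) = 1 := by
        rw [← pow_succ', Nat.sub_add_cancel (by omega : 1 ≤ p), hμ]
      exact (inv_eq_of_mul_eq_one_right hμμ).symm
    rw [h1, h2, h3, map_smul]
  -- lam facts
  have hlamp : lam ^ p = 1 := hlam.pow_eq_one
  have hval : ∀ k : ℕ, k ≤ p → lam⁻¹ ^ k = lam ^ (p - k) := by
    intro k hk
    rw [inv_pow]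
    apply inv_eq_of_mul_eq_one_right
    rw [← pow_add]
    have : k + (p - k) = p := by omega
    rw [this, hlamp]
  have hlaminvp : (lam⁻¹) ^ p = 1 := by rw [inv_pow, hlamp, inv_one]
  have hinvp : ∀ k : ℕ, (lam⁻¹ ^ k) ^ p = 1 := by
    intro k
    rw [← pow_mul, mul_comm k p, pow_mul, hlaminvp, one_pow]
  -- the eigenspaces
  set S0 : Submodule F V := rr.eigenspace 1 with hS0def
  set D : Fin q → Submodule F V := fun i => rr.eigenspace (lam⁻¹ ^ (i.1 + 1)) with hDdef
  set E : Fin q → Submodule F V := fun i => rr.eigenspace (lam ^ (i.1 + 1)) with hEdef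
  have hssS0 : ∀ v ∈ S0, ss v ∈ S0 := by
    intro v hv
    have := hssEig 1 (one_pow p) v hv
    rwa [inv_one] at this
  have hssD : ∀ (i : Fin q), ∀ v ∈ D i, ss v ∈ E i := by
    intro i v hv
    have := hssEig _ (hinvp (i.1 + 1)) v hv
    rwa [inv_pow, inv_inv] at this
  have hssE : ∀ (i : Fin q), ∀ v ∈ E i, ss v ∈ D i := by
    intro i v hv
    have := hssEig _ (by rw [← pow_mul, mul_comm, pow_mul, hlamp, one_pow]) v hv
    rwa [← inv_pow] at this
  -- N structure on S0
  have hNS0 : ∀ v ∈ S0, N v ∈ S0 := by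
    intro v hv
    rw [hNapp]
    exact sub_mem (hssS0 v hv) hv
  set K : Submodule F V := S0 ⊓ LinearMap.ker N with hKdef
  obtain ⟨C, hCS0, hKC_bot, hKC_sup⟩ := exists_relcompl K S0 inf_le_left
  set NC : Submodule F V := C.map N with hNCdef
  have hNCK : NC ≤ K := by
    rintro x hx
    obtain ⟨c, hc, rfl⟩ := hx
    exact ⟨hNS0 c (hCS0 hc), by simpa [LinearMap.mem_ker] using hNN c⟩
  obtain ⟨T, hTK, hNCT_bot, hNCT_sup⟩ := exists_relcompl NC K hNCK
  -- N is injective on C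
  have hNC_inj : ∀ c ∈ C, N c = 0 → c = 0 := by
    intro c hc hNc
    have hcK : c ∈ K := ⟨hCS0 hc, by simpa [LinearMap.mem_ker] using hNc⟩
    have : c ∈ K ⊓ C := ⟨hcK, hc⟩
    rwa [hKC_bot, Submodule.mem_bot] at this
  -- the fine family
  set κ : Type := Unit ⊕ (Fin q ⊕ Fin q) with hκdef
  set ι : Type := (Unit ⊕ (Unit ⊕ Unit)) ⊕ (Fin q ⊕ Fin q) with hιdef
  set Φ : ι → Submodule F V :=
    Sum.elim (Sum.elim (fun _ => T) (Sum.elim (fun _ => NC) (fun _ => C))) (Sum.elim D E)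
    with hΦdef
  set g : ι → κ := Sum.map (fun _ => ()) id with hgdef
  set Sf : κ → Submodule F V := Sum.elim (fun _ => S0) (Sum.elim D E) with hSfdef
  set ν : κ → F :=
    Sum.elim (fun _ => (1 : F)) (Sum.elim (fun i => lam⁻¹ ^ (i.1 + 1)) (fun i => lam ^ (i.1 + 1)))
    with hνdef
  have hpowinj : ∀ a b : ℕ, a < p → b < p → lam ^ a = lam ^ b → a = b := by
    intro a b ha hb h
    exact hlam.pow_inj ha hb h
  have hDval : ∀ i : Fin q, lam⁻¹ ^ (i.1 + 1) = lam ^ (p - (i.1 + 1)) := by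
    intro i
    exact hval _ (by omega)
  have hν : Function.Injective ν := by
    rintro (u1 | (i1 | i1)) (u2 | (i2 | i2)) h <;>
      simp only [hνdef, Sum.elim_inl, Sum.elim_inr] at h
    · rcases u1; rcases u2; rfl
    · rw [hDval i2] at h
      have := hpowinj 0 (p - (i2.1 + 1)) (by omega) (by omega) (by rw [pow_zero]; exact h)
      have h2 := i2.2
      omega
    · have := hpowinj 0 (i2.1 + 1) (by omega) (by omega) (by rw [pow_zero]; exact h)
      omega
    · rw [hDval i1] at h
      have := hpowinj (p - (i1.1 + 1)) 0 (by omega) (by omega) (by rw [pow_zero]; exact h)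
      have h2 := i1.2
      omega
    · rw [hDval i1, hDval i2] at h
      have h1 := i1.2; have h2 := i2.2
      have := hpowinj _ _ (by omega) (by omega) h
      have : i1 = i2 := Fin.ext (by omega)
      rw [this]
    · rw [hDval i1] at h
      have h1 := i1.2; have h2 := i2.2
      have := hpowinj _ _ (by omega) (by omega) h
      omega
    · have := hpowinj (i1.1 + 1) 0 (by omega) (by omega) (by rw [pow_zero]; exact h)
      omega
    · rw [hDval i2] at h
      have h1 := i1.2; have h2 := i2.2
      have := hpowinj _ _ (by omega) (by omega) h
      omega
    · have h1 := i1.2; have h2 := i2.2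
      have := hpowinj _ _ (by omega) (by omega) h
      have : i1 = i2 := Fin.ext (by omega)
      rw [this]
  have hSf : iSupIndep Sf := by
    have hEig : iSupIndep (fun μ : F => rr.eigenspace μ) := rr.independent_genEigenspace 1
    have hSeq : Sf = fun x => rr.eigenspace (ν x) := by
      funext x
      rcases x with u | (i | i) <;> rfl
    rw [hSeq]
    exact hEig.comp hν
  have hle : ∀ i : ι, Φ i ≤ Sf (g i) := by
    rintro ((u | (u | u)) | (i | i))
    · exact le_trans hTK inf_le_left
    · exact le_trans hNCK inf_le_left
    · exact hCS0
    · exact le_refl _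
    · exact le_refl _
  have hdTNC : Disjoint NC T := disjoint_iff.mpr hNCT_bot
  have hdKC : Disjoint K C := disjoint_iff.mpr hKC_bot
  have hfib : ∀ i0 : ι, Disjoint (Φ i0) (⨆ (j) (_ : g j = g i0 ∧ j ≠ i0), Φ j) := by
    rintro ((u | (u | u)) | ii)
    · -- T
      have hsup_le : (⨆ (j) (_ : g j = g (Sum.inl (Sum.inl u)) ∧ j ≠ Sum.inl (Sum.inl u)), Φ j)
          ≤ NC ⊔ C := by
        refine iSup_le fun j => iSup_le fun hj => ?_
        obtain ⟨hgj, hne⟩ := hj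
        rcases j with ((u' | (u' | u')) | jj)
        · exact absurd (by rcases u; rcases u'; rfl) hne
        · exact le_sup_left
        · exact le_sup_right
        · exfalso; simp [hgdef] at hgj
      have hdisj : Disjoint T (NC ⊔ C) := by
        have d2 : Disjoint (T ⊔ NC) C := by
          rw [sup_comm, hNCT_sup]; exact hdKC
        exact (hdTNC.symm).disjoint_sup_right_of_disjoint_sup_left d2
      exact hdisj.mono_right hsup_le
    · -- NC
      have hsup_le : (⨆ (j) (_ : g j = g (Sum.inl (Sum.inr (Sum.inl u))) ∧
          j ≠ Sum.inl (Sum.inr (Sum.inl u))), Φ j) ≤ T ⊔ C := by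
        refine iSup_le fun j => iSup_le fun hj => ?_
        obtain ⟨hgj, hne⟩ := hj
        rcases j with ((u' | (u' | u')) | jj)
        · exact le_sup_left
        · exact absurd (by rcases u; rcases u'; rfl) hne
        · exact le_sup_right
        · exfalso; simp [hgdef] at hgj
      have hdisj : Disjoint NC (T ⊔ C) := by
        have d2 : Disjoint (NC ⊔ T) C := by
          rw [hNCT_sup]; exact hdKC
        exact hdTNC.disjoint_sup_right_of_disjoint_sup_left d2
      exact hdisj.mono_right hsup_le
    · -- C
      have hsup_le : (⨆ (j) (_ : g j = g (Sum.inl (Sum.inr (Sum.inr u))) ∧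
          j ≠ Sum.inl (Sum.inr (Sum.inr u))), Φ j) ≤ T ⊔ NC := by
        refine iSup_le fun j => iSup_le fun hj => ?_
        obtain ⟨hgj, hne⟩ := hj
        rcases j with ((u' | (u' | u')) | jj)
        · exact le_sup_left
        · exact le_sup_right
        · exact absurd (by rcases u; rcases u'; rfl) hne
        · exfalso; simp [hgdef] at hgj
      have hdisj : Disjoint C (T ⊔ NC) := by
        refine (hdKC.symm).mono_right ?_
        exact sup_le hTK hNCK
      exact hdisj.mono_right hsup_le
    · -- D/E groups : empty fiber
      have hsup : (⨆ (j) (_ : g j = g (Sum.inr ii) ∧ j ≠ Sum.inr ii), Φ j) = ⊥ := by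
        refine le_bot_iff.mp (iSup_le fun j => iSup_le fun hj => ?_)
        exfalso
        obtain ⟨hgj, hne⟩ := hj
        rcases j with (u' | jj)
        · simp [hgdef] at hgj
        · simp [hgdef] at hgj
          injection hgj with h
          exact hne (by rw [h])
      rw [hsup]
      exact disjoint_bot_right
  have hΦind : iSupIndep Φ := iSupIndep_of_partition Φ g Sf hle hSf hfib
  have hΦtop : (⨆ i, Φ i) = ⊤ := by
    rw [eq_top_iff, ← htop]
    refine iSup_le fun μ => ?_
    by_cases hb : rr.eigenspace μ = ⊥
    · rw [hb]; exact bot_le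
    · obtain ⟨v, hv, hv0⟩ := Submodule.ne_bot_iff _ |>.mp hb
      have hrv : rr v = μ • v := Module.End.mem_eigenspace_iff.mp hv
      have hμp : μ ^ p = 1 := by
        have h1 : (rr ^ p) v = μ ^ p • v := heigpow μ v hrv p
        rw [hrp] at h1
        have h1' : v = μ ^ p • v := h1
        have h2 : (μ ^ p - 1) • v = 0 := by
          rw [sub_smul, one_smul, ← h1', sub_self]
        rcases smul_eq_zero.mp h2 with h3 | h3
        · exact sub_eq_zero.mp h3
        · exact absurd h3 hv0
      obtain ⟨j, hj, rfl⟩ := hlam.eq_pow_of_pow_eq_one hμp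
      by_cases hj0 : j = 0
      · subst hj0
        rw [pow_zero]
        have hS0le : S0 ≤ ⨆ i, Φ i := by
          rw [← hKC_sup, ← hNCT_sup]
          exact sup_le (sup_le (le_iSup Φ (Sum.inl (Sum.inr (Sum.inl ()))))
            (le_iSup Φ (Sum.inl (Sum.inl ())))) (le_iSup Φ (Sum.inl (Sum.inr (Sum.inr ()))))
        exact hS0le
      · rcases Nat.lt_or_ge j (q + 1) with h1 | h1
        · -- 1 ≤ j ≤ q : E block
          have heq : lam ^ j = lam ^ ((j - 1) + 1) := by congr 1; omega
          rw [heq]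
          exact le_iSup Φ (Sum.inr (Sum.inr ⟨j - 1, by omega⟩))
        · -- q + 1 ≤ j < p : D block
          have heq : lam⁻¹ ^ ((p - j - 1) + 1) = lam ^ j := by
            rw [show (p - j - 1) + 1 = p - j from by omega, hval (p - j) (by omega),
              show p - (p - j) = j from by omega]
          rw [← heq]
          exact le_iSup Φ (Sum.inr (Sum.inl ⟨p - j - 1, by omega⟩))
  have hInt : DirectSum.IsInternal Φ :=
    (DirectSum.isInternal_submodule_iff_iSupIndep_and_iSup_eq_top Φ).mpr ⟨hΦind, hΦtop⟩
  -- bases of the pieces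
  set bT : Basis (Fin (finrank F ↥T)) F ↥T := Module.finBasis F ↥T with hbTdef
  set bC : Basis (Fin (finrank F ↥C)) F ↥C := Module.finBasis F ↥C with hbCdef
  set bD : ∀ i : Fin q, Basis (Fin (finrank F ↥(D i))) F ↥(D i) :=
    fun i => Module.finBasis F ↥(D i) with hbDdef
  -- the equivalence C ≃ NC via N
  have hNmem : ∀ x ∈ C, N x ∈ NC := fun x hx => Submodule.mem_map_of_mem hx
  set fNC : ↥C →ₗ[F] ↥NC := N.restrict hNmem with hfNCdef
  have hfNC_coe : ∀ x : ↥C, ((fNC x : ↥NC) : V) = N (x : V) := by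
    intro x; rfl
  have hfNC_bij : Function.Bijective fNC := by
    constructor
    · intro x y hxy
      apply Subtype.ext
      have h := congrArg (Subtype.val) hxy
      rw [hfNC_coe, hfNC_coe] at h
      have h2 : N ((x : V) - (y : V)) = 0 := by rw [map_sub, h, sub_self]
      have h3 := hNC_inj _ (sub_mem x.2 y.2) h2
      exact sub_eq_zero.mp h3
    · rintro ⟨w, hw⟩
      obtain ⟨c, hc, hcw⟩ := hw
      exact ⟨⟨c, hc⟩, Subtype.ext (by rw [hfNC_coe]; exact hcw)⟩
  set eNC : ↥C ≃ₗ[F] ↥NC := LinearEquiv.ofBijective fNC hfNC_bij with heNCdef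
  set bNC : Basis (Fin (finrank F ↥C)) F ↥NC := bC.map eNC with hbNCdef
  have hbNC_coe : ∀ k, ((bNC k : ↥NC) : V) = N ((bC k : ↥C) : V) := by
    intro k
    rw [hbNCdef, Basis.map_apply]
    exact hfNC_coe (bC k)
  -- the equivalence D i ≃ E i via ss
  have hssinj : Function.Injective (ss : V →ₗ[F] V) := by
    intro x y h
    have := congrArg ss h
    rwa [hss2, hss2] at this
  set fDE : ∀ i : Fin q, ↥(D i) →ₗ[F] ↥(E i) := fun i => ss.restrict (hssD i) with hfDEdef
  have hfDE_coe : ∀ (i : Fin q) (x : ↥(D i)), ((fDE i x : ↥(E i)) : V) = ss (x : V) := by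
    intro i x; rfl
  have hfDE_bij : ∀ i : Fin q, Function.Bijective (fDE i) := by
    intro i
    constructor
    · intro x y hxy
      apply Subtype.ext
      have h := congrArg (Subtype.val) hxy
      rw [hfDE_coe, hfDE_coe] at h
      exact hssinj h
    · rintro ⟨w, hw⟩
      refine ⟨⟨ss w, hssE i w hw⟩, Subtype.ext ?_⟩
      rw [hfDE_coe]
      exact hss2 w
  set eDE : ∀ i : Fin q, ↥(D i) ≃ₗ[F] ↥(E i) :=
    fun i => LinearEquiv.ofBijective (fDE i) (hfDE_bij i) with heDEdef
  set bE : ∀ i : Fin q, Basis (Fin (finrank F ↥(D i))) F ↥(E i) :=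
    fun i => (bD i).map (eDE i) with hbEdef
  have hbE_coe : ∀ (i : Fin q) (k), ((bE i k : ↥(E i)) : V) = ss ((bD i k : ↥(D i)) : V) := by
    intro i k
    rw [hbEdef, Basis.map_apply]
    exact hfDE_coe i (bD i k)
  -- collected basis
  set α : ι → Type :=
    Sum.elim (Sum.elim (fun _ => Fin (finrank F ↥T))
        (Sum.elim (fun _ => Fin (finrank F ↥C)) (fun _ => Fin (finrank F ↥C))))
      (Sum.elim (fun i => Fin (finrank F ↥(D i))) (fun i => Fin (finrank F ↥(D i)))) with hαdef
  set vb : ∀ i : ι, Basis (α i) F ↥(Φ i) := fun i =>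
    match i with
    | .inl (.inl _) => bT
    | .inl (.inr (.inl _)) => bNC
    | .inl (.inr (.inr _)) => bC
    | .inr (.inl i) => bD i
    | .inr (.inr i) => bE i
    with hvbdef
  set b : Basis (Σ i : ι, α i) F V := hInt.collectedBasis vb with hbdef
  have hb : ∀ j : Σ i : ι, α i, (b j : V) = ((vb j.1 j.2 : ↥(Φ j.1)) : V) := by
    intro j
    rw [hbdef]
    exact congrFun (hInt.collectedBasis_coe vb) j
  -- block index type and partition
  set B : Type := (Fin (finrank F ↥T)) ⊕
      ((Fin (finrank F ↥C)) ⊕ (Σ i : Fin q, Fin (finrank F ↥(D i)))) with hBdef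
  set π : (Σ i : ι, α i) → B := fun j =>
    match j with
    | ⟨.inl (.inl _), k⟩ => .inl k
    | ⟨.inl (.inr (.inl _)), k⟩ => .inr (.inl k)
    | ⟨.inl (.inr (.inr _)), k⟩ => .inr (.inl k)
    | ⟨.inr (.inl i), k⟩ => .inr (.inr ⟨i, k⟩)
    | ⟨.inr (.inr i), k⟩ => .inr (.inr ⟨i, k⟩)
    with hπdef
  set W' : B → Submodule F V := fun k => span F (b '' (π ⁻¹' {k})) with hW'def
  have hW'int : DirectSum.IsInternal W' := span_image_isInternal b π
  -- fibers
  have hfibT : ∀ k : Fin (finrank F ↥T),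
      π ⁻¹' {Sum.inl k} = {(⟨Sum.inl (Sum.inl ()), k⟩ : Σ i : ι, α i)} := by
    intro k
    apply Set.eq_singleton_iff_unique_mem.mpr
    refine ⟨rfl, ?_⟩
    rintro ⟨x, y⟩ hj
    have hj' : π ⟨x, y⟩ = Sum.inl k := hj
    rcases x with ((⟨⟩ | (⟨⟩ | ⟨⟩)) | (i | i))
    · exact congrArg (fun z => (⟨Sum.inl (Sum.inl ()), z⟩ : Σ i : ι, α i)) (Sum.inl.inj hj')
    · exact (Sum.inr_ne_inl hj').elim
    · exact (Sum.inr_ne_inl hj').elim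
    · exact (Sum.inr_ne_inl hj').elim
    · exact (Sum.inr_ne_inl hj').elim
  have hfibC : ∀ k : Fin (finrank F ↥C),
      π ⁻¹' {Sum.inr (Sum.inl k)} =
        {(⟨Sum.inl (Sum.inr (Sum.inl ())), k⟩ : Σ i : ι, α i),
         (⟨Sum.inl (Sum.inr (Sum.inr ())), k⟩ : Σ i : ι, α i)} := by
    intro k
    ext ⟨x, y⟩
    constructor
    · intro hj
      have hj' : π ⟨x, y⟩ = Sum.inr (Sum.inl k) := hj
      rcases x with ((⟨⟩ | (⟨⟩ | ⟨⟩)) | (i | i))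
      · exact (Sum.inl_ne_inr hj').elim
      · exact Or.inl (congrArg
          (fun z => (⟨Sum.inl (Sum.inr (Sum.inl ())), z⟩ : Σ i : ι, α i))
          (Sum.inl.inj (Sum.inr.inj hj')))
      · exact Or.inr (congrArg
          (fun z => (⟨Sum.inl (Sum.inr (Sum.inr ())), z⟩ : Σ i : ι, α i))
          (Sum.inl.inj (Sum.inr.inj hj')))
      · exact (Sum.inr_ne_inl (Sum.inr.inj hj')).elim
      · exact (Sum.inr_ne_inl (Sum.inr.inj hj')).elim
    · intro hj
      rcases hj with hj | hj
      · cases hj; rfl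
      · rw [Set.mem_singleton_iff] at hj; cases hj; rfl
  have hfibDE : ∀ (i : Fin q) (k : Fin (finrank F ↥(D i))),
      π ⁻¹' {Sum.inr (Sum.inr ⟨i, k⟩)} =
        {(⟨Sum.inr (Sum.inl i), k⟩ : Σ i : ι, α i),
         (⟨Sum.inr (Sum.inr i), k⟩ : Σ i : ι, α i)} := by
    intro i k
    ext ⟨x, y⟩
    constructor
    · intro hj
      have hj' : π ⟨x, y⟩ = Sum.inr (Sum.inr ⟨i, k⟩) := hj
      rcases x with ((⟨⟩ | (⟨⟩ | ⟨⟩)) | (i' | i'))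
      · exact (Sum.inl_ne_inr hj').elim
      · exact (Sum.inl_ne_inr (Sum.inr.inj hj')).elim
      · exact (Sum.inl_ne_inr (Sum.inr.inj hj')).elim
      · have h := Sum.inr.inj (Sum.inr.inj hj')
        injection h with h1 h2
        subst h1
        have h3 := eq_of_heq h2
        exact Or.inl (congrArg
          (fun z => (⟨Sum.inr (Sum.inl i'), z⟩ : Σ i : ι, α i)) h3)
      · have h := Sum.inr.inj (Sum.inr.inj hj')
        injection h with h1 h2
        subst h1
        have h3 := eq_of_heq h2
        exact Or.inr (congrArg
          (fun z => (⟨Sum.inr (Sum.inr i'), z⟩ : Σ i : ι, α i)) h3)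
    · intro hj
      rcases hj with hj | hj
      · cases hj; rfl
      · rw [Set.mem_singleton_iff] at hj; cases hj; rfl
  -- per-block classification
  have hmain : ∀ bk : B,
      (∀ (g : DihedralGroup p) (v : V), v ∈ W' bk → θ g v ∈ W' bk) ∧
      ((Module.finrank F ↥(W' bk) = 1 ∧
          ∀ (g : DihedralGroup p) (v : V), v ∈ W' bk → θ g v = v) ∨
        (∃ i : ℕ, i ≤ (p - 1) / 2 ∧ ∃ v1 v2 : V,
          v1 ∈ W' bk ∧ v2 ∈ W' bk ∧
          W' bk = Submodule.span F {v1, v2} ∧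
          LinearIndependent F ![v1, v2] ∧
          θ (DihedralGroup.r 1) v1 = lam⁻¹ ^ i • v1 ∧
          θ (DihedralGroup.r 1) v2 = lam ^ i • v2 ∧
          θ (DihedralGroup.sr 0) v1 = v2 ∧
          θ (DihedralGroup.sr 0) v2 = v1)) := by
    rintro (k | (k | ⟨i, k⟩))
    · -- trivial blocks from T
      have hbt : (b ⟨Sum.inl (Sum.inl ()), k⟩ : V) = ((bT k : ↥T) : V) := hb _
      have hW : W' (Sum.inl k) = span F {((bT k : ↥T) : V)} := by
        show span F (b '' (π ⁻¹' {Sum.inl k})) = _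
        rw [hfibT k, Set.image_singleton, hbt]
      have htK : ((bT k : ↥T) : V) ∈ K := hTK (bT k).2
      have hrrt : rr ((bT k : ↥T) : V) = ((bT k : ↥T) : V) := by
        have := Module.End.mem_eigenspace_iff.mp htK.1
        rwa [one_smul] at this
      have hsst : ss ((bT k : ↥T) : V) = ((bT k : ↥T) : V) := by
        have h1 : N ((bT k : ↥T) : V) = 0 := htK.2
        have h2 := hNapp ((bT k : ↥T) : V)
        rw [h1] at h2
        exact sub_eq_zero.mp h2.symm
      have hfixt : ∀ g : DihedralGroup p, θ g ((bT k : ↥T) : V) = ((bT k : ↥T) : V) :=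
        rep_fixed θ hrrt hsst
      have hfixall : ∀ (g : DihedralGroup p) (v : V), v ∈ W' (Sum.inl k) → θ g v = v := by
        intro g v hv
        rw [hW] at hv
        obtain ⟨c, rfl⟩ := Submodule.mem_span_singleton.mp hv
        rw [map_smul, hfixt]
      refine ⟨fun g v hv => by rw [hfixall g v hv]; exact hv, Or.inl ⟨?_, hfixall⟩⟩
      rw [hW]
      have htne : ((bT k : ↥T) : V) ≠ 0 := by
        intro h
        exact Basis.ne_zero bT k (Submodule.coe_eq_zero.mp h)
      exact finrank_span_singleton htne
    · -- W₀ blocks from C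
      have hne12 : (⟨Sum.inl (Sum.inr (Sum.inr ())), k⟩ : Σ i : ι, α i) ≠
          ⟨Sum.inl (Sum.inr (Sum.inl ())), k⟩ := by
        intro h
        injection h with h1 _
        exact Sum.inr_ne_inl (Sum.inr.inj (Sum.inl.inj h1))
      have hb1 : (b ⟨Sum.inl (Sum.inr (Sum.inl ())), k⟩ : V) = N ((bC k : ↥C) : V) :=
        (hb _).trans (hbNC_coe k)
      have hb2 : (b ⟨Sum.inl (Sum.inr (Sum.inr ())), k⟩ : V) = ((bC k : ↥C) : V) := hb _
      have hcS0 : ((bC k : ↥C) : V) ∈ S0 := hCS0 (bC k).2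
      have hsscval : ss ((bC k : ↥C) : V) = ((bC k : ↥C) : V) + N ((bC k : ↥C) : V) := by
        rw [hNapp]; abel
      have hW : W' (Sum.inr (Sum.inl k)) = span F {((bC k : ↥C) : V), N ((bC k : ↥C) : V)} := by
        show span F (b '' (π ⁻¹' {Sum.inr (Sum.inl k)})) = _
        rw [hfibC k, Set.image_insert_eq, Set.image_singleton, hb1, hb2, Set.pair_comm]
      have hWpair : W' (Sum.inr (Sum.inl k)) =
          span F {((bC k : ↥C) : V), ss ((bC k : ↥C) : V)} := by
        rw [hW, ← span_pair_add ((bC k : ↥C) : V) (N ((bC k : ↥C) : V)), ← hsscval]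
      have hrrc : rr ((bC k : ↥C) : V) = ((bC k : ↥C) : V) := by
        have := Module.End.mem_eigenspace_iff.mp hcS0
        rwa [one_smul] at this
      have hrrsc : rr (ss ((bC k : ↥C) : V)) = ss ((bC k : ↥C) : V) := by
        have := Module.End.mem_eigenspace_iff.mp (hssS0 _ hcS0)
        rwa [one_smul] at this
      have hv1mem : ((bC k : ↥C) : V) ∈ W' (Sum.inr (Sum.inl k)) := by
        rw [hWpair]; exact subset_span (Set.mem_insert _ _)
      have hv2mem : ss ((bC k : ↥C) : V) ∈ W' (Sum.inr (Sum.inl k)) := by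
        rw [hWpair]; exact subset_span (Set.mem_insert_of_mem _ rfl)
      have hinv : ∀ (g : DihedralGroup p) (v : V),
          v ∈ W' (Sum.inr (Sum.inl k)) → θ g v ∈ W' (Sum.inr (Sum.inl k)) := by
        apply rep_closure θ
        · intro v hv
          rw [hWpair] at hv
          refine mem_map_of_span rr _ ?_ v hv
          intro x hx
          rcases hx with rfl | hx
          · rw [hrrc]; exact hv1mem
          · rw [Set.mem_singleton_iff] at hx
            rw [hx, hrrsc]; exact hv2mem
        · intro v hv
          rw [hWpair] at hv
          refine mem_map_of_span ss _ ?_ v hv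
          intro x hx
          rcases hx with rfl | hx
          · exact hv2mem
          · rw [Set.mem_singleton_iff] at hx
            rw [hx, hss2]; exact hv1mem
      refine ⟨hinv, Or.inr ⟨0, Nat.zero_le _, ((bC k : ↥C) : V), ss ((bC k : ↥C) : V),
        hv1mem, hv2mem, hWpair, ?_, ?_, ?_, rfl, hss2 _⟩⟩
      · have hli := linearIndependent_pair_of_basis b hne12
        rw [hb2, hb1] at hli
        have hli2 := linearIndependent_pair_add hli
        rwa [← hsscval] at hli2
      · rw [pow_zero, one_smul]; exact hrrc
      · rw [pow_zero, one_smul]; exact hrrsc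
    · -- W_i blocks from D i, E i
      have hne12 : (⟨Sum.inr (Sum.inl i), k⟩ : Σ i : ι, α i) ≠ ⟨Sum.inr (Sum.inr i), k⟩ := by
        intro h
        injection h with h1 _
        exact Sum.inl_ne_inr (Sum.inr.inj h1)
      have hb1 : (b ⟨Sum.inr (Sum.inl i), k⟩ : V) = ((bD i k : ↥(D i)) : V) := hb _
      have hb2 : (b ⟨Sum.inr (Sum.inr i), k⟩ : V) = ss ((bD i k : ↥(D i)) : V) :=
        (hb _).trans (hbE_coe i k)
      have hdD : ((bD i k : ↥(D i)) : V) ∈ D i := (bD i k).2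
      have hsE : ss ((bD i k : ↥(D i)) : V) ∈ E i := hssD i _ hdD
      have hW : W' (Sum.inr (Sum.inr ⟨i, k⟩)) =
          span F {((bD i k : ↥(D i)) : V), ss ((bD i k : ↥(D i)) : V)} := by
        show span F (b '' (π ⁻¹' {Sum.inr (Sum.inr ⟨i, k⟩)})) = _
        rw [hfibDE i k, Set.image_insert_eq, Set.image_singleton, hb1, hb2]
      have hrrd : rr ((bD i k : ↥(D i)) : V) = lam⁻¹ ^ (i.1 + 1) • ((bD i k : ↥(D i)) : V) :=
        Module.End.mem_eigenspace_iff.mp hdD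
      have hrrsd : rr (ss ((bD i k : ↥(D i)) : V)) =
          lam ^ (i.1 + 1) • ss ((bD i k : ↥(D i)) : V) :=
        Module.End.mem_eigenspace_iff.mp hsE
      have hv1mem : ((bD i k : ↥(D i)) : V) ∈ W' (Sum.inr (Sum.inr ⟨i, k⟩)) := by
        rw [hW]; exact subset_span (Set.mem_insert _ _)
      have hv2mem : ss ((bD i k : ↥(D i)) : V) ∈ W' (Sum.inr (Sum.inr ⟨i, k⟩)) := by
        rw [hW]; exact subset_span (Set.mem_insert_of_mem _ rfl)
      have hinv : ∀ (g : DihedralGroup p) (v : V),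
          v ∈ W' (Sum.inr (Sum.inr ⟨i, k⟩)) → θ g v ∈ W' (Sum.inr (Sum.inr ⟨i, k⟩)) := by
        apply rep_closure θ
        · intro v hv
          rw [hW] at hv
          refine mem_map_of_span rr _ ?_ v hv
          intro x hx
          rcases hx with rfl | hx
          · rw [hrrd]; exact Submodule.smul_mem _ _ hv1mem
          · rw [Set.mem_singleton_iff] at hx
            rw [hx, hrrsd]; exact Submodule.smul_mem _ _ hv2mem
        · intro v hv
          rw [hW] at hv
          refine mem_map_of_span ss _ ?_ v hv
          intro x hx
          rcases hx with rfl | hx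
          · exact hv2mem
          · rw [Set.mem_singleton_iff] at hx
            rw [hx, hss2]; exact hv1mem
      refine ⟨hinv, Or.inr ⟨i.1 + 1, ?_, ((bD i k : ↥(D i)) : V), ss ((bD i k : ↥(D i)) : V),
        hv1mem, hv2mem, hW, ?_, hrrd, hrrsd, rfl, hss2 _⟩⟩
      · rw [← hqdef]
        have := i.2
        omega
      · have hli := linearIndependent_pair_of_basis b hne12
        rwa [hb1, hb2] at hli
  -- final assembly
  refine ⟨Fintype.card B, fun k => W' ((Fintype.equivFin B).symm k), ?_, ?_, ?_⟩
  · obtain ⟨hind, hsup⟩ :=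
      (DirectSum.isInternal_submodule_iff_iSupIndep_and_iSup_eq_top W').mp hW'int
    refine (DirectSum.isInternal_submodule_iff_iSupIndep_and_iSup_eq_top _).mpr
      ⟨hind.comp (Fintype.equivFin B).symm.injective, ?_⟩
    rw [← hsup]
    exact ((Fintype.equivFin B).symm.surjective.iSup_comp (g := W'))
  · intro k g v hv
    exact (hmain ((Fintype.equivFin B).symm k)).1 g v hv
  · intro k
    exact (hmain ((Fintype.equivFin B).symm k)).2
end

section
/- The invariant ring F[x,y]^G equals the F-subalgebra of F[x,y] generated by the two polynomials x^p + y^p and xy. -/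
open MvPolynomial

section AuxInvWi

variable {F : Type*} [Field F]

/-- abbreviation for the exponent finsupp of `x^a y^b` -/
noncomputable def DD (a b : ℕ) : Fin 2 →₀ ℕ := Finsupp.single 0 a + Finsupp.single 1 b

lemma DD_apply0 (a b : ℕ) : DD a b 0 = a := by simp [DD, Finsupp.single_apply]

lemma DD_apply1 (a b : ℕ) : DD a b 1 = b := by simp [DD, Finsupp.single_apply]

lemma eq_DD (d : Fin 2 →₀ ℕ) : d = DD (d 0) (d 1) := by
  ext j; fin_cases j <;> simp [DD, Finsupp.single_apply]

lemma DD_inj {a b a' b' : ℕ} : DD a b = DD a' b' ↔ a = a' ∧ b = b' := by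
  constructor
  · intro h
    constructor
    · rw [← DD_apply0 a b, h, DD_apply0]
    · rw [← DD_apply1 a b, h, DD_apply1]
  · rintro ⟨rfl, rfl⟩; rfl

lemma monomial_DD (a b : ℕ) : (monomial (DD a b) (1 : F)) = X 0 ^ a * X 1 ^ b := by
  rw [X_pow_eq_monomial, X_pow_eq_monomial, monomial_mul, one_mul, DD]
variable {F : Type*} [Field F]

lemma pow_sum_mem (p : ℕ) (A : Subalgebra F (MvPolynomial (Fin 2) F))
    (h2 : (2 : MvPolynomial (Fin 2) F) = 0)
    (h1 : (X 0 ^ p + X 1 ^ p : MvPolynomial (Fin 2) F) ∈ A)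
    (hxy : (X 0 * X 1 : MvPolynomial (Fin 2) F) ∈ A) :
    ∀ m, (X 0 ^ (p * m) + X 1 ^ (p * m) : MvPolynomial (Fin 2) F) ∈ A := by
  intro m
  induction m using Nat.strong_induction_on with
  | _ m ih =>
    match m with
    | 0 =>
      have e0 : (X 0 ^ (p * 0) + X 1 ^ (p * 0) : MvPolynomial (Fin 2) F) = 0 := by
        simp only [Nat.mul_zero, pow_zero]; rw [← h2]; norm_num
      rw [e0]; exact A.zero_mem
    | 1 => simpa using h1
    | (m+2) =>
      have e : (X 0 ^ (p * (m+2)) + X 1 ^ (p * (m+2)) : MvPolynomial (Fin 2) F) =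
          (X 0 ^ p + X 1 ^ p) * (X 0 ^ (p * (m+1)) + X 1 ^ (p * (m+1)))
          + (X 0 * X 1) ^ p * (X 0 ^ (p * m) + X 1 ^ (p * m)) := by
        have e' : ((X 0 ^ p + X 1 ^ p) * (X 0 ^ (p * (m+1)) + X 1 ^ (p * (m+1)))
            + (X 0 * X 1) ^ p * (X 0 ^ (p * m) + X 1 ^ (p * m))
            : MvPolynomial (Fin 2) F) =
            (X 0 ^ (p * (m+2)) + X 1 ^ (p * (m+2)))
            + 2 * (X 0 ^ p * X 1 ^ (p * (m+1)) + X 0 ^ (p * (m+1)) * X 1 ^ p) := by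
          ring
        rw [e', h2, zero_mul, add_zero]
      rw [e]
      exact A.add_mem (A.mul_mem h1 (ih (m+1) (by omega)))
        (A.mul_mem (A.pow_mem hxy p) (ih m (by omega)))

lemma pair_mem (p : ℕ) (A : Subalgebra F (MvPolynomial (Fin 2) F))
    (h2 : (2 : MvPolynomial (Fin 2) F) = 0)
    (h1 : (X 0 ^ p + X 1 ^ p : MvPolynomial (Fin 2) F) ∈ A)
    (hxy : (X 0 * X 1 : MvPolynomial (Fin 2) F) ∈ A)
    (a b : ℕ) (hab : a ≡ b [MOD p]) :
    (X 0 ^ a * X 1 ^ b + X 0 ^ b * X 1 ^ a : MvPolynomial (Fin 2) F) ∈ A := by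
  wlog hba : b ≤ a generalizing a b
  · rw [add_comm]; exact this b a hab.symm (le_of_not_ge hba)
  obtain ⟨m, hm⟩ : p ∣ a - b := (Nat.modEq_iff_dvd' hba).mp hab.symm
  have ha : a = b + p * m := by omega
  subst ha
  have e : (X 0 ^ (b + p * m) * X 1 ^ b + X 0 ^ b * X 1 ^ (b + p * m)
      : MvPolynomial (Fin 2) F) =
      (X 0 * X 1) ^ b * (X 0 ^ (p * m) + X 1 ^ (p * m)) := by ring
  rw [e]
  exact A.mul_mem (A.pow_mem hxy b) (pow_sum_mem p A h2 h1 hxy m)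
variable {F : Type*} [Field F]

lemma aeval_scale_monomial (c c' : F) (d : Fin 2 →₀ ℕ) (r : F) :
    aeval (fun j : Fin 2 => if j = 0 then C c * X 0 else C c' * X 1) (monomial d r)
      = monomial d (c ^ d 0 * c' ^ d 1 * r) := by
  rw [aeval_monomial, Finsupp.prod_fintype _ _ (fun j => pow_zero _), Fin.prod_univ_two]
  simp only [show ((0:Fin 2) = 0) ↔ True from by simp, show ((1:Fin 2) = 0) ↔ False from by simp,
    if_true, if_false]
  rw [monomial_eq, Finsupp.prod_fintype _ _ (fun j => pow_zero _), Fin.prod_univ_two]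
  have halg : algebraMap F (MvPolynomial (Fin 2) F) r = C r := rfl
  rw [halg, mul_pow, mul_pow, ← C_pow, ← C_pow, C_mul, C_mul]
  ring

lemma coeff_aeval_scale (c c' : F) (f : MvPolynomial (Fin 2) F) (d : Fin 2 →₀ ℕ) :
    coeff d (aeval (fun j : Fin 2 => if j = 0 then C c * X 0 else C c' * X 1) f)
      = c ^ d 0 * c' ^ d 1 * coeff d f := by
  induction f using MvPolynomial.induction_on' with
  | monomial d' r =>
    rw [aeval_scale_monomial, coeff_monomial, coeff_monomial]
    by_cases h : d' = d
    · subst h; rw [if_pos rfl, if_pos rfl]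
    · rw [if_neg h, if_neg h, mul_zero]
  | add f g hf hg => rw [map_add, coeff_add, coeff_add, hf, hg, mul_add]
lemma mapDomain_swap (d : Fin 2 →₀ ℕ) :
    Finsupp.mapDomain (Equiv.swap (0:Fin 2) 1) d = DD (d 1) (d 0) := by
  have hinj : Function.Injective (Equiv.swap (0:Fin 2) 1) := (Equiv.swap _ _).injective
  have h0 := Finsupp.mapDomain_apply hinj d 1
  rw [Equiv.swap_apply_right] at h0
  have h1 := Finsupp.mapDomain_apply hinj d 0
  rw [Equiv.swap_apply_left] at h1
  ext j
  fin_cases j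
  · exact h0.trans (DD_apply0 (d 1) (d 0)).symm
  · exact h1.trans (DD_apply1 (d 1) (d 0)).symm

lemma main_induction (p : ℕ) (hF2 : (2 : F) = 0)
    (A : Subalgebra F (MvPolynomial (Fin 2) F))
    (h1 : (X 0 ^ p + X 1 ^ p : MvPolynomial (Fin 2) F) ∈ A)
    (hxy : (X 0 * X 1 : MvPolynomial (Fin 2) F) ∈ A) :
    ∀ (n : ℕ) (f : MvPolynomial (Fin 2) F), f.support.card ≤ n →
    (∀ a b, coeff (DD a b) f = coeff (DD b a) f) →
    (∀ d ∈ f.support, d 0 ≡ d 1 [MOD p]) → f ∈ A := by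
  have h2 : (2 : MvPolynomial (Fin 2) F) = 0 := by
    have e : (2 : MvPolynomial (Fin 2) F) = C (1 + 1 : F) := by
      rw [map_add, map_one]; norm_num
    rw [e, show (1 + 1 : F) = 2 by norm_num, hF2, map_zero]
  intro n
  induction n with
  | zero =>
    intro f hcard _ _
    have : f.support = ∅ := Finset.card_eq_zero.mp (Nat.le_zero.mp hcard)
    rw [MvPolynomial.support_eq_empty.mp this]
    exact A.zero_mem
  | succ n ih =>
    intro f hcard hsym hmod
    by_cases hs : f.support = ∅
    · rw [MvPolynomial.support_eq_empty.mp hs]; exact A.zero_mem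
    obtain ⟨d, hd⟩ := Finset.nonempty_iff_ne_empty.mpr hs
    set a := d 0 with ha
    set b := d 1 with hb
    set c := coeff d f with hc
    have hdD : d = DD a b := eq_DD d
    have hcne : c ≠ 0 := MvPolynomial.mem_support_iff.mp hd
    have hmab : a ≡ b [MOD p] := hmod d hd
    have hcc : c + c = 0 := by rw [← two_mul, hF2, zero_mul]
    -- the polynomial to subtract
    by_cases hab : a = b
    · -- diagonal case
      set t : MvPolynomial (Fin 2) F := C c * (X 0 ^ a * X 1 ^ b) with ht
      have ct : ∀ d', coeff d' t = if d' = DD a b then c else 0 := by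
        intro d'
        rw [ht, ← monomial_DD, coeff_C_mul, coeff_monomial]
        by_cases h : DD a b = d'
        · rw [if_pos h, if_pos h.symm, mul_one]
        · rw [if_neg h, if_neg (fun hh => h hh.symm), mul_zero]
      have htA : t ∈ A := by
        rw [ht, ← hab, ← mul_pow]
        exact A.mul_mem (A.algebraMap_mem c) (A.pow_mem hxy a)
      have hg_supp : ∀ d' ∈ (f + t).support, d' ∈ f.support ∧ d' ≠ d := by
        intro d' hd'
        have hne : coeff d' (f + t) ≠ 0 := MvPolynomial.mem_support_iff.mp hd'
        rw [coeff_add, ct] at hne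
        by_cases h' : d' = DD a b
        · exfalso
          rw [if_pos h', h', ← hdD, ← hc] at hne
          exact hne hcc
        · rw [if_neg h', add_zero] at hne
          exact ⟨MvPolynomial.mem_support_iff.mpr hne, fun he => h' (he.trans hdD)⟩
      have hsub : (f + t).support ⊆ f.support.erase d := by
        intro d' hd'
        exact Finset.mem_erase.mpr ⟨(hg_supp d' hd').2, (hg_supp d' hd').1⟩
      have hcard' : (f + t).support.card ≤ n := by
        have := Finset.card_le_card hsub
        rw [Finset.card_erase_of_mem hd] at this
        omega
      have hsym' : ∀ a' b', coeff (DD a' b') (f + t) = coeff (DD b' a') (f + t) := by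
        intro a' b'
        rw [coeff_add, coeff_add, hsym a' b', ct, ct]
        congr 1
        refine if_congr ?_ rfl rfl
        rw [← hab, DD_inj, DD_inj]
        tauto
      have hmod' : ∀ d' ∈ (f + t).support, d' 0 ≡ d' 1 [MOD p] := by
        intro d' hd'
        exact hmod d' (hg_supp d' hd').1
      have hfg : f = (f + t) + t := by
        rw [add_assoc, ← two_mul, h2, zero_mul, add_zero]
      rw [hfg]
      exact A.add_mem (ih (f + t) hcard' hsym' hmod') htA
    · -- off-diagonal case
      set t : MvPolynomial (Fin 2) F := C c * (X 0 ^ a * X 1 ^ b + X 0 ^ b * X 1 ^ a) with ht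
      have hDne : DD a b ≠ DD b a := fun h => hab (DD_inj.mp h).1
      have ct : ∀ d', coeff d' t = if d' = DD a b ∨ d' = DD b a then c else 0 := by
        intro d'
        rw [ht, mul_add, ← monomial_DD, ← monomial_DD, coeff_add, coeff_C_mul, coeff_C_mul,
          coeff_monomial, coeff_monomial]
        by_cases h1' : d' = DD a b
        · rw [if_pos h1'.symm, if_neg (fun h => hDne (h.trans h1').symm), mul_one,
            mul_zero, add_zero, if_pos (Or.inl h1')]
        · by_cases h2' : d' = DD b a
          · rw [if_neg (fun h => h1' h.symm), if_pos h2'.symm, mul_zero, mul_one, zero_add,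
              if_pos (Or.inr h2')]
          · rw [if_neg (fun h => h1' h.symm), if_neg (fun h => h2' h.symm), mul_zero, add_zero,
              if_neg (by tauto)]
      have htA : t ∈ A :=
        A.mul_mem (A.algebraMap_mem c) (pair_mem p A h2 h1 hxy a b hmab)
      have hg_supp : ∀ d' ∈ (f + t).support, d' ∈ f.support ∧ d' ≠ d := by
        intro d' hd'
        have hne : coeff d' (f + t) ≠ 0 := MvPolynomial.mem_support_iff.mp hd'
        rw [coeff_add, ct] at hne
        by_cases h1' : d' = DD a b
        · exfalso
          rw [if_pos (Or.inl h1'), h1', ← hdD, ← hc] at hne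
          exact hne hcc
        · by_cases h2' : d' = DD b a
          · exfalso
            rw [if_pos (Or.inr h2'), h2', ← hsym a b, ← hdD, ← hc] at hne
            exact hne hcc
          · rw [if_neg (by tauto), add_zero] at hne
            exact ⟨MvPolynomial.mem_support_iff.mpr hne, fun he => h1' (he.trans hdD)⟩
      have hsub : (f + t).support ⊆ f.support.erase d := by
        intro d' hd'
        exact Finset.mem_erase.mpr ⟨(hg_supp d' hd').2, (hg_supp d' hd').1⟩
      have hcard' : (f + t).support.card ≤ n := by
        have := Finset.card_le_card hsub
        rw [Finset.card_erase_of_mem hd] at this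
        omega
      have hsym' : ∀ a' b', coeff (DD a' b') (f + t) = coeff (DD b' a') (f + t) := by
        intro a' b'
        rw [coeff_add, coeff_add, hsym a' b', ct, ct]
        congr 1
        refine if_congr ?_ rfl rfl
        rw [DD_inj, DD_inj, DD_inj, DD_inj]
        tauto
      have hmod' : ∀ d' ∈ (f + t).support, d' 0 ≡ d' 1 [MOD p] := by
        intro d' hd'
        exact hmod d' (hg_supp d' hd').1
      have hfg : f = (f + t) + t := by
        rw [add_assoc, ← two_mul, h2, zero_mul, add_zero]
      rw [hfg]
      exact A.add_mem (ih (f + t) hcard' hsym' hmod') htA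

end AuxInvWi

/-- For the faithful two-dimensional representation `W_i` of `G = D_{2p}`
(`p ≥ 3` odd, `1 ≤ i ≤ (p-1)/2` with `gcd(i,p) = 1`, `F` algebraically closed
of characteristic two), with `G` acting on `F[x,y]` by `ρ(x) = λ^i x`,
`ρ(y) = λ^{-i} y`, `σ(x) = y`, `σ(y) = x`, the invariant ring `F[x,y]^G`
equals the `F`-subalgebra generated by `x^p + y^p` and `xy`.
Here `x = X 0` and `y = X 1` in `MvPolynomial (Fin 2) F`. -/
theorem invariants_Wi_eq_adjoin
    (p i : ℕ) (hp_odd : Odd p) (hp : 3 ≤ p)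
    (hi1 : 1 ≤ i) (hi2 : i ≤ (p - 1) / 2) (hip : Nat.Coprime i p)
    (F : Type*) [Field F] [IsAlgClosed F] [CharP F 2]
    (lam : F) (hlam : IsPrimitiveRoot lam p)
    (α : DihedralGroup p →*
      (MvPolynomial (Fin 2) F ≃ₐ[F] MvPolynomial (Fin 2) F))
    (hρx : α (DihedralGroup.r 1) (X 0) = C (lam ^ i) * X 0)
    (hρy : α (DihedralGroup.r 1) (X 1) = C (lam⁻¹ ^ i) * X 1)
    (hσx : α (DihedralGroup.sr 0) (X 0) = X 1)
    (hσy : α (DihedralGroup.sr 0) (X 1) = X 0) :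
    { f : MvPolynomial (Fin 2) F | ∀ g : DihedralGroup p, α g f = f } =
    (Algebra.adjoin F
      ({X 0 ^ p + X 1 ^ p, X 0 * X 1} : Set (MvPolynomial (Fin 2) F)) :
      Set (MvPolynomial (Fin 2) F)) := by
  haveI : NeZero p := ⟨by omega⟩
  set A := Algebra.adjoin F
      ({X 0 ^ p + X 1 ^ p, X 0 * X 1} : Set (MvPolynomial (Fin 2) F)) with hA
  have hF2 : (2 : F) = 0 := by
    have := CharP.cast_eq_zero F 2
    exact_mod_cast this
  have hlamp : lam ^ p = 1 := hlam.pow_eq_one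
  have hlamne : lam ≠ 0 := by
    intro h
    rw [h, zero_pow (by omega : p ≠ 0)] at hlamp
    exact zero_ne_one hlamp
  have hgen1 : (X 0 ^ p + X 1 ^ p : MvPolynomial (Fin 2) F) ∈ A :=
    Algebra.subset_adjoin (Set.mem_insert _ _)
  have hgen2 : (X 0 * X 1 : MvPolynomial (Fin 2) F) ∈ A :=
    Algebra.subset_adjoin (Set.mem_insert_of_mem _ rfl)
  -- generators of the algebra are fixed by the group generators
  have hr_gen1 : α (DihedralGroup.r 1) (X 0 ^ p + X 1 ^ p) = X 0 ^ p + X 1 ^ p := by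
    have e1 : (lam ^ i) ^ p = 1 := by
      rw [← pow_mul, mul_comm, pow_mul, hlamp, one_pow]
    have e2 : (lam⁻¹ ^ i) ^ p = 1 := by
      rw [← pow_mul, mul_comm, pow_mul, inv_pow, hlamp, inv_one, one_pow]
    rw [map_add, map_pow, map_pow, hρx, hρy, mul_pow, mul_pow, ← C_pow, ← C_pow,
      e1, e2, C_1, one_mul, one_mul]
  have hr_gen2 : α (DihedralGroup.r 1) (X 0 * X 1) = X 0 * X 1 := by
    rw [map_mul, hρx, hρy]
    have e : (lam ^ i) * (lam⁻¹ ^ i) = 1 := by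
      rw [← mul_pow, mul_inv_cancel₀ hlamne, one_pow]
    calc (C (lam ^ i) * X 0 * (C (lam⁻¹ ^ i) * X 1) : MvPolynomial (Fin 2) F)
        = C ((lam ^ i) * (lam⁻¹ ^ i)) * (X 0 * X 1) := by rw [C_mul]; ring
      _ = X 0 * X 1 := by rw [e, C_1, one_mul]
  have hs_gen1 : α (DihedralGroup.sr 0) (X 0 ^ p + X 1 ^ p) = X 0 ^ p + X 1 ^ p := by
    rw [map_add, map_pow, map_pow, hσx, hσy, add_comm]
  have hs_gen2 : α (DihedralGroup.sr 0) (X 0 * X 1) = X 0 * X 1 := by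
    rw [map_mul, hσx, hσy, mul_comm]
  -- fixed by generators implies fixed by all of G
  have hfix : ∀ f : MvPolynomial (Fin 2) F, α (DihedralGroup.r 1) f = f →
      α (DihedralGroup.sr 0) f = f → ∀ g, α g f = f := by
    intro f hr hs g
    have hpow : ∀ n : ℕ, (α (DihedralGroup.r 1) ^ n) f = f := by
      intro n
      induction n with
      | zero => exact AlgEquiv.one_apply f
      | succ n ihn => rw [pow_succ, AlgEquiv.mul_apply, hr, ihn]
    have hrk : ∀ k : ZMod p, α (DihedralGroup.r k) f = f := by
      intro k
      have hk : DihedralGroup.r k = DihedralGroup.r 1 ^ (k.val) := by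
        rw [DihedralGroup.r_one_pow, ZMod.natCast_val, ZMod.cast_id]
      rw [hk, map_pow]
      exact hpow k.val
    match g with
    | DihedralGroup.r k => exact hrk k
    | DihedralGroup.sr k =>
      have hk : DihedralGroup.sr k = DihedralGroup.sr 0 * DihedralGroup.r k := by
        rw [DihedralGroup.sr_mul_r, zero_add]
      rw [hk, map_mul, AlgEquiv.mul_apply, hrk, hs]
  -- elements of A are invariant
  have hfixed_of_mem : ∀ f ∈ A, ∀ g, α g f = f := by
    have key : ∀ g0 : DihedralGroup p, α g0 (X 0 ^ p + X 1 ^ p) = X 0 ^ p + X 1 ^ p →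
        α g0 (X 0 * X 1) = X 0 * X 1 → ∀ f ∈ A, α g0 f = f := by
      intro g0 k1 k2 f hf
      have hle : A ≤ AlgHom.equalizer ((α g0).toAlgHom)
          (AlgHom.id F (MvPolynomial (Fin 2) F)) := by
        rw [hA]
        apply Algebra.adjoin_le
        intro s hs
        rcases hs with rfl | hs
        · exact (AlgHom.mem_equalizer _ _ _).mpr (by simpa using k1)
        · rcases hs with rfl
          exact (AlgHom.mem_equalizer _ _ _).mpr (by simpa using k2)
      have := (AlgHom.mem_equalizer _ _ f).mp (hle hf)
      simpa using this
    intro f hf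
    exact hfix f (key _ hr_gen1 hr_gen2 f hf) (key _ hs_gen1 hs_gen2 f hf)
  -- invariant elements lie in A
  have hmem_of_fixed : ∀ f : MvPolynomial (Fin 2) F, (∀ g, α g f = f) → f ∈ A := by
    intro f hf
    -- symmetry of coefficients
    have hswap : ∀ q : MvPolynomial (Fin 2) F,
        α (DihedralGroup.sr 0) q = rename (Equiv.swap (0:Fin 2) 1) q := by
      intro q
      have he : (α (DihedralGroup.sr 0)).toAlgHom
          = (rename (Equiv.swap (0:Fin 2) 1) :
              MvPolynomial (Fin 2) F →ₐ[F] MvPolynomial (Fin 2) F) := by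
        apply MvPolynomial.algHom_ext
        intro j
        rw [rename_X]
        fin_cases j
        · show α (DihedralGroup.sr 0) (X 0) = X (Equiv.swap (0:Fin 2) 1 0)
          rw [hσx, Equiv.swap_apply_left]
        · show α (DihedralGroup.sr 0) (X 1) = X (Equiv.swap (0:Fin 2) 1 1)
          rw [hσy, Equiv.swap_apply_right]
      exact DFunLike.congr_fun he q
    have hsym : ∀ a b, coeff (DD a b) f = coeff (DD b a) f := by
      intro a b
      have h := coeff_rename_mapDomain (⇑(Equiv.swap (0:Fin 2) 1))
        (Equiv.swap (0:Fin 2) 1).injective f (DD a b)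
      rw [← hswap f, hf (DihedralGroup.sr 0), mapDomain_swap, DD_apply0, DD_apply1] at h
      exact h.symm
    -- congruence condition on the support
    have hscale : ∀ q : MvPolynomial (Fin 2) F, α (DihedralGroup.r 1) q
        = aeval (fun j : Fin 2 => if j = 0 then C (lam ^ i) * X 0
            else C (lam⁻¹ ^ i) * X 1) q := by
      intro q
      have he : (α (DihedralGroup.r 1)).toAlgHom
          = aeval (fun j : Fin 2 => if j = 0 then C (lam ^ i) * X 0
              else C (lam⁻¹ ^ i) * X 1) := by
        apply MvPolynomial.algHom_ext
        intro j
        rw [aeval_X]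
        fin_cases j
        · show α (DihedralGroup.r 1) (X 0)
            = if (0 : Fin 2) = 0 then C (lam ^ i) * X 0 else C (lam⁻¹ ^ i) * X 1
          rw [hρx, if_pos rfl]
        · show α (DihedralGroup.r 1) (X 1)
            = if (1 : Fin 2) = 0 then C (lam ^ i) * X 0 else C (lam⁻¹ ^ i) * X 1
          rw [hρy, if_neg (by decide)]
      exact DFunLike.congr_fun he q
    set μ := lam ^ i with hμdef
    have hμ : IsPrimitiveRoot μ p := hlam.pow_of_coprime i hip
    have hμne : μ ≠ 0 := pow_ne_zero i hlamne
    have hmod : ∀ d ∈ f.support, d 0 ≡ d 1 [MOD p] := by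
      intro d hd
      have hcoef := coeff_aeval_scale μ (lam⁻¹ ^ i) f d
      rw [← hscale f, hf (DihedralGroup.r 1)] at hcoef
      have hcne : coeff d f ≠ 0 := MvPolynomial.mem_support_iff.mp hd
      have hk : μ ^ d 0 * (lam⁻¹ ^ i) ^ d 1 = 1 := by
        have h' : (μ ^ d 0 * (lam⁻¹ ^ i) ^ d 1) * coeff d f = 1 * coeff d f := by
          rw [one_mul]; exact hcoef.symm
        exact mul_right_cancel₀ hcne h'
      have hinv : (lam⁻¹ ^ i : F) = μ⁻¹ := by rw [hμdef, inv_pow]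
      rw [hinv, inv_pow, mul_inv_eq_one₀ (pow_ne_zero _ hμne)] at hk
      -- hk : μ ^ d 0 = μ ^ d 1
      have key : ∀ a b : ℕ, b ≤ a → μ ^ a = μ ^ b → a ≡ b [MOD p] := by
        intro a b hba heq
        have : μ ^ b * μ ^ (a - b) = μ ^ b * 1 := by
          rw [mul_one, ← pow_add, Nat.add_sub_cancel' hba, heq]
        have h1 : μ ^ (a - b) = 1 := mul_left_cancel₀ (pow_ne_zero _ hμne) this
        have hdvd : p ∣ a - b := (hμ.pow_eq_one_iff_dvd _).mp h1
        exact ((Nat.modEq_iff_dvd' hba).mpr hdvd).symm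
      rcases le_total (d 1) (d 0) with hle | hle
      · exact key _ _ hle hk
      · exact (key _ _ hle hk.symm).symm
    exact main_induction p hF2 A hgen1 hgen2 f.support.card f le_rfl hsym hmod
  apply Set.eq_of_subset_of_subset
  · intro f hf
    exact hmem_of_fixed f hf
  · intro f hf g
    exact hfixed_of_mem f hf g
end

section
/- Two points (a,b) and (a',b') of F² lie in the same G-orbit if and only if ab = a'b' and a^p + b^p = a'^p + b'^p. In other words, the two invariants xy and x^p + y^p form a separating set for this action, and they separate exactly the G-orbits. -/
/-- For the faithful two-dimensional representation `W_i` of `G = D_{2p}`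
(`p ≥ 3` odd, `1 ≤ i ≤ (p-1)/2` with `gcd(i,p) = 1`, `F` algebraically closed
of characteristic two), where `G` acts on `F²` by `ρ·(a,b) = (λ^{-i}a, λ^{i}b)`
and `σ·(a,b) = (b,a)`, two points `(a,b)` and `(a',b')` lie in the same
`G`-orbit if and only if `ab = a'b'` and `a^p + b^p = a'^p + b'^p`; that is,
the invariants `xy` and `x^p + y^p` separate exactly the `G`-orbits. -/
theorem orbit_iff_invariants_agree
    (p i : ℕ) (hp_odd : Odd p) (hp : 3 ≤ p)
    (hi1 : 1 ≤ i) (hi2 : i ≤ (p - 1) / 2) (hip : Nat.Coprime i p)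
    (F : Type*) [Field F] [IsAlgClosed F] [CharP F 2]
    (lam : F) (hlam : IsPrimitiveRoot lam p)
    (θ : Representation F (DihedralGroup p) (F × F))
    (hρ : ∀ a b : F, θ (DihedralGroup.r 1) (a, b) = (lam⁻¹ ^ i * a, lam ^ i * b))
    (hσ : ∀ a b : F, θ (DihedralGroup.sr 0) (a, b) = (b, a))
    (a b a' b' : F) :
    (∃ g : DihedralGroup p, θ g (a, b) = (a', b')) ↔
      (a * b = a' * b' ∧ a ^ p + b ^ p = a' ^ p + b' ^ p) := by
  have hp0 : p ≠ 0 := by omega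
  haveI : NeZero p := ⟨hp0⟩
  have hlam0 : lam ≠ 0 := hlam.ne_zero hp0
  set μ : F := lam ^ i with hμdef
  have hμ0 : μ ≠ 0 := pow_ne_zero _ hlam0
  have hμp : μ ^ p = 1 := by
    rw [hμdef, ← pow_mul, mul_comm, pow_mul, hlam.pow_eq_one, one_pow]
  have hμprim : IsPrimitiveRoot μ p := hlam.pow_of_coprime i hip
  -- action of rotations
  have hr : ∀ (n : ℕ) (x y : F),
      θ (DihedralGroup.r (n : ZMod p)) (x, y) = (μ⁻¹ ^ n * x, μ ^ n * y) := by
    intro n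
    induction n with
    | zero =>
      intro x y
      have h1 : DihedralGroup.r ((0 : ℕ) : ZMod p) = 1 := by
        simp
      rw [h1, map_one]
      simp
    | succ n ih =>
      intro x y
      have h1 : DihedralGroup.r (((n + 1 : ℕ)) : ZMod p)
          = DihedralGroup.r ((n : ℕ) : ZMod p) * DihedralGroup.r 1 := by
        rw [DihedralGroup.r_mul_r]
        push_cast
        ring_nf
      rw [h1, map_mul, Module.End.mul_apply, hρ, ih]
      have hinv : lam⁻¹ ^ i = μ⁻¹ := by rw [hμdef, inv_pow]
      rw [hinv]
      refine Prod.ext ?_ ?_ <;> simp [pow_succ] <;> ring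
  -- action of reflections
  have hsr : ∀ (n : ℕ) (x y : F),
      θ (DihedralGroup.sr (n : ZMod p)) (x, y) = (μ ^ n * y, μ⁻¹ ^ n * x) := by
    intro n x y
    have h1 : DihedralGroup.sr ((n : ℕ) : ZMod p)
        = DihedralGroup.sr 0 * DihedralGroup.r ((n : ℕ) : ZMod p) := by
      rw [DihedralGroup.sr_mul_r, zero_add]
    rw [h1, map_mul, Module.End.mul_apply, hr, hσ]
  have hμinvp : (μ⁻¹ : F) ^ p = 1 := by rw [inv_pow, hμp, inv_one]
  have hcancel : ∀ n : ℕ, (μ⁻¹ : F) ^ n * μ ^ n = 1 := by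
    intro n; rw [← mul_pow, inv_mul_cancel₀ hμ0, one_pow]
  constructor
  · rintro ⟨g, hg⟩
    have hgen : ∀ c : F, c ^ p = 1 → ∀ x y : F,
        (c * x) * (c⁻¹ * y) = x * y ∧ (c * x) ^ p + (c⁻¹ * y) ^ p = x ^ p + y ^ p := by
      intro c hc x y
      have hc0 : c ≠ 0 := by
        intro h; rw [h, zero_pow hp0] at hc; exact zero_ne_one hc
      constructor
      · field_simp
      · rw [mul_pow, mul_pow, hc, inv_pow, hc, inv_one, one_mul, one_mul]
    cases g with
    | r j =>
      have hj : DihedralGroup.r j = DihedralGroup.r ((j.val : ℕ) : ZMod p) := by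
        rw [ZMod.natCast_val, ZMod.cast_id]
      rw [hj, hr] at hg
      obtain ⟨h1, h2⟩ := Prod.mk.injEq .. ▸ hg
      have hc : (μ⁻¹ : F) ^ j.val ^ 1 = μ⁻¹ ^ j.val := by ring
      have hroot : ((μ⁻¹ : F) ^ j.val) ^ p = 1 := by
        rw [← pow_mul, mul_comm, pow_mul, hμinvp, one_pow]
      have := hgen (μ⁻¹ ^ j.val) hroot a b
      have hinv : ((μ⁻¹ : F) ^ j.val)⁻¹ = μ ^ j.val := by
        rw [inv_pow, inv_inv]
      rw [hinv] at this
      rw [← h1, ← h2]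
      exact ⟨this.1.symm, this.2.symm⟩
    | sr j =>
      have hj : DihedralGroup.sr j = DihedralGroup.sr ((j.val : ℕ) : ZMod p) := by
        rw [ZMod.natCast_val, ZMod.cast_id]
      rw [hj, hsr] at hg
      obtain ⟨h1, h2⟩ := Prod.mk.injEq .. ▸ hg
      have hroot : ((μ : F) ^ j.val) ^ p = 1 := by
        rw [← pow_mul, mul_comm, pow_mul, hμp, one_pow]
      have := hgen (μ ^ j.val) hroot b a
      have hinv : ((μ : F) ^ j.val)⁻¹ = μ⁻¹ ^ j.val := by rw [inv_pow]
      rw [hinv] at this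
      constructor
      · rw [← h1, ← h2]; linear_combination -this.1
      · rw [← h1, ← h2]; linear_combination -this.2
  · rintro ⟨h1, h2⟩
    -- reachability lemmas
    have hreach : ∀ c : F, c ^ p = 1 → ∃ g : DihedralGroup p,
        θ g (a, b) = (c * a, c⁻¹ * b) := by
      intro c hc
      have hcinv : (c⁻¹ : F) ^ p = 1 := by rw [inv_pow, hc, inv_one]
      obtain ⟨n, _, hn⟩ := hμprim.eq_pow_of_pow_eq_one hcinv
      refine ⟨DihedralGroup.r ((n : ℕ) : ZMod p), ?_⟩
      rw [hr]
      have hc0 : c ≠ 0 := by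
        intro h; rw [h, zero_pow hp0] at hc; exact zero_ne_one hc
      have h1' : (μ⁻¹ : F) ^ n = c := by
        rw [inv_pow, hn, inv_inv]
      rw [h1', hn]
    have hreachs : ∀ c : F, c ^ p = 1 → ∃ g : DihedralGroup p,
        θ g (a, b) = (c * b, c⁻¹ * a) := by
      intro c hc
      obtain ⟨n, _, hn⟩ := hμprim.eq_pow_of_pow_eq_one hc
      refine ⟨DihedralGroup.sr ((n : ℕ) : ZMod p), ?_⟩
      rw [hsr, hn]
      rw [inv_pow, hn]
    have hprod : a ^ p * b ^ p = a' ^ p * b' ^ p := by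
      rw [← mul_pow, ← mul_pow, h1]
    have key : (a ^ p - a' ^ p) * (a ^ p - b' ^ p) = 0 := by
      linear_combination (a ^ p) * h2 - hprod
    rcases mul_eq_zero.mp key with hA | hA
    · -- a'^p = a^p, b'^p = b^p : use a rotation
      have ha' : a' ^ p = a ^ p := by linear_combination -hA
      have hb' : b' ^ p = b ^ p := by linear_combination h2.symm - ha'
      by_cases ha : a = 0
      · have ha0' : a' = 0 := by
          have : a' ^ p = 0 := by rw [ha', ha, zero_pow hp0]
          exact pow_eq_zero_iff hp0 |>.mp this
        by_cases hb : b = 0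
        · have hb0' : b' = 0 := by
            have : b' ^ p = 0 := by rw [hb', hb, zero_pow hp0]
            exact pow_eq_zero_iff hp0 |>.mp this
          exact ⟨1, by rw [map_one]; simp [ha, hb, ha0', hb0']⟩
        · have hb0' : b' ≠ 0 := by
            intro h
            rw [h, zero_pow hp0] at hb'
            exact hb (pow_eq_zero_iff hp0 |>.mp hb'.symm)
          have hc : (b * b'⁻¹) ^ p = 1 := by
            rw [mul_pow, inv_pow, hb', mul_inv_cancel₀ (pow_ne_zero _ hb)]
          obtain ⟨g, hg⟩ := hreach (b * b'⁻¹) hc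
          refine ⟨g, ?_⟩
          rw [hg, ha, ha0']
          have : (b * b'⁻¹)⁻¹ * b = b' := by
            rw [mul_inv_rev, inv_inv]
            field_simp
          rw [this, mul_zero]
      · have ha0' : a' ≠ 0 := by
          intro h
          rw [h, zero_pow hp0] at ha'
          exact ha (pow_eq_zero_iff hp0 |>.mp ha'.symm)
        have hc : (a' * a⁻¹) ^ p = 1 := by
          rw [mul_pow, inv_pow, ha', mul_inv_cancel₀ (pow_ne_zero _ ha)]
        obtain ⟨g, hg⟩ := hreach (a' * a⁻¹) hc
        refine ⟨g, ?_⟩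
        rw [hg]
        have e1 : a' * a⁻¹ * a = a' := by field_simp
        have e2 : (a' * a⁻¹)⁻¹ * b = b' := by
          rw [mul_inv_rev, inv_inv]
          field_simp
          linear_combination h1
        rw [e1, e2]
    · -- b'^p = a^p, a'^p = b^p : use a reflection
      have hb'a : b' ^ p = a ^ p := by linear_combination -hA
      have ha'b : a' ^ p = b ^ p := by linear_combination h2.symm - hb'a
      by_cases hb : b = 0
      · have ha0' : a' = 0 := by
          have : a' ^ p = 0 := by rw [ha'b, hb, zero_pow hp0]
          exact pow_eq_zero_iff hp0 |>.mp this
        by_cases ha : a = 0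
        · have hb0' : b' = 0 := by
            have : b' ^ p = 0 := by rw [hb'a, ha, zero_pow hp0]
            exact pow_eq_zero_iff hp0 |>.mp this
          exact ⟨1, by rw [map_one]; simp [ha, hb, ha0', hb0']⟩
        · have hb0' : b' ≠ 0 := by
            intro h
            rw [h, zero_pow hp0] at hb'a
            exact ha (pow_eq_zero_iff hp0 |>.mp hb'a.symm)
          have hc : (a * b'⁻¹) ^ p = 1 := by
            rw [mul_pow, inv_pow, ← hb'a, mul_inv_cancel₀ (pow_ne_zero _ hb0')]
          obtain ⟨g, hg⟩ := hreachs (a * b'⁻¹) hc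
          refine ⟨g, ?_⟩
          rw [hg, hb, ha0']
          have : (a * b'⁻¹)⁻¹ * a = b' := by
            rw [mul_inv_rev, inv_inv]
            field_simp
          rw [this, mul_zero]
      · have ha0' : a' ≠ 0 := by
          intro h
          rw [h, zero_pow hp0] at ha'b
          exact hb (pow_eq_zero_iff hp0 |>.mp ha'b.symm)
        have hc : (a' * b⁻¹) ^ p = 1 := by
          rw [mul_pow, inv_pow, ha'b, mul_inv_cancel₀ (pow_ne_zero _ hb)]
        obtain ⟨g, hg⟩ := hreachs (a' * b⁻¹) hc
        refine ⟨g, ?_⟩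
        rw [hg]
        have e1 : a' * b⁻¹ * b = a' := by field_simp
        have e2 : (a' * b⁻¹)⁻¹ * a = b' := by
          rw [mul_inv_rev, inv_inv]
          field_simp
          linear_combination h1
        rw [e1, e2]
end

section
/- The polynomial z x^p + w y^p ∈ F[x,y,z,w] is G-invariant, and it satisfies (z x^p + w y^p)(v_1) = 0 while (z x^p + w y^p)(v_2) = 1. In particular, v_1 and v_2 lie in different G-orbits of V. -/
open MvPolynomial

/-- For `V = W_1 ⊕ W_0 = F⁴` (points `(a,b,c,d)`, `G = D_{2p}` acting by
`ρ·(a,b,c,d) = (λ⁻¹a, λb, c, d)`, `σ·(a,b,c,d) = (b,a,d,c)`), with the induced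
action on `F[V] = F[x,y,z,w]` (`x = X 0`, `y = X 1`, `z = X 2`, `w = X 3`,
`(g·f)(v) = f(g⁻¹·v)`): the polynomial `z x^p + w y^p` is `G`-invariant, takes
the value `0` at `v₁ = (0,1,1,0)` and the value `1` at `v₂ = (0,1,0,1)`;
in particular `v₁` and `v₂` lie in different `G`-orbits. -/
theorem zxp_wyp_invariant_separates
    (p : ℕ) (hp_odd : Odd p) (hp : 3 ≤ p)
    (F : Type*) [Field F] [IsAlgClosed F] [CharP F 2]
    (lam : F) (hlam : IsPrimitiveRoot lam p)
    (θ : Representation F (DihedralGroup p) (Fin 4 → F))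
    (hθρ : ∀ v : Fin 4 → F,
      θ (DihedralGroup.r 1) v = ![lam⁻¹ * v 0, lam * v 1, v 2, v 3])
    (hθσ : ∀ v : Fin 4 → F,
      θ (DihedralGroup.sr 0) v = ![v 1, v 0, v 3, v 2])
    (α : DihedralGroup p →*
      (MvPolynomial (Fin 4) F ≃ₐ[F] MvPolynomial (Fin 4) F))
    (hρx : α (DihedralGroup.r 1) (X 0) = C lam * X 0)
    (hρy : α (DihedralGroup.r 1) (X 1) = C lam⁻¹ * X 1)
    (hρz : α (DihedralGroup.r 1) (X 2) = X 2)
    (hρw : α (DihedralGroup.r 1) (X 3) = X 3)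
    (hσx : α (DihedralGroup.sr 0) (X 0) = X 1)
    (hσy : α (DihedralGroup.sr 0) (X 1) = X 0)
    (hσz : α (DihedralGroup.sr 0) (X 2) = X 3)
    (hσw : α (DihedralGroup.sr 0) (X 3) = X 2)
    (hcompat : ∀ (g : DihedralGroup p) (f : MvPolynomial (Fin 4) F) (v : Fin 4 → F),
      eval v (α g f) = eval (θ g⁻¹ v) f) :
    (∀ g : DihedralGroup p,
        α g (X 2 * X 0 ^ p + X 3 * X 1 ^ p) = X 2 * X 0 ^ p + X 3 * X 1 ^ p) ∧
    eval ![0, 1, 1, 0] (X 2 * X 0 ^ p + X 3 * X 1 ^ p : MvPolynomial (Fin 4) F) = 0 ∧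
    eval ![0, 1, 0, 1] (X 2 * X 0 ^ p + X 3 * X 1 ^ p : MvPolynomial (Fin 4) F) = 1 ∧
    ¬ ∃ g : DihedralGroup p, θ g ![0, 1, 1, 0] = ![0, 1, 0, 1] := by
  have hp0 : p ≠ 0 := by omega
  haveI : NeZero p := ⟨hp0⟩
  set f : MvPolynomial (Fin 4) F := X 2 * X 0 ^ p + X 3 * X 1 ^ p with hf
  have hlamp : lam ^ p = 1 := hlam.pow_eq_one
  have hlaminvp : lam⁻¹ ^ p = 1 := by rw [inv_pow, hlamp, inv_one]
  have hr : α (DihedralGroup.r 1) f = f := by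
    simp only [hf, map_add, map_mul, map_pow, hρx, hρy, hρz, hρw, mul_pow, ← C_pow,
      hlamp, hlaminvp, map_one, one_mul]
  have hs : α (DihedralGroup.sr 0) f = f := by
    simp only [hf, map_add, map_mul, map_pow, hσx, hσy, hσz, hσw]
    ring
  have hrpow : ∀ n : ℕ, α (DihedralGroup.r (n : ZMod p)) f = f := by
    intro n
    induction n with
    | zero =>
      have : DihedralGroup.r ((0 : ℕ) : ZMod p) = (1 : DihedralGroup p) := by
        simp
      rw [this, map_one]; rfl
    | succ n ih =>
      have : DihedralGroup.r ((n + 1 : ℕ) : ZMod p)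
          = DihedralGroup.r (n : ZMod p) * DihedralGroup.r 1 := by
        rw [DihedralGroup.r_mul_r]; push_cast; ring_nf
      rw [this, map_mul, AlgEquiv.mul_apply, hr, ih]
  have hall : ∀ g : DihedralGroup p, α g f = f := by
    intro g
    cases g with
    | r i =>
      have := hrpow i.val
      rwa [ZMod.natCast_val, ZMod.cast_id] at this
    | sr i =>
      have hsr : DihedralGroup.sr i = DihedralGroup.sr 0 * DihedralGroup.r i := by
        rw [DihedralGroup.sr_mul_r, zero_add]
      have hri : α (DihedralGroup.r i) f = f := by
        have := hrpow i.val
        rwa [ZMod.natCast_val, ZMod.cast_id] at this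
      rw [hsr, map_mul, AlgEquiv.mul_apply, hri, hs]
  have he1 : eval ![0, 1, 1, 0] f = 0 := by
    simp [hf, zero_pow hp0]
  have he2 : eval ![0, 1, 0, 1] f = 1 := by
    simp [hf]
  refine ⟨hall, he1, he2, ?_⟩
  rintro ⟨g, hg⟩
  have h := hcompat g⁻¹ f ![0, 1, 1, 0]
  rw [hall, inv_inv, hg, he1, he2] at h
  exact one_ne_zero h.symm
end

section
/- Every G-invariant polynomial f ∈ F[x,y,z,w] of total degree at most p satisfies f(v_1) = f(v_2). Consequently, the G-invariant polynomials of degree at most p do not form a separating set for V = W_1 ⊕ W_0. -/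
open MvPolynomial

private lemma scale_coeff {F : Type*} [CommRing F] (u : Fin 4 → F)
    (f : MvPolynomial (Fin 4) F) (m : Fin 4 →₀ ℕ) :
    coeff m (aeval (fun i => C (u i) * X i) f) = (∏ i, u i ^ m i) * coeff m f := by
  classical
  have key : ∀ (d : Fin 4 →₀ ℕ) (a : F),
      (aeval (fun i => C (u i) * X i)) (monomial d a)
      = monomial d ((∏ i, u i ^ d i) * a) := by
    intro d a
    rw [aeval_monomial, monomial_eq, Finsupp.prod, Finsupp.prod]
    simp only [mul_pow, Finset.prod_mul_distrib, ← C_pow, ← map_prod]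
    have hsub : (∏ i ∈ d.support, u i ^ d i) = ∏ i, u i ^ d i := by
      apply Finset.prod_subset (Finset.subset_univ _)
      intro i _ hi
      rw [Finsupp.notMem_support_iff.mp hi, pow_zero]
    rw [hsub, algebraMap_eq, ← mul_assoc, ← C_mul, mul_comm a]
  conv_lhs => rw [f.as_sum, map_sum]
  rw [coeff_sum]
  simp only [key, coeff_monomial]
  rw [Finset.sum_ite_eq' f.support m]
  by_cases h : m ∈ f.support
  · simp [h]
  · simp [h, notMem_support_iff.mp h]


/-- For `V = W_1 ⊕ W_0 = F⁴` with `G = D_{2p}` acting on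
`F[V] = F[x,y,z,w]` (`x = X 0`, `y = X 1`, `z = X 2`, `w = X 3`) via
`ρ(x) = λx`, `ρ(y) = λ⁻¹y`, `ρ(z) = z`, `ρ(w) = w`, `σ` swapping `x ↔ y` and
`z ↔ w`: every `G`-invariant polynomial `f` of total degree at most `p`
satisfies `f(v₁) = f(v₂)` for `v₁ = (0,1,1,0)` and `v₂ = (0,1,0,1)`;
consequently, the `G`-invariant polynomials of degree at most `p` do not form
a separating set for `V`. -/
theorem low_degree_invariants_not_separating
    (p : ℕ) (hp_odd : Odd p) (hp : 3 ≤ p)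
    (F : Type*) [Field F] [IsAlgClosed F] [CharP F 2]
    (lam : F) (hlam : IsPrimitiveRoot lam p)
    (α : DihedralGroup p →*
      (MvPolynomial (Fin 4) F ≃ₐ[F] MvPolynomial (Fin 4) F))
    (hρx : α (DihedralGroup.r 1) (X 0) = C lam * X 0)
    (hρy : α (DihedralGroup.r 1) (X 1) = C lam⁻¹ * X 1)
    (hρz : α (DihedralGroup.r 1) (X 2) = X 2)
    (hρw : α (DihedralGroup.r 1) (X 3) = X 3)
    (hσx : α (DihedralGroup.sr 0) (X 0) = X 1)
    (hσy : α (DihedralGroup.sr 0) (X 1) = X 0)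
    (hσz : α (DihedralGroup.sr 0) (X 2) = X 3)
    (hσw : α (DihedralGroup.sr 0) (X 3) = X 2) :
    (∀ f : MvPolynomial (Fin 4) F,
      (∀ g : DihedralGroup p, α g f = f) → f.totalDegree ≤ p →
      eval ![(0 : F), 1, 1, 0] f = eval ![(0 : F), 1, 0, 1] f) ∧
    ¬ (∀ u v : Fin 4 → F,
        (∀ f : MvPolynomial (Fin 4) F,
          (∀ g : DihedralGroup p, α g f = f) → f.totalDegree ≤ p →
          eval u f = eval v f) →
        (∀ f : MvPolynomial (Fin 4) F,
          (∀ g : DihedralGroup p, α g f = f) → eval u f = eval v f)) := by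
  classical
  have hp0 : 0 < p := by omega
  haveI : NeZero p := ⟨by omega⟩
  -- the variable permutation for σ
  let π : Fin 4 ≃ Fin 4 := ⟨![1,0,3,2], ![1,0,3,2], by decide, by decide⟩
  have hπ0 : π 0 = 1 := rfl
  have hπ1 : π 1 = 0 := rfl
  have hπ2 : π 2 = 3 := rfl
  have hπ3 : π 3 = 2 := rfl
  have hσ : ∀ f : MvPolynomial (Fin 4) F,
      α (DihedralGroup.sr 0) f = rename (π : Fin 4 → Fin 4) f := by
    have h : (α (DihedralGroup.sr 0)).toAlgHom = rename (π : Fin 4 → Fin 4) := by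
      apply algHom_ext
      intro i
      fin_cases i <;>
        simp [hσx, hσy, hσz, hσw, hπ0, hπ1, hπ2, hπ3]
    intro f
    exact DFunLike.congr_fun h f
  let u : Fin 4 → F := ![lam, lam⁻¹, 1, 1]
  have hρ : ∀ f : MvPolynomial (Fin 4) F,
      α (DihedralGroup.r 1) f = aeval (fun i => C (u i) * X i) f := by
    have h : (α (DihedralGroup.r 1)).toAlgHom = aeval (fun i => C (u i) * X i) := by
      apply algHom_ext
      intro i
      fin_cases i <;> simp [hρx, hρy, hρz, hρw, u]
    intro f
    exact DFunLike.congr_fun h f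
  have part1 : ∀ f : MvPolynomial (Fin 4) F,
      (∀ g : DihedralGroup p, α g f = f) → f.totalDegree ≤ p →
      eval ![(0 : F), 1, 1, 0] f = eval ![(0 : F), 1, 0, 1] f := by
    intro f hf hdeg
    have hren : rename (π : Fin 4 → Fin 4) f = f := by rw [← hσ f]; exact hf _
    have hcoeff_σ : ∀ m : Fin 4 →₀ ℕ, coeff (Finsupp.equivMapDomain π m) f = coeff m f := by
      intro m
      have h1 := coeff_rename_mapDomain (π : Fin 4 → Fin 4) π.injective f m
      rw [hren] at h1
      rw [Finsupp.equivMapDomain_eq_mapDomain]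
      exact h1
    have hcoeff_ρ : ∀ m ∈ f.support, m 0 = 0 → m 1 = 0 ∨ m = Finsupp.single 1 p := by
      intro m hm h0
      have h1 := scale_coeff u f m
      have h2 : aeval (fun i => C (u i) * X i) f = f := by rw [← hρ f]; exact hf _
      rw [h2] at h1
      have hc : coeff m f ≠ 0 := mem_support_iff.mp hm
      have hprod : (∏ i, u i ^ m i) = 1 :=
        mul_right_cancel₀ hc (by rw [one_mul, ← h1])
      rw [Fin.prod_univ_four] at hprod
      simp only [u, Matrix.cons_val_zero, Matrix.cons_val_one, Matrix.head_cons,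
        Matrix.cons_val_two, Matrix.tail_cons, Matrix.cons_val_three, h0, pow_zero,
        one_pow, one_mul, mul_one] at hprod
      have hlam1 : lam ^ m 1 = 1 := by
        rw [inv_pow, inv_eq_one] at hprod; exact hprod
      have hdvd : p ∣ m 1 := (hlam.pow_eq_one_iff_dvd _).mp hlam1
      have hsum : m 0 + m 1 + m 2 + m 3 ≤ p := by
        have h3 := le_trans (le_totalDegree hm) hdeg
        rwa [Finsupp.sum_fintype _ _ (fun _ => rfl), Fin.sum_univ_four] at h3
      have h01 : m 1 = 0 ∨ m 1 = p := by
        rcases hdvd with ⟨k, hk⟩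
        rcases k with _ | k
        · left; omega
        · right
          have h1' : p ≤ p * (k + 1) := Nat.le_mul_of_pos_right p (by omega)
          omega
      rcases h01 with h01 | h01
      · exact Or.inl h01
      · right
        have h2' : m 2 = 0 := by omega
        have h3' : m 3 = 0 := by omega
        ext i
        fin_cases i <;> simp [Finsupp.single_apply, h0, h01, h2', h3']
    rw [eval_eq', eval_eq']
    have step1 : ∑ m ∈ f.support, coeff m f * ∏ i, (![(0:F),1,1,0]) i ^ m i
        = ∑ m ∈ f.support.filter (fun m => m 0 = 0 ∧ m 3 = 0), coeff m f := by
      rw [Finset.sum_filter]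
      apply Finset.sum_congr rfl
      intro m _
      rw [Fin.prod_univ_four]
      by_cases h0 : m 0 = 0
      · by_cases h3 : m 3 = 0
        · simp [h0, h3]
        · simp [h0, h3, zero_pow h3]
      · simp [h0, zero_pow h0]
    have step2 : ∑ m ∈ f.support, coeff m f * ∏ i, (![(0:F),1,0,1]) i ^ m i
        = ∑ m ∈ f.support.filter (fun m => m 0 = 0 ∧ m 2 = 0), coeff m f := by
      rw [Finset.sum_filter]
      apply Finset.sum_congr rfl
      intro m _
      rw [Fin.prod_univ_four]
      by_cases h0 : m 0 = 0
      · by_cases h2 : m 2 = 0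
        · simp [h0, h2]
        · simp [h0, h2, zero_pow h2]
      · simp [h0, zero_pow h0]
    rw [step1, step2]
    have hπinv : ∀ (m : Fin 4 →₀ ℕ) (j : Fin 4),
        Finsupp.equivMapDomain π m j = m (π j) := by
      intro m j
      rw [Finsupp.equivMapDomain_apply]
      rfl
    have hsingle1 : (Finsupp.single 1 p : Fin 4 →₀ ℕ) 1 = p := by
      simp [Finsupp.single_apply]
    apply Finset.sum_nbij'
      (i := fun m => if m 1 = 0 then Finsupp.equivMapDomain π m else m)
      (j := fun m => if m 1 = 0 then Finsupp.equivMapDomain π m else m)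
    · intro m hm
      rw [Finset.mem_filter] at hm ⊢
      obtain ⟨hms, h0, h3⟩ := hm
      rcases hcoeff_ρ m hms h0 with h1 | h1
      · rw [if_pos h1]
        refine ⟨?_, ?_, ?_⟩
        · rw [mem_support_iff, hcoeff_σ]; exact mem_support_iff.mp hms
        · rw [hπinv, hπ0]; exact h1
        · rw [hπinv, hπ2]; exact h3
      · rw [if_neg (by rw [h1, hsingle1]; omega)]
        refine ⟨hms, h0, ?_⟩
        rw [h1]; simp [Finsupp.single_apply]
    · intro m hm
      rw [Finset.mem_filter] at hm ⊢
      obtain ⟨hms, h0, h2⟩ := hm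
      rcases hcoeff_ρ m hms h0 with h1 | h1
      · rw [if_pos h1]
        refine ⟨?_, ?_, ?_⟩
        · rw [mem_support_iff, hcoeff_σ]; exact mem_support_iff.mp hms
        · rw [hπinv, hπ0]; exact h1
        · rw [hπinv, hπ3]; exact h2
      · rw [if_neg (by rw [h1, hsingle1]; omega)]
        refine ⟨hms, h0, ?_⟩
        rw [h1]; simp [Finsupp.single_apply]
    · intro m hm
      rw [Finset.mem_filter] at hm
      obtain ⟨hms, h0, _⟩ := hm
      by_cases h1 : m 1 = 0
      · rw [if_pos h1]
        have h1' : Finsupp.equivMapDomain π m 1 = 0 := by rw [hπinv, hπ1]; exact h0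
        rw [if_pos h1']
        ext j
        rw [hπinv, hπinv]
        congr 1
        fin_cases j <;> rfl
      · rw [if_neg h1, if_neg h1]
    · intro m hm
      rw [Finset.mem_filter] at hm
      obtain ⟨hms, h0, _⟩ := hm
      by_cases h1 : m 1 = 0
      · rw [if_pos h1]
        have h1' : Finsupp.equivMapDomain π m 1 = 0 := by rw [hπinv, hπ1]; exact h0
        rw [if_pos h1']
        ext j
        rw [hπinv, hπinv]
        congr 1
        fin_cases j <;> rfl
      · rw [if_neg h1, if_neg h1]
    · intro m hm
      by_cases h1 : m 1 = 0
      · rw [if_pos h1, hcoeff_σ]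
      · rw [if_neg h1]
  refine ⟨part1, fun H => ?_⟩
  set Fp : MvPolynomial (Fin 4) F := X 2 * X 0 ^ p + X 3 * X 1 ^ p with hFp
  have hinv : ∀ g : DihedralGroup p, α g Fp = Fp := by
    have hr : α (DihedralGroup.r 1) Fp = Fp := by
      rw [hFp]
      simp only [map_add, map_mul, map_pow, hρx, hρy, hρz, hρw]
      rw [mul_pow, mul_pow, ← C_pow, ← C_pow, hlam.pow_eq_one, inv_pow, hlam.pow_eq_one,
        inv_one, C_1, one_mul, one_mul]
    have hs : α (DihedralGroup.sr 0) Fp = Fp := by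
      rw [hFp]
      simp only [map_add, map_mul, map_pow, hσx, hσy, hσz, hσw]
      ring
    have hrk : ∀ k : ℕ, α (DihedralGroup.r 1 ^ k) Fp = Fp := by
      intro k
      induction k with
      | zero => simp
      | succ n ih => rw [pow_succ, map_mul, AlgEquiv.mul_apply, hr, ih]
    have hrall : ∀ i : ZMod p, α (DihedralGroup.r i) Fp = Fp := by
      intro i
      have h : DihedralGroup.r i = DihedralGroup.r 1 ^ i.val := by
        rw [DihedralGroup.r_one_pow]
        exact congrArg _ (ZMod.natCast_rightInverse i).symm
      rw [h]; exact hrk _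
    intro g
    cases g with
    | r i => exact hrall i
    | sr i =>
      have h : DihedralGroup.sr i = DihedralGroup.sr 0 * DihedralGroup.r i := by
        rw [DihedralGroup.sr_mul_r, zero_add]
      rw [h, map_mul, AlgEquiv.mul_apply, hrall, hs]
  have hcontr := H ![(0:F),1,1,0] ![(0:F),1,0,1] (fun f hf hd => part1 f hf hd) Fp hinv
  rw [hFp] at hcontr
  simp [zero_pow hp0.ne'] at hcontr
end

section
/- Suppose S ⊆ F[V']^G is a separating set for V'. Then S ∪ T, where T = {x_r y_r, x_r^p + y_r^p, f_i, g_i, f_{i,j}, h_j : 1 ≤ i ≤ r-1, 1 ≤ j ≤ s} and the elements of S are regarded as elements of F[V]^G via the inclusion F[V'] ⊆ F[V], is a separating set for V. -/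
open MvPolynomial

section SepExtDev
open MvPolynomial DihedralGroup


namespace SepExt

variable {F : Type*} [Field F] {σ : Type*}

theorem eval_comp (u : σ → F) (ψ : MvPolynomial σ F ≃ₐ[F] MvPolynomial σ F)
    (f : MvPolynomial σ F) :
    eval u (ψ f) = eval (fun i => eval u (ψ (X i))) f := by
  have h : (aeval u).comp ψ.toAlgHom = aeval (fun i => eval u (ψ (X i))) := by
    apply algHom_ext; intro i
    simp
  have := congrFun (congrArg (fun (g : MvPolynomial σ F →ₐ[F] F) => (g : MvPolynomial σ F → F)) h) f
  simpa using this

/-- interpolation: a polynomial vanishing on `P` and taking value 1 on `Q`. -/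
theorem interp (P Q : Finset (σ → F)) (hdisj : ∀ x ∈ P, x ∉ Q) :
    ∃ h : MvPolynomial σ F, (∀ x ∈ P, eval x h = 0) ∧ (∀ y ∈ Q, eval y h = 1) := by
  classical
  have pair : ∀ x y : σ → F, x ≠ y → ∃ h : MvPolynomial σ F, eval x h = 0 ∧ eval y h = 1 := by
    intro x y hxy
    have hex : ∃ i, x i ≠ y i := by
      by_contra hc; push_neg at hc; exact hxy (funext hc)
    obtain ⟨i, hi⟩ := hex
    have hne : y i - x i ≠ 0 := sub_ne_zero.mpr (Ne.symm hi)
    refine ⟨C (y i - x i)⁻¹ * (X i - C (x i)), ?_, ?_⟩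
    · simp
    · simp [inv_mul_cancel₀ hne]
  have vanish : ∀ (P' : Finset (σ → F)) (y : σ → F), y ∉ P' →
      ∃ h : MvPolynomial σ F, (∀ x ∈ P', eval x h = 0) ∧ eval y h = 1 := by
    intro P' y
    induction P' using Finset.induction_on with
    | empty => intro _; exact ⟨1, by simp, by simp⟩
    | @insert x P'' hxmem ih =>
      intro hy
      have hy' : y ∉ P'' := fun h => hy (Finset.mem_insert_of_mem h)
      have hxy : x ≠ y := fun h => hy (h ▸ Finset.mem_insert_self x P'')
      obtain ⟨h₁, h₁0, h₁1⟩ := ih hy'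
      obtain ⟨h₂, h₂0, h₂1⟩ := pair x y hxy
      refine ⟨h₁ * h₂, ?_, ?_⟩
      · intro z hz
        rcases Finset.mem_insert.mp hz with rfl | hz'
        · simp [h₂0]
        · simp [h₁0 z hz']
      · simp [h₁1, h₂1]
  induction Q using Finset.induction_on with
  | empty => exact ⟨0, by simp, by simp⟩
  | @insert y Q' hy ih =>
    have hd' : ∀ x ∈ P, x ∉ Q' := fun x hx h => hdisj x hx (Finset.mem_insert_of_mem h)
    obtain ⟨h₁, h₁0, h₁1⟩ := ih hd'
    have hyP : y ∉ P ∪ Q' := by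
      intro h
      rcases Finset.mem_union.mp h with h | h
      · exact hdisj y h (Finset.mem_insert_self y Q')
      · exact hy h
    obtain ⟨g, g0, g1⟩ := vanish (P ∪ Q') y hyP
    refine ⟨h₁ + C (1 - eval y h₁) * g, ?_, ?_⟩
    · intro x hx
      have : eval x g = 0 := g0 x (Finset.mem_union_left _ hx)
      simp [h₁0 x hx, this]
    · intro z hz
      rcases Finset.mem_insert.mp hz with rfl | hz'
      · simp [g1]
      · have : eval z g = 0 := g0 z (Finset.mem_union_right _ hz')
        simp [h₁1 z hz', this]

variable {G : Type*} [Group G]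

/-- `Tpt β g u` is the point obtained from `u` by the action element `g`. -/
noncomputable def Tpt (β : G →* (MvPolynomial σ F ≃ₐ[F] MvPolynomial σ F))
    (g : G) (u : σ → F) : σ → F := fun i => eval u (β g (X i))

theorem eval_Tpt (β : G →* (MvPolynomial σ F ≃ₐ[F] MvPolynomial σ F)) (g : G) (u : σ → F)
    (f : MvPolynomial σ F) : eval (Tpt β g u) f = eval u (β g f) := (eval_comp u (β g) f).symm

theorem Tpt_one (β : G →* (MvPolynomial σ F ≃ₐ[F] MvPolynomial σ F)) (u : σ → F) :
    Tpt β 1 u = u := by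
  funext i; simp [Tpt]

theorem Tpt_comp (β : G →* (MvPolynomial σ F ≃ₐ[F] MvPolynomial σ F)) (g h : G) (u : σ → F) :
    Tpt β g (Tpt β h u) = Tpt β (h * g) u := by
  funext i
  show eval (Tpt β h u) (β g (X i)) = _
  rw [eval_Tpt]
  have : β h (β g (X i)) = β (h * g) (X i) := by rw [map_mul]; rfl
  rw [this]; rfl

theorem orbit_sep [Fintype G] (β : G →* (MvPolynomial σ F ≃ₐ[F] MvPolynomial σ F))
    (u v : σ → F)
    (hinv : ∀ f : MvPolynomial σ F, (∀ g, β g f = f) → eval u f = eval v f) :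
    ∃ g : G, v = Tpt β g u := by
  classical
  by_contra hno
  push_neg at hno
  set Ou : Finset (σ → F) := Finset.univ.image (fun g => Tpt β g u) with hOu
  set Ov : Finset (σ → F) := Finset.univ.image (fun g => Tpt β g v) with hOv
  have hdisj : ∀ x ∈ Ou, x ∉ Ov := by
    intro x hx hx'
    obtain ⟨g, _, rfl⟩ := Finset.mem_image.mp hx
    obtain ⟨g', _, he⟩ := Finset.mem_image.mp hx'
    have hv : v = Tpt β (g * g'⁻¹) u := by
      have h2 := congrArg (Tpt β g'⁻¹) he
      rw [Tpt_comp, Tpt_comp, mul_inv_cancel, Tpt_one] at h2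
      exact h2
    exact hno _ hv
  obtain ⟨h, h0, h1⟩ := interp Ou Ov hdisj
  set H : MvPolynomial σ F := ∏ g : G, β g h with hH
  have hHinv : ∀ g₀, β g₀ H = H := by
    intro g₀
    rw [hH, map_prod]
    have : ∀ g : G, β g₀ (β g h) = β (g₀ * g) h := by
      intro g; rw [map_mul]; rfl
    simp_rw [this]
    exact Fintype.prod_bijective (fun x => g₀ * x) (Group.mulLeft_bijective g₀)
      (fun x => β (g₀ * x) h) (fun y => β y h) (fun x => rfl)
  have hu : eval u H = 0 := by
    rw [hH, map_prod]
    apply Finset.prod_eq_zero (Finset.mem_univ (1 : G))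
    rw [← eval_Tpt]
    exact h0 _ (Finset.mem_image.mpr ⟨1, Finset.mem_univ _, rfl⟩)
  have hv : eval v H = 1 := by
    rw [hH, map_prod]
    apply Finset.prod_eq_one
    intro g _
    rw [← eval_Tpt]
    exact h1 _ (Finset.mem_image.mpr ⟨g, Finset.mem_univ _, rfl⟩)
  have := hinv H hHinv
  rw [hu, hv] at this
  exact zero_ne_one this

theorem dihedral_gen {p : ℕ} [NeZero p] (P : DihedralGroup p → Prop) (h1 : P 1)
    (hmul : ∀ g h, P g → P h → P (g * h))
    (hr : P (r 1)) (hs : P (sr 0)) : ∀ g, P g := by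
  have hpow : ∀ k : ℕ, P ((r 1 : DihedralGroup p) ^ k) := by
    intro k; induction k with
    | zero => simpa using h1
    | succ k ih => rw [pow_succ]; exact hmul _ _ ih hr
  have hrk : ∀ k : ZMod p, P (r k) := by
    intro k
    have h : (r 1 : DihedralGroup p) ^ k.val = r k := by
      rw [r_one_pow, ZMod.natCast_val, ZMod.cast_id]
    rw [← h]; exact hpow _
  intro g
  cases g with
  | r k => exact hrk k
  | sr k =>
    have h : (sr 0 : DihedralGroup p) * r k = sr k := by
      rw [sr_mul_r, zero_add]
    rw [← h]; exact hmul _ _ hs (hrk k)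

section Roots

variable {p : ℕ}

theorem root_pow_congr {lam : F} (hlam : IsPrimitiveRoot lam p) [NeZero p] {x y : ℕ}
    (h : (x : ZMod p) = (y : ZMod p)) : lam ^ x = lam ^ y := by
  have hmod : x % p = y % p := (ZMod.natCast_eq_natCast_iff x y p).mp h
  have hx : lam ^ x = lam ^ (x % p) := by
    conv_lhs => rw [← Nat.div_add_mod x p]
    rw [pow_add, pow_mul, hlam.pow_eq_one, one_pow, one_mul]
  have hy : lam ^ y = lam ^ (y % p) := by
    conv_lhs => rw [← Nat.div_add_mod y p]
    rw [pow_add, pow_mul, hlam.pow_eq_one, one_pow, one_mul]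
  rw [hx, hy, hmod]

theorem root_pow_eq_iff {lam : F} (hlam : IsPrimitiveRoot lam p) [NeZero p] (x y : ℕ)
    (h : lam ^ x = lam ^ y) : (x : ZMod p) = (y : ZMod p) := by
  have key : ∀ a b : ℕ, b ≤ a → lam ^ a = lam ^ b → (a : ZMod p) = (b : ZMod p) := by
    intro a b hle hab
    have hl0 : lam ≠ 0 := hlam.ne_zero (NeZero.ne p)
    have h1 : lam ^ (a - b) * lam ^ b = 1 * lam ^ b := by
      rw [← pow_add, Nat.sub_add_cancel hle, hab, one_mul]
    have h2 : lam ^ (a - b) = 1 := mul_right_cancel₀ (pow_ne_zero _ hl0) h1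
    have h3 : p ∣ a - b := (hlam.pow_eq_one_iff_dvd _).mp h2
    rw [ZMod.natCast_eq_natCast_iff]
    exact ((Nat.modEq_iff_dvd' hle).mpr h3).symm
  rcases le_total y x with hle | hle
  · exact key x y hle h
  · exact (key y x hle h.symm).symm

theorem dlog {lam : F} (hlam : IsPrimitiveRoot lam p) [NeZero p] (z : F)
    (hz : z ^ p = 1) : ∃ t : ℕ, lam ^ t = z := by
  obtain ⟨i, _, hi⟩ := hlam.eq_pow_of_pow_eq_one hz
  exact ⟨i, hi⟩

/-- solve `lam ^ (M * k) = ζ` for `k`, given `ζ^p = 1` and `M` invertible mod `p`. -/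
theorem solve_exp (hp : p.Prime) {lam : F} (hlam : IsPrimitiveRoot lam p)
    (M : ℕ) (hM : (M : ZMod p) ≠ 0) (z : F) (hz : z ^ p = 1) :
    ∃ k : ℕ, lam ^ (M * k) = z := by
  haveI : NeZero p := ⟨hp.ne_zero⟩
  haveI : Fact p.Prime := ⟨hp⟩
  obtain ⟨t, ht⟩ := dlog hlam z hz
  refine ⟨((t : ZMod p) * (M : ZMod p)⁻¹).val, ?_⟩
  have hcast : ((M * ((t : ZMod p) * (M : ZMod p)⁻¹).val : ℕ) : ZMod p) = (t : ZMod p) := by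
    push_cast
    rw [ZMod.natCast_val, ZMod.cast_id]
    field_simp
  rw [root_pow_congr hlam hcast, ht]

end Roots

section Action

variable {p : ℕ} [NeZero p] {ι κ : Type*}

variable (F ι κ) in
abbrev Vr := MvPolynomial ((ι ⊕ ι) ⊕ (κ ⊕ κ)) F

theorem algE_C (e : Vr F ι κ ≃ₐ[F] Vr F ι κ) (c : F) : e (C c) = C c := by
  have := e.commutes c
  simpa [MvPolynomial.algebraMap_eq] using this

variable (β : DihedralGroup p →* (Vr F ι κ ≃ₐ[F] Vr F ι κ)) {lam : F} (w : ι → ℕ)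

section rpow
variable (hx : ∀ i : ι, β (r 1) (X (Sum.inl (Sum.inl i))) = C (lam ^ w i) * X (Sum.inl (Sum.inl i)))
  (hy : ∀ i : ι, β (r 1) (X (Sum.inl (Sum.inr i))) = C (lam⁻¹ ^ w i) * X (Sum.inl (Sum.inr i)))
  (hz : ∀ j : κ, β (r 1) (X (Sum.inr (Sum.inl j))) = X (Sum.inr (Sum.inl j)))
  (hw : ∀ j : κ, β (r 1) (X (Sum.inr (Sum.inr j))) = X (Sum.inr (Sum.inr j)))
  (hsx : ∀ i : ι, β (sr 0) (X (Sum.inl (Sum.inl i))) = X (Sum.inl (Sum.inr i)))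
  (hsy : ∀ i : ι, β (sr 0) (X (Sum.inl (Sum.inr i))) = X (Sum.inl (Sum.inl i)))
  (hsz : ∀ j : κ, β (sr 0) (X (Sum.inr (Sum.inl j))) = X (Sum.inr (Sum.inr j)))
  (hsw : ∀ j : κ, β (sr 0) (X (Sum.inr (Sum.inr j))) = X (Sum.inr (Sum.inl j)))

include hx in
theorem rk_x (k : ℕ) (i : ι) :
    β (r (k : ZMod p)) (X (Sum.inl (Sum.inl i))) = C (lam ^ (w i * k)) * X (Sum.inl (Sum.inl i)) := by
  induction k with
  | zero => rw [Nat.cast_zero, ← one_def, map_one]; simp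
  | succ k ih =>
    have hsplit : (r ((k + 1 : ℕ) : ZMod p) : DihedralGroup p) = r (k : ZMod p) * r 1 := by
      rw [r_mul_r]; push_cast; ring_nf
    rw [hsplit, map_mul]
    show β (r (k : ZMod p)) (β (r 1) _) = _
    rw [hx, map_mul, algE_C, ih, ← mul_assoc, ← map_mul]
    congr 1
    rw [← pow_add]
    congr 1
    ring

include hy in
theorem rk_y (k : ℕ) (i : ι) :
    β (r (k : ZMod p)) (X (Sum.inl (Sum.inr i))) = C (lam⁻¹ ^ (w i * k)) * X (Sum.inl (Sum.inr i)) := by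
  induction k with
  | zero => rw [Nat.cast_zero, ← one_def, map_one]; simp
  | succ k ih =>
    have hsplit : (r ((k + 1 : ℕ) : ZMod p) : DihedralGroup p) = r (k : ZMod p) * r 1 := by
      rw [r_mul_r]; push_cast; ring_nf
    rw [hsplit, map_mul]
    show β (r (k : ZMod p)) (β (r 1) _) = _
    rw [hy, map_mul, algE_C, ih, ← mul_assoc, ← map_mul]
    congr 1
    rw [← pow_add]
    congr 1
    ring

include hz in
theorem rk_z (k : ℕ) (j : κ) :
    β (r (k : ZMod p)) (X (Sum.inr (Sum.inl j))) = X (Sum.inr (Sum.inl j)) := by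
  induction k with
  | zero => rw [Nat.cast_zero, ← one_def, map_one]; simp
  | succ k ih =>
    have hsplit : (r ((k + 1 : ℕ) : ZMod p) : DihedralGroup p) = r (k : ZMod p) * r 1 := by
      rw [r_mul_r]; push_cast; ring_nf
    rw [hsplit, map_mul]
    show β (r (k : ZMod p)) (β (r 1) _) = _
    rw [hz, ih]

include hw in
theorem rk_w (k : ℕ) (j : κ) :
    β (r (k : ZMod p)) (X (Sum.inr (Sum.inr j))) = X (Sum.inr (Sum.inr j)) := by
  induction k with
  | zero => rw [Nat.cast_zero, ← one_def, map_one]; simp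
  | succ k ih =>
    have hsplit : (r ((k + 1 : ℕ) : ZMod p) : DihedralGroup p) = r (k : ZMod p) * r 1 := by
      rw [r_mul_r]; push_cast; ring_nf
    rw [hsplit, map_mul]
    show β (r (k : ZMod p)) (β (r 1) _) = _
    rw [hw, ih]

theorem srk_split (k : ℕ) : (sr (k : ZMod p) : DihedralGroup p) = sr 0 * r (k : ZMod p) := by
  rw [sr_mul_r, zero_add]

include hx hsx in
theorem srk_x (k : ℕ) (i : ι) :
    β (sr (k : ZMod p)) (X (Sum.inl (Sum.inl i))) = C (lam ^ (w i * k)) * X (Sum.inl (Sum.inr i)) := by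
  rw [srk_split, map_mul]
  show β (sr 0) (β (r (k : ZMod p)) _) = _
  rw [rk_x β w hx, map_mul, algE_C, hsx]

include hy hsy in
theorem srk_y (k : ℕ) (i : ι) :
    β (sr (k : ZMod p)) (X (Sum.inl (Sum.inr i))) = C (lam⁻¹ ^ (w i * k)) * X (Sum.inl (Sum.inl i)) := by
  rw [srk_split, map_mul]
  show β (sr 0) (β (r (k : ZMod p)) _) = _
  rw [rk_y β w hy, map_mul, algE_C, hsy]

include hz hsz in
theorem srk_z (k : ℕ) (j : κ) :
    β (sr (k : ZMod p)) (X (Sum.inr (Sum.inl j))) = X (Sum.inr (Sum.inr j)) := by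
  rw [srk_split, map_mul]
  show β (sr 0) (β (r (k : ZMod p)) _) = _
  rw [rk_z β hz, hsz]

include hw hsw in
theorem srk_w (k : ℕ) (j : κ) :
    β (sr (k : ZMod p)) (X (Sum.inr (Sum.inr j))) = X (Sum.inr (Sum.inl j)) := by
  rw [srk_split, map_mul]
  show β (sr 0) (β (r (k : ZMod p)) _) = _
  rw [rk_w β hw, hsw]

end rpow

/-- invariance under the two generators extends to the whole group -/
theorem inv_of_gen (t : Vr F ι κ) (h1 : β (r 1) t = t) (h2 : β (sr 0) t = t) :
    ∀ g, β g t = t := by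
  apply dihedral_gen (fun g => β g t = t)
  · rw [map_one]; rfl
  · intro g h hg hh
    rw [map_mul]
    show β g (β h t) = t
    rw [hh, hg]
  · exact h1
  · exact h2

end Action

/-- cancellation in a field -/
theorem cancel_fact {ζ P Q : F} (hζ0 : ζ ≠ 0) (hζ1 : ζ ≠ 1)
    (hE : P + Q = ζ * P + ζ⁻¹ * Q) : ζ * P = Q := by
  have hinv : ζ * ζ⁻¹ = 1 := mul_inv_cancel₀ hζ0
  have hfac : (ζ - 1) * (ζ * P - Q) = 0 := by linear_combination (-ζ) * hE + (-Q) * hinv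
  rcases mul_eq_zero.mp hfac with h | h
  · exact absurd (sub_eq_zero.mp h) hζ1
  · exact sub_eq_zero.mp h

end SepExt


namespace SepExt

section Key

variable {p : ℕ} (hp : p.Prime)
  {F : Type*} [Field F] [CharP F 2]
  {lam : F} (hlam : IsPrimitiveRoot lam p)
  {r' s : ℕ} (m : Fin (r' + 1) → ℕ) (hm : ∀ i, 0 < m i ∧ m i ≤ (p - 1) / 2)
  (n : Fin r' → ℕ)
  (hn : ∀ i : Fin r', 1 ≤ n i ∧ n i ≤ p - 1 ∧
      ((n i * m i.castSucc : ℕ) : ZMod p) = ((m (Fin.last r') : ℕ) : ZMod p))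
  (α : DihedralGroup p →* (Vr F (Fin (r' + 1)) (Fin s) ≃ₐ[F] Vr F (Fin (r' + 1)) (Fin s)))
  (hax : ∀ i, α (r 1) (X (Sum.inl (Sum.inl i))) = C (lam ^ m i) * X (Sum.inl (Sum.inl i)))
  (hay : ∀ i, α (r 1) (X (Sum.inl (Sum.inr i))) = C (lam⁻¹ ^ m i) * X (Sum.inl (Sum.inr i)))
  (haz : ∀ j : Fin s, α (r 1) (X (Sum.inr (Sum.inl j))) = X (Sum.inr (Sum.inl j)))
  (haw : ∀ j : Fin s, α (r 1) (X (Sum.inr (Sum.inr j))) = X (Sum.inr (Sum.inr j)))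
  (hsx : ∀ i, α (sr 0) (X (Sum.inl (Sum.inl i))) = X (Sum.inl (Sum.inr i)))
  (hsy : ∀ i, α (sr 0) (X (Sum.inl (Sum.inr i))) = X (Sum.inl (Sum.inl i)))
  (hsz : ∀ j : Fin s, α (sr 0) (X (Sum.inr (Sum.inl j))) = X (Sum.inr (Sum.inr j)))
  (hsw : ∀ j : Fin s, α (sr 0) (X (Sum.inr (Sum.inr j))) = X (Sum.inr (Sum.inl j)))
  (u v : ((Fin (r' + 1) ⊕ Fin (r' + 1)) ⊕ (Fin s ⊕ Fin s)) → F)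
  (hEx : ∀ i : Fin r', u (Sum.inl (Sum.inl i.castSucc)) = v (Sum.inl (Sum.inl i.castSucc)))
  (hEy : ∀ i : Fin r', u (Sum.inl (Sum.inr i.castSucc)) = v (Sum.inl (Sum.inr i.castSucc)))
  (hEz : ∀ j : Fin s, u (Sum.inr (Sum.inl j)) = v (Sum.inr (Sum.inl j)))
  (hEw : ∀ j : Fin s, u (Sum.inr (Sum.inr j)) = v (Sum.inr (Sum.inr j)))

include hp hm in
theorem M_ne_zero : ((m (Fin.last r') : ℕ) : ZMod p) ≠ 0 := by
  intro h0
  have hdvd := (ZMod.natCast_eq_zero_iff _ _).mp h0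
  have h1 := Nat.le_of_dvd (hm (Fin.last r')).1 hdvd
  have h2 := (hm (Fin.last r')).2
  have h3 := hp.two_le
  omega

include hp hlam hm hax hay haz haw hEx hEy hEz hEw in
theorem mk_r (γ' : F) (hγp : γ' ^ p = 1)
    (hzx : ∀ i : Fin r', u (Sum.inl (Sum.inl i.castSucc)) = 0)
    (hzy : ∀ i : Fin r', u (Sum.inl (Sum.inr i.castSucc)) = 0)
    (hA' : v (Sum.inl (Sum.inl (Fin.last r'))) = γ' * u (Sum.inl (Sum.inl (Fin.last r'))))
    (hB' : γ' * v (Sum.inl (Sum.inr (Fin.last r'))) = u (Sum.inl (Sum.inr (Fin.last r')))) :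
    ∃ h : DihedralGroup p, ∀ idx, v idx = eval u (α h (X idx)) := by
  haveI : NeZero p := ⟨hp.ne_zero⟩
  have hγ0 : γ' ≠ 0 := by
    intro h; rw [h, zero_pow hp.ne_zero] at hγp; exact zero_ne_one hγp
  obtain ⟨k, hk⟩ := solve_exp hp hlam (m (Fin.last r')) (M_ne_zero hp m hm) γ' hγp
  refine ⟨r (k : ZMod p), fun idx => ?_⟩
  rcases idx with (i | i) | (j | j)
  · rw [rk_x α m hax k i, eval_mul, eval_C, eval_X]
    refine Fin.lastCases ?_ (fun i' => ?_) i
    · rw [hk, hA']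
    · rw [hzx i', ← hEx i', hzx i', mul_zero]
  · rw [rk_y α m hay k i, eval_mul, eval_C, eval_X]
    refine Fin.lastCases ?_ (fun i' => ?_) i
    · have hinv : lam⁻¹ ^ (m (Fin.last r') * k) = γ'⁻¹ := by
        rw [inv_pow, hk]
      rw [hinv]
      field_simp
      linear_combination hB'
    · rw [hzy i', ← hEy i', hzy i', mul_zero]
  · rw [rk_z α haz k j, eval_X]
    exact (hEz j).symm
  · rw [rk_w α haw k j, eval_X]
    exact (hEw j).symm

include hp hlam hm hn hax hay haz haw hsx hsy hsz hsw hEx hEy hEz hEw in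
theorem mk_sr (γ : F) (hγp : γ ^ p = 1)
    (hc : ∀ j : Fin s, u (Sum.inr (Sum.inl j)) = u (Sum.inr (Sum.inr j)))
    (hBA : γ * u (Sum.inl (Sum.inl (Fin.last r'))) = v (Sum.inl (Sum.inr (Fin.last r'))))
    (hAB : γ * v (Sum.inl (Sum.inl (Fin.last r'))) = u (Sum.inl (Sum.inr (Fin.last r'))))
    (hab : ∀ i : Fin r',
      (u (Sum.inl (Sum.inl i.castSucc)) = 0 ∧ u (Sum.inl (Sum.inr i.castSucc)) = 0) ∨
      (u (Sum.inl (Sum.inl i.castSucc)) ≠ 0 ∧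
        u (Sum.inl (Sum.inr i.castSucc)) ^ p = u (Sum.inl (Sum.inl i.castSucc)) ^ p ∧
        u (Sum.inl (Sum.inr i.castSucc)) ^ n i = γ * u (Sum.inl (Sum.inl i.castSucc)) ^ n i)) :
    ∃ h : DihedralGroup p, ∀ idx, v idx = eval u (α h (X idx)) := by
  haveI : NeZero p := ⟨hp.ne_zero⟩
  haveI : Fact p.Prime := ⟨hp⟩
  have hγ0 : γ ≠ 0 := by
    intro h; rw [h, zero_pow hp.ne_zero] at hγp; exact zero_ne_one hγp
  have hMz := M_ne_zero hp m hm
  obtain ⟨t', ht'⟩ := dlog hlam γ hγp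
  set kz : ZMod p := (-(t' : ZMod p)) * ((m (Fin.last r') : ℕ) : ZMod p)⁻¹ with hkz
  set k : ℕ := kz.val with hkdef
  have hkc : ((k : ℕ) : ZMod p) = kz := by rw [hkdef, ZMod.natCast_val, ZMod.cast_id]
  have hcast : ((m (Fin.last r') * k : ℕ) : ZMod p) = -(t' : ZMod p) := by
    push_cast
    rw [hkc, hkz]
    field_simp
  have hMk1 : lam ^ (m (Fin.last r') * k) * γ = 1 := by
    rw [← ht', ← pow_add]
    have h0 : ((m (Fin.last r') * k + t' : ℕ) : ZMod p) = ((0 : ℕ) : ZMod p) := by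
      push_cast
      push_cast at hcast
      rw [hcast]
      ring
    rw [root_pow_congr hlam h0, pow_zero]
  have hMkγ : lam ^ (m (Fin.last r') * k) = γ⁻¹ := eq_inv_of_mul_eq_one_left hMk1
  refine ⟨sr (k : ZMod p), fun idx => ?_⟩
  rcases idx with (i | i) | (j | j)
  · rw [srk_x α m hax hsx k i, eval_mul, eval_C, eval_X]
    refine Fin.lastCases ?_ (fun i' => ?_) i
    · rw [hMkγ]
      field_simp
      linear_combination hAB
    · rcases hab i' with ⟨hx0, hy0⟩ | ⟨hxne, hpp, hnn⟩
      · rw [← hEx i', hx0, hy0, mul_zero]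
      · -- nonzero case
        set x := u (Sum.inl (Sum.inl i'.castSucc)) with hxdef
        set y := u (Sum.inl (Sum.inr i'.castSucc)) with hydef
        have hzp : (y * x⁻¹) ^ p = 1 := by
          rw [mul_pow, inv_pow, hpp, mul_inv_cancel₀ (pow_ne_zero _ hxne)]
        obtain ⟨si, hsi⟩ := dlog hlam _ hzp
        have hyx : y = lam ^ si * x := by
          rw [hsi]
          field_simp
        have hlns : lam ^ (si * n i') = lam ^ t' := by
          have h1 : (lam ^ si) ^ n i' * x ^ n i' = γ * x ^ n i' := by
            rw [← mul_pow, ← hyx, hnn]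
          have h2 : (lam ^ si) ^ n i' = γ := mul_right_cancel₀ (pow_ne_zero _ hxne) h1
          rw [← pow_mul] at h2
          rw [h2, ht']
        have hns : ((si * n i' : ℕ) : ZMod p) = ((t' : ℕ) : ZMod p) :=
          root_pow_eq_iff hlam _ _ hlns
        have hnz : ((n i' : ℕ) : ZMod p) ≠ 0 := by
          intro h0
          have := (hn i').2.2
          rw [Nat.cast_mul, h0, zero_mul] at this
          exact hMz this.symm
        have hmk : ((m i'.castSucc * k + si : ℕ) : ZMod p) = ((0 : ℕ) : ZMod p) := by
          have hnm := (hn i').2.2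
          push_cast at hnm hns hcast ⊢
          have hkey : ((n i' : ℕ) : ZMod p) * (((m i'.castSucc : ℕ) : ZMod p) * ((k : ℕ) : ZMod p)
              + ((si : ℕ) : ZMod p)) = 0 := by
            have : ((n i' : ℕ) : ZMod p) * (((m i'.castSucc : ℕ) : ZMod p) * ((k : ℕ) : ZMod p))
                = ((m (Fin.last r') : ℕ) : ZMod p) * ((k : ℕ) : ZMod p) := by
              rw [← mul_assoc, hnm]
            rw [mul_add, this, hcast]
            calc -(t' : ZMod p) + ((n i' : ℕ) : ZMod p) * ((si : ℕ) : ZMod p)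
                = -(t' : ZMod p) + (t' : ZMod p) := by rw [mul_comm, hns]
              _ = 0 := by ring
          rcases mul_eq_zero.mp hkey with h | h
          · exact absurd h hnz
          · exact h
        have hone : lam ^ (m i'.castSucc * k) * lam ^ si = 1 := by
          rw [← pow_add, root_pow_congr hlam hmk, pow_zero]
        rw [← hEx i', hyx, ← mul_assoc, hone, one_mul]
  · rw [srk_y α m hay hsy k i, eval_mul, eval_C, eval_X]
    refine Fin.lastCases ?_ (fun i' => ?_) i
    · rw [inv_pow, hMkγ, inv_inv, hBA]
    · rcases hab i' with ⟨hx0, hy0⟩ | ⟨hxne, hpp, hnn⟩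
      · rw [← hEy i', hy0, hx0, mul_zero]
      · set x := u (Sum.inl (Sum.inl i'.castSucc)) with hxdef
        set y := u (Sum.inl (Sum.inr i'.castSucc)) with hydef
        have hzp : (y * x⁻¹) ^ p = 1 := by
          rw [mul_pow, inv_pow, hpp, mul_inv_cancel₀ (pow_ne_zero _ hxne)]
        obtain ⟨si, hsi⟩ := dlog hlam _ hzp
        have hyx : y = lam ^ si * x := by
          rw [hsi]; field_simp
        have hlns : lam ^ (si * n i') = lam ^ t' := by
          have h1 : (lam ^ si) ^ n i' * x ^ n i' = γ * x ^ n i' := by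
            rw [← mul_pow, ← hyx, hnn]
          have h2 : (lam ^ si) ^ n i' = γ := mul_right_cancel₀ (pow_ne_zero _ hxne) h1
          rw [← pow_mul] at h2
          rw [h2, ht']
        have hns : ((si * n i' : ℕ) : ZMod p) = ((t' : ℕ) : ZMod p) :=
          root_pow_eq_iff hlam _ _ hlns
        have hnz : ((n i' : ℕ) : ZMod p) ≠ 0 := by
          intro h0
          have := (hn i').2.2
          rw [Nat.cast_mul, h0, zero_mul] at this
          exact hMz this.symm
        have hmk : ((m i'.castSucc * k + si : ℕ) : ZMod p) = ((0 : ℕ) : ZMod p) := by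
          have hnm := (hn i').2.2
          push_cast at hnm hns hcast ⊢
          have hkey : ((n i' : ℕ) : ZMod p) * (((m i'.castSucc : ℕ) : ZMod p) * ((k : ℕ) : ZMod p)
              + ((si : ℕ) : ZMod p)) = 0 := by
            have : ((n i' : ℕ) : ZMod p) * (((m i'.castSucc : ℕ) : ZMod p) * ((k : ℕ) : ZMod p))
                = ((m (Fin.last r') : ℕ) : ZMod p) * ((k : ℕ) : ZMod p) := by
              rw [← mul_assoc, hnm]
            rw [mul_add, this, hcast]
            calc -(t' : ZMod p) + ((n i' : ℕ) : ZMod p) * ((si : ℕ) : ZMod p)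
                = -(t' : ZMod p) + (t' : ZMod p) := by rw [mul_comm, hns]
              _ = 0 := by ring
          rcases mul_eq_zero.mp hkey with h | h
          · exact absurd h hnz
          · exact h
        have hone : lam ^ (m i'.castSucc * k) * lam ^ si = 1 := by
          rw [← pow_add, root_pow_congr hlam hmk, pow_zero]
        -- goal : v (yc i') = lam⁻¹ ^ (m * k) * x ; v yc = y = lam^si x ; lam^si = (lam^(mk))⁻¹
        rw [← hEy i', ← hydef, hyx, inv_pow]
        congr 1
        have hl0 : lam ^ (m i'.castSucc * k) ≠ 0 :=
          pow_ne_zero _ (hlam.ne_zero (NeZero.ne p))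
        field_simp
        linear_combination hone
  · rw [srk_z α haz hsz k j, eval_X]
    rw [← hEz j, hc j]
  · rw [srk_w α haw hsw k j, eval_X]
    rw [← hEw j, (hc j).symm]
end Key

end SepExt


namespace SepExt

section Key2

variable {p : ℕ} (hp : p.Prime)
  {F : Type*} [Field F] [CharP F 2]
  {lam : F} (hlam : IsPrimitiveRoot lam p)
  {r' s : ℕ} (m : Fin (r' + 1) → ℕ) (hm : ∀ i, 0 < m i ∧ m i ≤ (p - 1) / 2)
  (n : Fin r' → ℕ)
  (hn : ∀ i : Fin r', 1 ≤ n i ∧ n i ≤ p - 1 ∧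
      ((n i * m i.castSucc : ℕ) : ZMod p) = ((m (Fin.last r') : ℕ) : ZMod p))
  (α : DihedralGroup p →* (Vr F (Fin (r' + 1)) (Fin s) ≃ₐ[F] Vr F (Fin (r' + 1)) (Fin s)))
  (hax : ∀ i, α (r 1) (X (Sum.inl (Sum.inl i))) = C (lam ^ m i) * X (Sum.inl (Sum.inl i)))
  (hay : ∀ i, α (r 1) (X (Sum.inl (Sum.inr i))) = C (lam⁻¹ ^ m i) * X (Sum.inl (Sum.inr i)))
  (haz : ∀ j : Fin s, α (r 1) (X (Sum.inr (Sum.inl j))) = X (Sum.inr (Sum.inl j)))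
  (haw : ∀ j : Fin s, α (r 1) (X (Sum.inr (Sum.inr j))) = X (Sum.inr (Sum.inr j)))
  (hsx : ∀ i, α (sr 0) (X (Sum.inl (Sum.inl i))) = X (Sum.inl (Sum.inr i)))
  (hsy : ∀ i, α (sr 0) (X (Sum.inl (Sum.inr i))) = X (Sum.inl (Sum.inl i)))
  (hsz : ∀ j : Fin s, α (sr 0) (X (Sum.inr (Sum.inl j))) = X (Sum.inr (Sum.inr j)))
  (hsw : ∀ j : Fin s, α (sr 0) (X (Sum.inr (Sum.inr j))) = X (Sum.inr (Sum.inl j)))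
  (u v : ((Fin (r' + 1) ⊕ Fin (r' + 1)) ⊕ (Fin s ⊕ Fin s)) → F)
  (hEx : ∀ i : Fin r', u (Sum.inl (Sum.inl i.castSucc)) = v (Sum.inl (Sum.inl i.castSucc)))
  (hEy : ∀ i : Fin r', u (Sum.inl (Sum.inr i.castSucc)) = v (Sum.inl (Sum.inr i.castSucc)))
  (hEz : ∀ j : Fin s, u (Sum.inr (Sum.inl j)) = v (Sum.inr (Sum.inl j)))
  (hEw : ∀ j : Fin s, u (Sum.inr (Sum.inr j)) = v (Sum.inr (Sum.inr j)))

set_option maxHeartbeats 1000000 in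
include hp hlam hm hn hax hay haz haw hsx hsy hsz hsw hEx hEy hEz hEw in
theorem key_lemma
    (hA : u (Sum.inl (Sum.inl (Fin.last r'))) ≠ 0)
    (e1 : u (Sum.inl (Sum.inl (Fin.last r'))) * u (Sum.inl (Sum.inr (Fin.last r'))) =
          v (Sum.inl (Sum.inl (Fin.last r'))) * v (Sum.inl (Sum.inr (Fin.last r'))))
    (e2 : u (Sum.inl (Sum.inl (Fin.last r'))) ^ p + u (Sum.inl (Sum.inr (Fin.last r'))) ^ p =
          v (Sum.inl (Sum.inl (Fin.last r'))) ^ p + v (Sum.inl (Sum.inr (Fin.last r'))) ^ p)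
    (e3 : ∀ i : Fin r',
      u (Sum.inl (Sum.inl (Fin.last r'))) * u (Sum.inl (Sum.inr i.castSucc)) ^ n i +
      u (Sum.inl (Sum.inr (Fin.last r'))) * u (Sum.inl (Sum.inl i.castSucc)) ^ n i =
      v (Sum.inl (Sum.inl (Fin.last r'))) * u (Sum.inl (Sum.inr i.castSucc)) ^ n i +
      v (Sum.inl (Sum.inr (Fin.last r'))) * u (Sum.inl (Sum.inl i.castSucc)) ^ n i)
    (e4 : ∀ i : Fin r',
      u (Sum.inl (Sum.inl (Fin.last r'))) * u (Sum.inl (Sum.inl i.castSucc)) ^ (p - n i) +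
      u (Sum.inl (Sum.inr (Fin.last r'))) * u (Sum.inl (Sum.inr i.castSucc)) ^ (p - n i) =
      v (Sum.inl (Sum.inl (Fin.last r'))) * u (Sum.inl (Sum.inl i.castSucc)) ^ (p - n i) +
      v (Sum.inl (Sum.inr (Fin.last r'))) * u (Sum.inl (Sum.inr i.castSucc)) ^ (p - n i))
    (e5 : ∀ (i : Fin r') (j : Fin s),
      u (Sum.inl (Sum.inl (Fin.last r'))) * u (Sum.inl (Sum.inr i.castSucc)) ^ n i *
        u (Sum.inr (Sum.inl j)) +
      u (Sum.inl (Sum.inr (Fin.last r'))) * u (Sum.inl (Sum.inl i.castSucc)) ^ n i *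
        u (Sum.inr (Sum.inr j)) =
      v (Sum.inl (Sum.inl (Fin.last r'))) * u (Sum.inl (Sum.inr i.castSucc)) ^ n i *
        u (Sum.inr (Sum.inl j)) +
      v (Sum.inl (Sum.inr (Fin.last r'))) * u (Sum.inl (Sum.inl i.castSucc)) ^ n i *
        u (Sum.inr (Sum.inr j)))
    (e6 : ∀ j : Fin s,
      u (Sum.inl (Sum.inl (Fin.last r'))) ^ p * u (Sum.inr (Sum.inl j)) +
      u (Sum.inl (Sum.inr (Fin.last r'))) ^ p * u (Sum.inr (Sum.inr j)) =
      v (Sum.inl (Sum.inl (Fin.last r'))) ^ p * u (Sum.inr (Sum.inl j)) +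
      v (Sum.inl (Sum.inr (Fin.last r'))) ^ p * u (Sum.inr (Sum.inr j))) :
    ∃ h : DihedralGroup p, ∀ idx, v idx = eval u (α h (X idx)) := by
  haveI : NeZero p := ⟨hp.ne_zero⟩
  have h2F : (2 : F) = 0 := by exact_mod_cast CharP.cast_eq_zero F 2
  set A := u (Sum.inl (Sum.inl (Fin.last r'))) with hAdef
  set B := u (Sum.inl (Sum.inr (Fin.last r'))) with hBdef
  set A₂ := v (Sum.inl (Sum.inl (Fin.last r'))) with hA2def
  set B₂ := v (Sum.inl (Sum.inr (Fin.last r'))) with hB2def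
  set a : Fin r' → F := fun i => u (Sum.inl (Sum.inl i.castSucc)) with hadef
  set b : Fin r' → F := fun i => u (Sum.inl (Sum.inr i.castSucc)) with hbdef
  set c : Fin s → F := fun j => u (Sum.inr (Sum.inl j)) with hcdef
  set d : Fin s → F := fun j => u (Sum.inr (Sum.inr j)) with hddef
  have hfa : ∀ i : Fin r', u (Sum.inl (Sum.inl i.castSucc)) = a i := fun _ => rfl
  have hfb : ∀ i : Fin r', u (Sum.inl (Sum.inr i.castSucc)) = b i := fun _ => rfl
  have hfc : ∀ j : Fin s, u (Sum.inr (Sum.inl j)) = c j := fun _ => rfl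
  have hfd : ∀ j : Fin s, u (Sum.inr (Sum.inr j)) = d j := fun _ => rfl
  simp only [hfa, hfb, hfc, hfd] at e3 e4 e5 e6
  have addz : ∀ x y : F, x + y = 0 → x = y := by
    intro x y h; linear_combination h - y * h2F
  have hnne : ∀ i, n i ≠ 0 := fun i => by have := (hn i).1; omega
  have hpnne : ∀ i, p - n i ≠ 0 := fun i => by
    have := (hn i).2.1; have := hp.two_le; omega
  have hq : ∀ i, n i + (p - n i) = p := fun i => by
    have := (hn i).2.1; have := hp.two_le; omega
  have h1p : A ^ p * B ^ p = A₂ ^ p * B₂ ^ p := by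
    rw [← mul_pow, ← mul_pow, e1]
  have q1 : (A₂ ^ p + A ^ p) * (A₂ ^ p + B ^ p) = 0 := by
    linear_combination A₂ ^ p * e2 + h1p + (A₂ ^ p * A₂ ^ p + A₂ ^ p * B₂ ^ p) * h2F
  have q2 : (B₂ ^ p + A ^ p) * (B₂ ^ p + B ^ p) = 0 := by
    linear_combination B₂ ^ p * e2 + h1p + (B₂ ^ p * B₂ ^ p + B₂ ^ p * A₂ ^ p) * h2F
  have main : (A₂ ^ p = A ^ p ∧ B₂ ^ p = B ^ p) ∨ (A₂ ^ p = B ^ p ∧ B₂ ^ p = A ^ p) := by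
    have hApne : A ^ p ≠ 0 := pow_ne_zero _ hA
    rcases mul_eq_zero.mp q1 with hq1 | hq1 <;> rcases mul_eq_zero.mp q2 with hq2 | hq2
    · have h1 : A₂ ^ p = A ^ p := addz _ _ hq1
      have h2 : B₂ ^ p = A ^ p := addz _ _ hq2
      have h3 : B ^ p = A ^ p := by
        apply mul_left_cancel₀ hApne
        rw [h1p, h1, h2]
      exact Or.inl ⟨h1, h2.trans h3.symm⟩
    · exact Or.inl ⟨addz _ _ hq1, addz _ _ hq2⟩
    · exact Or.inr ⟨addz _ _ hq1, addz _ _ hq2⟩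
    · have h1 : A₂ ^ p = B ^ p := addz _ _ hq1
      have h2 : B₂ ^ p = B ^ p := addz _ _ hq2
      by_cases hBp : B ^ p = 0
      · exfalso
        have hA20 : A₂ = 0 := pow_eq_zero_iff hp.ne_zero |>.mp (h1.trans hBp)
        have hB20 : B₂ = 0 := pow_eq_zero_iff hp.ne_zero |>.mp (h2.trans hBp)
        have hApz : A ^ p = 0 := by
          have he := e2
          rw [hA20, hB20, zero_pow hp.ne_zero] at he
          have hBz : B = 0 := pow_eq_zero_iff hp.ne_zero |>.mp hBp
          rw [hBz, zero_pow hp.ne_zero] at he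
          simpa using he
        exact hA (pow_eq_zero_iff hp.ne_zero |>.mp hApz)
      · have h3 : A ^ p = B ^ p := by
          apply mul_right_cancel₀ hBp
          rw [h1p, h1, h2]
        exact Or.inr ⟨h1, h2.trans h3.symm⟩
  have mk_one : A₂ = A → B₂ = B → ∃ h : DihedralGroup p, ∀ idx, v idx = eval u (α h (X idx)) := by
    intro h1 h2
    refine ⟨1, fun idx => ?_⟩
    rw [map_one]
    have hone : ((1 : Vr F (Fin (r' + 1)) (Fin s) ≃ₐ[F] Vr F (Fin (r' + 1)) (Fin s))) (X idx)
        = X idx := rfl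
    rw [hone, eval_X]
    rcases idx with (i | i) | (j | j)
    · refine Fin.lastCases ?_ (fun i' => ?_) i
      · exact h1
      · exact (hEx i').symm
    · refine Fin.lastCases ?_ (fun i' => ?_) i
      · exact h2
      · exact (hEy i').symm
    · exact (hEz j).symm
    · exact (hEw j).symm
  rcases main with ⟨ha1, hb1⟩ | ⟨ha1, hb1⟩
  · -- aligned case
    set ζ := A₂ * A⁻¹ with hζdef
    have hA2 : A₂ = ζ * A := by
      rw [hζdef]; field_simp
    have hζp : ζ ^ p = 1 := by
      rw [hζdef, mul_pow, inv_pow, ha1]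
      exact mul_inv_cancel₀ (pow_ne_zero _ hA)
    have hζ0 : ζ ≠ 0 := by
      intro h; rw [h, zero_pow hp.ne_zero] at hζp; exact zero_ne_one hζp
    have hB2 : B₂ = ζ⁻¹ * B := by
      have h1 : A * B = A * (ζ * B₂) := by rw [e1, hA2]; ring
      have h2 : B = ζ * B₂ := mul_left_cancel₀ hA h1
      rw [h2]; field_simp
    by_cases hζ1 : ζ = 1
    · exact mk_one (by rw [hA2, hζ1, one_mul]) (by rw [hB2, hζ1, inv_one, one_mul])
    · have R3 : ∀ i, ζ * (A * b i ^ n i) = B * a i ^ n i := by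
        intro i
        refine cancel_fact hζ0 hζ1 ?_
        have h := e3 i
        rw [hA2, hB2] at h
        linear_combination h
      have R4 : ∀ i, ζ * (A * a i ^ (p - n i)) = B * b i ^ (p - n i) := by
        intro i
        refine cancel_fact hζ0 hζ1 ?_
        have h := e4 i
        rw [hA2, hB2] at h
        linear_combination h
      have R5 : ∀ (i : Fin r') (j : Fin s),
          ζ * (A * (b i ^ n i * c j)) = B * (a i ^ n i * d j) := by
        intro i j
        refine cancel_fact hζ0 hζ1 ?_
        have h := e5 i j
        rw [hA2, hB2] at h
        linear_combination h
      have bz_of_az : ∀ i, a i = 0 → b i = 0 := by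
        intro i h0
        have h := R3 i
        rw [h0, zero_pow (hnne i), mul_zero] at h
        have h2 : A * b i ^ n i = 0 := (mul_eq_zero.mp h).resolve_left hζ0
        have h3 : b i ^ n i = 0 := (mul_eq_zero.mp h2).resolve_left hA
        exact pow_eq_zero_iff (hnne i) |>.mp h3
      by_cases hzero : ∀ i : Fin r', a i = 0 ∧ b i = 0
      · exact mk_r hp hlam m hm α hax hay haz haw u v hEx hEy hEz hEw ζ hζp
          (fun i => (hzero i).1) (fun i => (hzero i).2) hA2
          (by show ζ * B₂ = B; rw [hB2]; field_simp)
      · push_neg at hzero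
        obtain ⟨i₀, hi₀⟩ := hzero
        have hB0 : B ≠ 0 := by
          intro hB0
          have hbz : b i₀ = 0 := by
            have h := R3 i₀
            rw [hB0, zero_mul] at h
            have h2 : A * b i₀ ^ n i₀ = 0 := (mul_eq_zero.mp h).resolve_left hζ0
            have h3 : b i₀ ^ n i₀ = 0 := (mul_eq_zero.mp h2).resolve_left hA
            exact pow_eq_zero_iff (hnne i₀) |>.mp h3
          have haz' : a i₀ = 0 := by
            have h := R4 i₀
            rw [hB0, zero_mul] at h
            have h2 : A * a i₀ ^ (p - n i₀) = 0 := (mul_eq_zero.mp h).resolve_left hζ0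
            have h3 : a i₀ ^ (p - n i₀) = 0 := (mul_eq_zero.mp h2).resolve_left hA
            exact pow_eq_zero_iff (hpnne i₀) |>.mp h3
          exact hi₀ haz' hbz
        have ha₀ : a i₀ ≠ 0 := by
          intro h0
          exact hi₀ h0 (bz_of_az i₀ h0)
        set γ := ζ⁻¹ * B * A⁻¹ with hγdef
        have hab : ∀ i, (a i = 0 ∧ b i = 0) ∨
            (a i ≠ 0 ∧ b i ^ p = a i ^ p ∧ b i ^ n i = γ * a i ^ n i) := by
          intro i
          by_cases h0 : a i = 0
          · exact Or.inl ⟨h0, bz_of_az i h0⟩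
          · refine Or.inr ⟨h0, ?_, ?_⟩
            · have h1 : ζ * A * (b i ^ n i * b i ^ (p - n i)) =
                  B * a i ^ n i * b i ^ (p - n i) := by
                linear_combination (b i ^ (p - n i)) * R3 i
              have h2 : ζ * A * (a i ^ n i * a i ^ (p - n i)) =
                  B * a i ^ n i * b i ^ (p - n i) := by
                linear_combination (a i ^ n i) * R4 i
              have h4 : b i ^ n i * b i ^ (p - n i) = a i ^ n i * a i ^ (p - n i) :=
                mul_left_cancel₀ (mul_ne_zero hζ0 hA) (h1.trans h2.symm)
              rwa [← pow_add, ← pow_add, hq i] at h4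
            · have h := R3 i
              rw [hγdef]
              field_simp
              linear_combination h
        have hγp : γ ^ p = 1 := by
          obtain ⟨-, hpp, hnn⟩ := (hab i₀).resolve_left (fun hc => ha₀ hc.1)
          have h1 : γ ^ p * (a i₀ ^ n i₀) ^ p = 1 * (a i₀ ^ n i₀) ^ p := by
            calc γ ^ p * (a i₀ ^ n i₀) ^ p = (γ * a i₀ ^ n i₀) ^ p := (mul_pow _ _ _).symm
              _ = (b i₀ ^ n i₀) ^ p := by rw [← hnn]
              _ = (b i₀ ^ p) ^ n i₀ := by rw [← pow_mul, ← pow_mul, mul_comm]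
              _ = (a i₀ ^ p) ^ n i₀ := by rw [hpp]
              _ = 1 * (a i₀ ^ n i₀) ^ p := by rw [← pow_mul, ← pow_mul, mul_comm, one_mul]
          exact mul_right_cancel₀ (pow_ne_zero _ (pow_ne_zero _ ha₀)) h1
        have hc : ∀ j, c j = d j := by
          intro j
          have h5 := R5 i₀ j
          have h3 := R3 i₀
          have h7 : (B * a i₀ ^ n i₀) * c j = (B * a i₀ ^ n i₀) * d j := by
            linear_combination h5 - (c j) * h3
          exact mul_left_cancel₀ (mul_ne_zero hB0 (pow_ne_zero _ ha₀)) h7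
        exact mk_sr hp hlam m hm n hn α hax hay haz haw hsx hsy hsz hsw u v hEx hEy hEz hEw
          γ hγp hc
          (by show γ * A = B₂; rw [hB2, hγdef]; field_simp; try ring)
          (by show γ * A₂ = B; rw [hA2, hγdef]; field_simp; try ring)
          hab
  · -- swapped case
    set ξ := B₂ * A⁻¹ with hξdef
    have hB2 : B₂ = ξ * A := by rw [hξdef]; field_simp
    have hξp : ξ ^ p = 1 := by
      rw [hξdef, mul_pow, inv_pow, hb1]
      exact mul_inv_cancel₀ (pow_ne_zero _ hA)
    have hξ0 : ξ ≠ 0 := by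
      intro h; rw [h, zero_pow hp.ne_zero] at hξp; exact zero_ne_one hξp
    have hinvξ : ξ * ξ⁻¹ = 1 := mul_inv_cancel₀ hξ0
    have hA2 : A₂ = ξ⁻¹ * B := by
      have h1 : A * B = A * (ξ * A₂) := by rw [e1, hB2]; ring
      have h2 : B = ξ * A₂ := mul_left_cancel₀ hA h1
      rw [h2]; field_simp
    by_cases hD : A + ξ⁻¹ * B = 0
    · apply mk_one
      · rw [hA2]
        have h1 : ξ⁻¹ * B = -A := by linear_combination hD
        rw [h1, CharTwo.neg_eq]
      · rw [hB2]
        have h1 : ξ * A = -B := by linear_combination ξ * hD - B * hinvξ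
        rw [h1, CharTwo.neg_eq]
    · have S3 : ∀ i, b i ^ n i = ξ * a i ^ n i := by
        intro i
        have h := e3 i
        rw [hA2, hB2] at h
        have hfac : (b i ^ n i - ξ * a i ^ n i) * (A + ξ⁻¹ * B) = 0 := by
          linear_combination h + (ξ⁻¹ * B * b i ^ n i - B * a i ^ n i) * h2F
            - (B * a i ^ n i) * hinvξ
        have := (mul_eq_zero.mp hfac).resolve_right hD
        exact sub_eq_zero.mp this
      have S4 : ∀ i, a i ^ (p - n i) = ξ * b i ^ (p - n i) := by
        intro i
        have h := e4 i
        rw [hA2, hB2] at h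
        have hfac : (a i ^ (p - n i) - ξ * b i ^ (p - n i)) * (A + ξ⁻¹ * B) = 0 := by
          linear_combination h + (ξ⁻¹ * B * a i ^ (p - n i) - B * b i ^ (p - n i)) * h2F
            - (B * b i ^ (p - n i)) * hinvξ
        have := (mul_eq_zero.mp hfac).resolve_right hD
        exact sub_eq_zero.mp this
      have S5 : ∀ (i : Fin r') (j : Fin s), b i ^ n i * c j = ξ * (a i ^ n i * d j) := by
        intro i j
        have h := e5 i j
        rw [hA2, hB2] at h
        have hfac : (b i ^ n i * c j - ξ * (a i ^ n i * d j)) * (A + ξ⁻¹ * B) = 0 := by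
          linear_combination h + (ξ⁻¹ * B * b i ^ n i * c j - B * a i ^ n i * d j) * h2F
            - (B * a i ^ n i * d j) * hinvξ
        have := (mul_eq_zero.mp hfac).resolve_right hD
        exact sub_eq_zero.mp this
      have bz_of_az : ∀ i, a i = 0 → b i = 0 := by
        intro i h0
        have h := S3 i
        rw [h0, zero_pow (hnne i), mul_zero] at h
        exact pow_eq_zero_iff (hnne i) |>.mp h
      have hab : ∀ i, (a i = 0 ∧ b i = 0) ∨
          (a i ≠ 0 ∧ b i ^ p = a i ^ p ∧ b i ^ n i = ξ * a i ^ n i) := by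
        intro i
        by_cases h0 : a i = 0
        · exact Or.inl ⟨h0, bz_of_az i h0⟩
        · refine Or.inr ⟨h0, ?_, S3 i⟩
          have h3 : b i ^ n i * b i ^ (p - n i) = a i ^ n i * a i ^ (p - n i) := by
            linear_combination (b i ^ (p - n i)) * S3 i - (a i ^ n i) * S4 i
          rwa [← pow_add, ← pow_add, hq i] at h3
      by_cases hzero : ∀ i : Fin r', a i = 0 ∧ b i = 0
      · by_cases hABp : A ^ p = B ^ p
        · refine mk_r hp hlam m hm α hax hay haz haw u v hEx hEy hEz hEw (ξ⁻¹ * B * A⁻¹) ?_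
            (fun i => (hzero i).1) (fun i => (hzero i).2) ?_ ?_
          · rw [mul_pow, mul_pow, inv_pow, inv_pow, hξp, inv_one, one_mul, ← hABp]
            exact mul_inv_cancel₀ (pow_ne_zero _ hA)
          · show A₂ = ξ⁻¹ * B * A⁻¹ * A
            rw [hA2]; field_simp
            try ring
          · show ξ⁻¹ * B * A⁻¹ * B₂ = B
            rw [hB2]; field_simp
            try ring
        · have hc : ∀ j, c j = d j := by
            intro j
            have h := e6 j
            rw [ha1, hb1] at h
            have hfac : (A ^ p - B ^ p) * (c j - d j) = 0 := by linear_combination h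
            have h2 := (mul_eq_zero.mp hfac).resolve_left
              (fun hcon => hABp (sub_eq_zero.mp hcon))
            exact sub_eq_zero.mp h2
          exact mk_sr hp hlam m hm n hn α hax hay haz haw hsx hsy hsz hsw u v hEx hEy hEz hEw
            ξ hξp hc (by show ξ * A = B₂; rw [hB2]; try ring)
            (by show ξ * A₂ = B; rw [hA2]; field_simp
                try ring) hab
      · push_neg at hzero
        obtain ⟨i₀, hi₀⟩ := hzero
        have ha₀ : a i₀ ≠ 0 := by
          intro h0
          exact hi₀ h0 (bz_of_az i₀ h0)
        have hc : ∀ j, c j = d j := by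
          intro j
          have h5 := S5 i₀ j
          rw [S3 i₀] at h5
          have h6 : (ξ * a i₀ ^ n i₀) * c j = (ξ * a i₀ ^ n i₀) * d j := by
            linear_combination h5
          exact mul_left_cancel₀ (mul_ne_zero hξ0 (pow_ne_zero _ ha₀)) h6
        exact mk_sr hp hlam m hm n hn α hax hay haz haw hsx hsy hsz hsw u v hEx hEy hEz hEw
          ξ hξp hc (by show ξ * A = B₂; rw [hB2]; try ring)
          (by show ξ * A₂ = B; rw [hA2]; field_simp
              try ring) hab

end Key2

end SepExt


namespace SepExt

theorem C_collect {F : Type*} [Field F] {σ : Type*} (c₁ c₂ : F)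
    (q₁ q₂ : MvPolynomial σ F) (h : c₁ * c₂ = 1) :
    (C c₁ * q₁) * (C c₂ * q₂) = q₁ * q₂ := by
  rw [mul_mul_mul_comm, ← C_mul, h, C_1, one_mul]

theorem C_collect_pow {F : Type*} [Field F] {σ : Type*} (c₁ c₂ : F)
    (q₁ q₂ : MvPolynomial σ F) (k : ℕ) (h : c₁ * c₂ ^ k = 1) :
    (C c₁ * q₁) * (C c₂ * q₂) ^ k = q₁ * q₂ ^ k := by
  rw [mul_pow, ← C_pow, mul_mul_mul_comm, ← C_mul, h, C_1, one_mul]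

section Glue

variable {p : ℕ} (hp : p.Prime)
  {F : Type*} [Field F]
  {lam : F} (hlam : IsPrimitiveRoot lam p)
  {r' s : ℕ} (m : Fin (r' + 1) → ℕ) (hm : ∀ i, 0 < m i ∧ m i ≤ (p - 1) / 2)
  (n : Fin r' → ℕ)
  (hn : ∀ i : Fin r', 1 ≤ n i ∧ n i ≤ p - 1 ∧
      ((n i * m i.castSucc : ℕ) : ZMod p) = ((m (Fin.last r') : ℕ) : ZMod p))
  (α : DihedralGroup p →* (Vr F (Fin (r' + 1)) (Fin s) ≃ₐ[F] Vr F (Fin (r' + 1)) (Fin s)))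
  (hax : ∀ i, α (r 1) (X (Sum.inl (Sum.inl i))) = C (lam ^ m i) * X (Sum.inl (Sum.inl i)))
  (hay : ∀ i, α (r 1) (X (Sum.inl (Sum.inr i))) = C (lam⁻¹ ^ m i) * X (Sum.inl (Sum.inr i)))
  (haz : ∀ j : Fin s, α (r 1) (X (Sum.inr (Sum.inl j))) = X (Sum.inr (Sum.inl j)))
  (haw : ∀ j : Fin s, α (r 1) (X (Sum.inr (Sum.inr j))) = X (Sum.inr (Sum.inr j)))
  (hsx : ∀ i, α (sr 0) (X (Sum.inl (Sum.inl i))) = X (Sum.inl (Sum.inr i)))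
  (hsy : ∀ i, α (sr 0) (X (Sum.inl (Sum.inr i))) = X (Sum.inl (Sum.inl i)))
  (hsz : ∀ j : Fin s, α (sr 0) (X (Sum.inr (Sum.inl j))) = X (Sum.inr (Sum.inr j)))
  (hsw : ∀ j : Fin s, α (sr 0) (X (Sum.inr (Sum.inr j))) = X (Sum.inr (Sum.inl j)))

section Coef

variable [NeZero p]

include hlam in
theorem coef_xy : lam ^ m (Fin.last r') * lam⁻¹ ^ m (Fin.last r') = 1 := by
  rw [inv_pow]
  exact mul_inv_cancel₀ (pow_ne_zero _ (hlam.ne_zero (NeZero.ne p)))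

include hlam in
theorem coef_powp : (lam ^ m (Fin.last r')) ^ p = 1 := by
  rw [← pow_mul, mul_comm, pow_mul, hlam.pow_eq_one, one_pow]

include hlam in
theorem coef_powp' : (lam⁻¹ ^ m (Fin.last r')) ^ p = 1 := by
  simp only [inv_pow]
  rw [coef_powp hlam m, inv_one]

include hlam hn in
theorem coef_ni (i : Fin r') : (lam ^ m i.castSucc) ^ n i = lam ^ m (Fin.last r') := by
  rw [← pow_mul]
  refine root_pow_congr hlam ?_
  have h := (hn i).2.2
  push_cast at h ⊢
  rw [← h]; ring

include hlam hn in
theorem coef_f (i : Fin r') :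
    lam ^ m (Fin.last r') * (lam⁻¹ ^ m i.castSucc) ^ n i = 1 := by
  simp only [inv_pow]
  rw [coef_ni hlam m n hn i]
  exact mul_inv_cancel₀ (pow_ne_zero _ (hlam.ne_zero (NeZero.ne p)))

include hlam hn in
theorem coef_f' (i : Fin r') :
    lam⁻¹ ^ m (Fin.last r') * (lam ^ m i.castSucc) ^ n i = 1 := by
  rw [coef_ni hlam m n hn i, inv_pow]
  exact inv_mul_cancel₀ (pow_ne_zero _ (hlam.ne_zero (NeZero.ne p)))

include hlam hp hn in
theorem coef_g (i : Fin r') :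
    lam ^ m (Fin.last r') * (lam ^ m i.castSucc) ^ (p - n i) = 1 := by
  rw [← pow_mul, ← pow_add]
  have hnat : m i.castSucc * (p - n i) + n i * m i.castSucc = m i.castSucc * p := by
    have h1 : p - n i + n i = p := by
      have := (hn i).2.1; have := hp.two_le; omega
    calc m i.castSucc * (p - n i) + n i * m i.castSucc
        = m i.castSucc * ((p - n i) + n i) := by ring
      _ = m i.castSucc * p := by rw [h1]
  have hz : ((m (Fin.last r') + m i.castSucc * (p - n i) : ℕ) : ZMod p) = ((0 : ℕ) : ZMod p) := by
    have hc := congrArg (fun t : ℕ => ((t : ℕ) : ZMod p)) hnat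
    push_cast at hc ⊢
    have h2 := (hn i).2.2
    push_cast at h2
    rw [ZMod.natCast_self, mul_zero] at hc
    rw [h2] at hc
    linear_combination hc
  rw [root_pow_congr hlam hz, pow_zero]

include hlam hp hn in
theorem coef_g' (i : Fin r') :
    lam⁻¹ ^ m (Fin.last r') * (lam⁻¹ ^ m i.castSucc) ^ (p - n i) = 1 := by
  simp only [inv_pow]
  rw [← mul_inv, coef_g hp hlam m n hn i, inv_one]

end Coef



section Invariance

variable [NeZero p]

include hlam hax hay hsx hsy in
theorem t1_inv : ∀ g, α g (X (Sum.inl (Sum.inl (Fin.last r'))) *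
    X (Sum.inl (Sum.inr (Fin.last r')))) =
    X (Sum.inl (Sum.inl (Fin.last r'))) * X (Sum.inl (Sum.inr (Fin.last r'))) := by
  apply inv_of_gen
  · rw [map_mul, hax, hay, C_collect _ _ _ _ (coef_xy hlam m)]
  · rw [map_mul, hsx, hsy]; ring

include hlam hax hay hsx hsy in
theorem t2_inv : ∀ g, α g (X (Sum.inl (Sum.inl (Fin.last r'))) ^ p +
    X (Sum.inl (Sum.inr (Fin.last r'))) ^ p) =
    X (Sum.inl (Sum.inl (Fin.last r'))) ^ p + X (Sum.inl (Sum.inr (Fin.last r'))) ^ p := by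
  apply inv_of_gen
  · rw [map_add, map_pow, map_pow, hax, hay, mul_pow, mul_pow, ← C_pow, ← C_pow,
      coef_powp hlam m, coef_powp' hlam m, C_1, one_mul, one_mul]
  · rw [map_add, map_pow, map_pow, hsx, hsy]; ring

include hlam hn hax hay hsx hsy in
theorem t3_inv (i : Fin r') : ∀ g, α g
    (X (Sum.inl (Sum.inl (Fin.last r'))) * X (Sum.inl (Sum.inr i.castSucc)) ^ n i +
     X (Sum.inl (Sum.inr (Fin.last r'))) * X (Sum.inl (Sum.inl i.castSucc)) ^ n i) =
    X (Sum.inl (Sum.inl (Fin.last r'))) * X (Sum.inl (Sum.inr i.castSucc)) ^ n i +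
     X (Sum.inl (Sum.inr (Fin.last r'))) * X (Sum.inl (Sum.inl i.castSucc)) ^ n i := by
  apply inv_of_gen
  · rw [map_add, map_mul, map_mul, map_pow, map_pow, hax, hay, hax, hay,
      C_collect_pow _ _ _ _ _ (coef_f hlam m n hn i),
      C_collect_pow _ _ _ _ _ (coef_f' hlam m n hn i)]
  · rw [map_add, map_mul, map_mul, map_pow, map_pow, hsx, hsy, hsx, hsy]; ring

include hp hlam hn hax hay hsx hsy in
theorem t4_inv (i : Fin r') : ∀ g, α g
    (X (Sum.inl (Sum.inl (Fin.last r'))) * X (Sum.inl (Sum.inl i.castSucc)) ^ (p - n i) +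
     X (Sum.inl (Sum.inr (Fin.last r'))) * X (Sum.inl (Sum.inr i.castSucc)) ^ (p - n i)) =
    X (Sum.inl (Sum.inl (Fin.last r'))) * X (Sum.inl (Sum.inl i.castSucc)) ^ (p - n i) +
     X (Sum.inl (Sum.inr (Fin.last r'))) * X (Sum.inl (Sum.inr i.castSucc)) ^ (p - n i) := by
  apply inv_of_gen
  · rw [map_add, map_mul, map_mul, map_pow, map_pow, hax, hay, hax, hay,
      C_collect_pow _ _ _ _ _ (coef_g hp hlam m n hn i),
      C_collect_pow _ _ _ _ _ (coef_g' hp hlam m n hn i)]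
  · rw [map_add, map_mul, map_mul, map_pow, map_pow, hsx, hsy, hsx, hsy]; ring

include hlam hn hax hay haz haw hsx hsy hsz hsw in
theorem t5_inv (i : Fin r') (j : Fin s) : ∀ g, α g
    (X (Sum.inl (Sum.inl (Fin.last r'))) * X (Sum.inl (Sum.inr i.castSucc)) ^ n i *
       X (Sum.inr (Sum.inl j)) +
     X (Sum.inl (Sum.inr (Fin.last r'))) * X (Sum.inl (Sum.inl i.castSucc)) ^ n i *
       X (Sum.inr (Sum.inr j))) =
    X (Sum.inl (Sum.inl (Fin.last r'))) * X (Sum.inl (Sum.inr i.castSucc)) ^ n i *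
       X (Sum.inr (Sum.inl j)) +
     X (Sum.inl (Sum.inr (Fin.last r'))) * X (Sum.inl (Sum.inl i.castSucc)) ^ n i *
       X (Sum.inr (Sum.inr j)) := by
  apply inv_of_gen
  · rw [map_add, map_mul, map_mul, map_mul, map_mul, map_pow, map_pow, hax, hay, hax, hay,
      haz, haw,
      C_collect_pow _ _ _ _ _ (coef_f hlam m n hn i),
      C_collect_pow _ _ _ _ _ (coef_f' hlam m n hn i)]
  · rw [map_add, map_mul, map_mul, map_mul, map_mul, map_pow, map_pow, hsx, hsy, hsx, hsy,
      hsz, hsw]; ring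

include hlam hax hay haz haw hsx hsy hsz hsw in
theorem t6_inv (j : Fin s) : ∀ g, α g
    (X (Sum.inl (Sum.inl (Fin.last r'))) ^ p * X (Sum.inr (Sum.inl j)) +
     X (Sum.inl (Sum.inr (Fin.last r'))) ^ p * X (Sum.inr (Sum.inr j))) =
    X (Sum.inl (Sum.inl (Fin.last r'))) ^ p * X (Sum.inr (Sum.inl j)) +
     X (Sum.inl (Sum.inr (Fin.last r'))) ^ p * X (Sum.inr (Sum.inr j)) := by
  apply inv_of_gen
  · rw [map_add, map_mul, map_mul, map_pow, map_pow, hax, hay, haz, haw, mul_pow, mul_pow,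
      ← C_pow, ← C_pow, coef_powp hlam m, coef_powp' hlam m, C_1, one_mul, one_mul]
  · rw [map_add, map_mul, map_mul, map_pow, map_pow, hsx, hsy, hsz, hsw]; ring

end Invariance

section Intertwine

variable [NeZero p]
  (alf : DihedralGroup p →* (Vr F (Fin r') (Fin s) ≃ₐ[F] Vr F (Fin r') (Fin s)))
  (hax' : ∀ i : Fin r', alf (r 1) (X (Sum.inl (Sum.inl i))) =
    C (lam ^ m i.castSucc) * X (Sum.inl (Sum.inl i)))
  (hay' : ∀ i : Fin r', alf (r 1) (X (Sum.inl (Sum.inr i))) =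
    C (lam⁻¹ ^ m i.castSucc) * X (Sum.inl (Sum.inr i)))
  (haz' : ∀ j : Fin s, alf (r 1) (X (Sum.inr (Sum.inl j))) = X (Sum.inr (Sum.inl j)))
  (haw' : ∀ j : Fin s, alf (r 1) (X (Sum.inr (Sum.inr j))) = X (Sum.inr (Sum.inr j)))
  (hsx' : ∀ i : Fin r', alf (sr 0) (X (Sum.inl (Sum.inl i))) = X (Sum.inl (Sum.inr i)))
  (hsy' : ∀ i : Fin r', alf (sr 0) (X (Sum.inl (Sum.inr i))) = X (Sum.inl (Sum.inl i)))
  (hsz' : ∀ j : Fin s, alf (sr 0) (X (Sum.inr (Sum.inl j))) = X (Sum.inr (Sum.inr j)))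
  (hsw' : ∀ j : Fin s, alf (sr 0) (X (Sum.inr (Sum.inr j))) = X (Sum.inr (Sum.inl j)))

include hax hay haz haw hsx hsy hsz hsw hax' hay' haz' haw' hsx' hsy' hsz' hsw' in
theorem intertwine : ∀ (g : DihedralGroup p) (f : Vr F (Fin r') (Fin s)),
    α g (rename (Sum.map (Sum.map Fin.castSucc Fin.castSucc) id) f) =
    rename (Sum.map (Sum.map Fin.castSucc Fin.castSucc) id) (alf g f) := by
  have gen2 : ∀ g₀ : DihedralGroup p,
      (∀ j, α g₀ (X (Sum.map (Sum.map Fin.castSucc Fin.castSucc) id j)) =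
        rename (Sum.map (Sum.map Fin.castSucc Fin.castSucc) id) (alf g₀ (X j))) →
      ∀ f, α g₀ (rename (Sum.map (Sum.map Fin.castSucc Fin.castSucc) id) f) =
        rename (Sum.map (Sum.map Fin.castSucc Fin.castSucc) id) (alf g₀ f) := by
    intro g₀ hX f
    have h : (α g₀).toAlgHom.comp
        (rename (R := F) (Sum.map (Sum.map Fin.castSucc Fin.castSucc) id)) =
        (rename (Sum.map (Sum.map Fin.castSucc Fin.castSucc) id)).comp (alf g₀).toAlgHom := by
      apply algHom_ext
      intro j
      simp only [AlgHom.coe_comp, Function.comp_apply, rename_X, AlgEquiv.toAlgHom_eq_coe,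
        AlgHom.coe_coe]
      exact hX j
    have := AlgHom.congr_fun h f
    simpa using this
  apply dihedral_gen (fun g => ∀ f,
    α g (rename (Sum.map (Sum.map Fin.castSucc Fin.castSucc) id) f) =
    rename (Sum.map (Sum.map Fin.castSucc Fin.castSucc) id) (alf g f))
  · intro f; rw [map_one, map_one]; rfl
  · intro g h hg hh f
    rw [map_mul, map_mul]
    show α g (α h _) = _
    rw [hh f, hg _]
    rfl
  · apply gen2
    intro j
    rcases j with (i | i) | (k | k)
    · show α (r 1) (X (Sum.inl (Sum.inl i.castSucc))) = _
      rw [hax, hax' i, map_mul, rename_C, rename_X]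
      rfl
    · show α (r 1) (X (Sum.inl (Sum.inr i.castSucc))) = _
      rw [hay, hay' i, map_mul, rename_C, rename_X]
      rfl
    · show α (r 1) (X (Sum.inr (Sum.inl k))) = _
      rw [haz, haz' k, rename_X]
      rfl
    · show α (r 1) (X (Sum.inr (Sum.inr k))) = _
      rw [haw, haw' k, rename_X]
      rfl
  · apply gen2
    intro j
    rcases j with (i | i) | (k | k)
    · show α (sr 0) (X (Sum.inl (Sum.inl i.castSucc))) = _
      rw [hsx, hsx' i, rename_X]
      rfl
    · show α (sr 0) (X (Sum.inl (Sum.inr i.castSucc))) = _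
      rw [hsy, hsy' i, rename_X]
      rfl
    · show α (sr 0) (X (Sum.inr (Sum.inl k))) = _
      rw [hsz, hsz' k, rename_X]
      rfl
    · show α (sr 0) (X (Sum.inr (Sum.inr k))) = _
      rw [hsw, hsw' k, rename_X]
      rfl

end Intertwine

end Glue


end SepExt
end SepExtDev

set_option maxHeartbeats 1000000 in
/-- Let `p` be an odd prime, `F` algebraically closed of characteristic two,
and let `G = D_{2p}` act on `V = F^{2r+2s}` (`r = r' + 1 ≥ 1`, coordinates
indexed by `(Fin (r'+1) ⊕ Fin (r'+1)) ⊕ (Fin s ⊕ Fin s)`) as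
`⊕ W_{m_i} ⊕ (W_0)^s`, with the induced action `α` on the polynomial ring
`F[V]`, and similarly on `V' = F^{2(r-1)+2s}` (the first `r-1` pairs of
weights) with induced action `α'` on `F[V']`; `F[V']` is identified with a
subalgebra of `F[V]` via `rename` along the evident inclusion of variables.
If `S ⊆ F[V']^G` is a separating set for `V'`, then `S` together with the set
`T = {x_r y_r, x_r^p + y_r^p, f_i, g_i, f_{i,j}, h_j}` (where
`f_i = x_r y_i^{n_i} + y_r x_i^{n_i}`,
`g_i = x_r x_i^{p-n_i} + y_r y_i^{p-n_i}`,
`f_{i,j} = x_r y_i^{n_i} z_j + y_r x_i^{n_i} w_j`,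
`h_j = x_r^p z_j + y_r^p w_j`, and `n_i` is the unique integer with
`1 ≤ n_i ≤ p-1`, `n_i m_i ≡ m_r (mod p)`) is a separating set for `V`. -/
theorem separating_set_extension
    (p : ℕ) (hp_prime : p.Prime) (hp_odd : Odd p)
    (F : Type*) [Field F] [IsAlgClosed F] [CharP F 2]
    (lam : F) (hlam : IsPrimitiveRoot lam p)
    (r' s : ℕ) (m : Fin (r' + 1) → ℕ) (hm : ∀ i, 0 < m i ∧ m i ≤ (p - 1) / 2)
    (n : Fin r' → ℕ)
    (hn : ∀ i : Fin r', 1 ≤ n i ∧ n i ≤ p - 1 ∧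
      ((n i * m i.castSucc : ℕ) : ZMod p) = ((m (Fin.last r') : ℕ) : ZMod p))
    -- the action on F[V]
    (α : DihedralGroup p →*
      (MvPolynomial ((Fin (r' + 1) ⊕ Fin (r' + 1)) ⊕ (Fin s ⊕ Fin s)) F ≃ₐ[F]
       MvPolynomial ((Fin (r' + 1) ⊕ Fin (r' + 1)) ⊕ (Fin s ⊕ Fin s)) F))
    (hρx : ∀ i : Fin (r' + 1), α (DihedralGroup.r 1) (X (Sum.inl (Sum.inl i))) =
      C (lam ^ m i) * X (Sum.inl (Sum.inl i)))
    (hρy : ∀ i : Fin (r' + 1), α (DihedralGroup.r 1) (X (Sum.inl (Sum.inr i))) =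
      C (lam⁻¹ ^ m i) * X (Sum.inl (Sum.inr i)))
    (hρz : ∀ j : Fin s, α (DihedralGroup.r 1) (X (Sum.inr (Sum.inl j))) =
      X (Sum.inr (Sum.inl j)))
    (hρw : ∀ j : Fin s, α (DihedralGroup.r 1) (X (Sum.inr (Sum.inr j))) =
      X (Sum.inr (Sum.inr j)))
    (hσx : ∀ i : Fin (r' + 1), α (DihedralGroup.sr 0) (X (Sum.inl (Sum.inl i))) =
      X (Sum.inl (Sum.inr i)))
    (hσy : ∀ i : Fin (r' + 1), α (DihedralGroup.sr 0) (X (Sum.inl (Sum.inr i))) =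
      X (Sum.inl (Sum.inl i)))
    (hσz : ∀ j : Fin s, α (DihedralGroup.sr 0) (X (Sum.inr (Sum.inl j))) =
      X (Sum.inr (Sum.inr j)))
    (hσw : ∀ j : Fin s, α (DihedralGroup.sr 0) (X (Sum.inr (Sum.inr j))) =
      X (Sum.inr (Sum.inl j)))
    -- the action on F[V']
    (α' : DihedralGroup p →*
      (MvPolynomial ((Fin r' ⊕ Fin r') ⊕ (Fin s ⊕ Fin s)) F ≃ₐ[F]
       MvPolynomial ((Fin r' ⊕ Fin r') ⊕ (Fin s ⊕ Fin s)) F))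
    (hρx' : ∀ i : Fin r', α' (DihedralGroup.r 1) (X (Sum.inl (Sum.inl i))) =
      C (lam ^ m i.castSucc) * X (Sum.inl (Sum.inl i)))
    (hρy' : ∀ i : Fin r', α' (DihedralGroup.r 1) (X (Sum.inl (Sum.inr i))) =
      C (lam⁻¹ ^ m i.castSucc) * X (Sum.inl (Sum.inr i)))
    (hρz' : ∀ j : Fin s, α' (DihedralGroup.r 1) (X (Sum.inr (Sum.inl j))) =
      X (Sum.inr (Sum.inl j)))
    (hρw' : ∀ j : Fin s, α' (DihedralGroup.r 1) (X (Sum.inr (Sum.inr j))) =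
      X (Sum.inr (Sum.inr j)))
    (hσx' : ∀ i : Fin r', α' (DihedralGroup.sr 0) (X (Sum.inl (Sum.inl i))) =
      X (Sum.inl (Sum.inr i)))
    (hσy' : ∀ i : Fin r', α' (DihedralGroup.sr 0) (X (Sum.inl (Sum.inr i))) =
      X (Sum.inl (Sum.inl i)))
    (hσz' : ∀ j : Fin s, α' (DihedralGroup.sr 0) (X (Sum.inr (Sum.inl j))) =
      X (Sum.inr (Sum.inr j)))
    (hσw' : ∀ j : Fin s, α' (DihedralGroup.sr 0) (X (Sum.inr (Sum.inr j))) =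
      X (Sum.inr (Sum.inl j)))
    -- S is a set of invariants of F[V'] which is separating for V'
    (S : Set (MvPolynomial ((Fin r' ⊕ Fin r') ⊕ (Fin s ⊕ Fin s)) F))
    (hS_inv : ∀ f ∈ S, ∀ g : DihedralGroup p, α' g f = f)
    (hS_sep : ∀ u' v' : ((Fin r' ⊕ Fin r') ⊕ (Fin s ⊕ Fin s)) → F,
      (∀ f ∈ S, eval u' f = eval v' f) →
      ∀ f : MvPolynomial ((Fin r' ⊕ Fin r') ⊕ (Fin s ⊕ Fin s)) F,
        (∀ g : DihedralGroup p, α' g f = f) → eval u' f = eval v' f) :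
    -- then S ∪ T is separating for V
    ∀ u v : ((Fin (r' + 1) ⊕ Fin (r' + 1)) ⊕ (Fin s ⊕ Fin s)) → F,
      (∀ f ∈ S,
        eval u (rename (Sum.map (Sum.map Fin.castSucc Fin.castSucc) id) f) =
        eval v (rename (Sum.map (Sum.map Fin.castSucc Fin.castSucc) id) f)) →
      (eval u (X (Sum.inl (Sum.inl (Fin.last r'))) * X (Sum.inl (Sum.inr (Fin.last r')))
          : MvPolynomial ((Fin (r' + 1) ⊕ Fin (r' + 1)) ⊕ (Fin s ⊕ Fin s)) F) =
       eval v (X (Sum.inl (Sum.inl (Fin.last r'))) * X (Sum.inl (Sum.inr (Fin.last r'))))) →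
      (eval u (X (Sum.inl (Sum.inl (Fin.last r'))) ^ p + X (Sum.inl (Sum.inr (Fin.last r'))) ^ p
          : MvPolynomial ((Fin (r' + 1) ⊕ Fin (r' + 1)) ⊕ (Fin s ⊕ Fin s)) F) =
       eval v (X (Sum.inl (Sum.inl (Fin.last r'))) ^ p + X (Sum.inl (Sum.inr (Fin.last r'))) ^ p)) →
      (∀ i : Fin r',
        eval u (X (Sum.inl (Sum.inl (Fin.last r'))) * X (Sum.inl (Sum.inr i.castSucc)) ^ n i +
                X (Sum.inl (Sum.inr (Fin.last r'))) * X (Sum.inl (Sum.inl i.castSucc)) ^ n i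
            : MvPolynomial ((Fin (r' + 1) ⊕ Fin (r' + 1)) ⊕ (Fin s ⊕ Fin s)) F) =
        eval v (X (Sum.inl (Sum.inl (Fin.last r'))) * X (Sum.inl (Sum.inr i.castSucc)) ^ n i +
                X (Sum.inl (Sum.inr (Fin.last r'))) * X (Sum.inl (Sum.inl i.castSucc)) ^ n i)) →
      (∀ i : Fin r',
        eval u (X (Sum.inl (Sum.inl (Fin.last r'))) * X (Sum.inl (Sum.inl i.castSucc)) ^ (p - n i) +
                X (Sum.inl (Sum.inr (Fin.last r'))) * X (Sum.inl (Sum.inr i.castSucc)) ^ (p - n i)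
            : MvPolynomial ((Fin (r' + 1) ⊕ Fin (r' + 1)) ⊕ (Fin s ⊕ Fin s)) F) =
        eval v (X (Sum.inl (Sum.inl (Fin.last r'))) * X (Sum.inl (Sum.inl i.castSucc)) ^ (p - n i) +
                X (Sum.inl (Sum.inr (Fin.last r'))) * X (Sum.inl (Sum.inr i.castSucc)) ^ (p - n i))) →
      (∀ (i : Fin r') (j : Fin s),
        eval u (X (Sum.inl (Sum.inl (Fin.last r'))) * X (Sum.inl (Sum.inr i.castSucc)) ^ n i *
                  X (Sum.inr (Sum.inl j)) +
                X (Sum.inl (Sum.inr (Fin.last r'))) * X (Sum.inl (Sum.inl i.castSucc)) ^ n i *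
                  X (Sum.inr (Sum.inr j))
            : MvPolynomial ((Fin (r' + 1) ⊕ Fin (r' + 1)) ⊕ (Fin s ⊕ Fin s)) F) =
        eval v (X (Sum.inl (Sum.inl (Fin.last r'))) * X (Sum.inl (Sum.inr i.castSucc)) ^ n i *
                  X (Sum.inr (Sum.inl j)) +
                X (Sum.inl (Sum.inr (Fin.last r'))) * X (Sum.inl (Sum.inl i.castSucc)) ^ n i *
                  X (Sum.inr (Sum.inr j)))) →
      (∀ j : Fin s,
        eval u (X (Sum.inl (Sum.inl (Fin.last r'))) ^ p * X (Sum.inr (Sum.inl j)) +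
                X (Sum.inl (Sum.inr (Fin.last r'))) ^ p * X (Sum.inr (Sum.inr j))
            : MvPolynomial ((Fin (r' + 1) ⊕ Fin (r' + 1)) ⊕ (Fin s ⊕ Fin s)) F) =
        eval v (X (Sum.inl (Sum.inl (Fin.last r'))) ^ p * X (Sum.inr (Sum.inl j)) +
                X (Sum.inl (Sum.inr (Fin.last r'))) ^ p * X (Sum.inr (Sum.inr j)))) →
      ∀ f : MvPolynomial ((Fin (r' + 1) ⊕ Fin (r' + 1)) ⊕ (Fin s ⊕ Fin s)) F,
        (∀ g : DihedralGroup p, α g f = f) → eval u f = eval v f := by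

  intro u v hSuv h1 h2 h3 h4 h5 h6 f hf
  haveI : NeZero p := ⟨hp_prime.ne_zero⟩
  classical
  -- Step A : same orbit in V'
  have horb : ∃ g : DihedralGroup p,
      (fun j => v (Sum.map (Sum.map Fin.castSucc Fin.castSucc) id j)) =
      SepExt.Tpt α' g (fun j => u (Sum.map (Sum.map Fin.castSucc Fin.castSucc) id j)) := by
    apply SepExt.orbit_sep α'
    intro f' hf'
    apply hS_sep
    · intro f0 hf0
      have h := hSuv f0 hf0
      rw [eval_rename, eval_rename] at h
      exact h
    · exact hf'
  obtain ⟨g, hg⟩ := horb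
  have hint := SepExt.intertwine m α hρx hρy hρz hρw hσx hσy hσz hσw α'
    hρx' hρy' hρz' hρw' hσx' hσy' hσz' hσw'
  set u₁ := SepExt.Tpt α g u with hu₁def
  have hEface : ∀ j, u₁ (Sum.map (Sum.map Fin.castSucc Fin.castSucc) id j) =
      v (Sum.map (Sum.map Fin.castSucc Fin.castSucc) id j) := by
    intro j
    have h2' : α g (X (Sum.map (Sum.map Fin.castSucc Fin.castSucc) id j)) =
        rename (Sum.map (Sum.map Fin.castSucc Fin.castSucc) id) (α' g (X j)) := by
      have hh := hint g (X j)
      rwa [rename_X] at hh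
    show eval u (α g (X _)) = _
    rw [h2', eval_rename]
    exact (congrFun hg j).symm
  have hEx : ∀ i : Fin r', u₁ (Sum.inl (Sum.inl i.castSucc)) = v (Sum.inl (Sum.inl i.castSucc)) :=
    fun i => hEface (Sum.inl (Sum.inl i))
  have hEy : ∀ i : Fin r', u₁ (Sum.inl (Sum.inr i.castSucc)) = v (Sum.inl (Sum.inr i.castSucc)) :=
    fun i => hEface (Sum.inl (Sum.inr i))
  have hEz : ∀ j : Fin s, u₁ (Sum.inr (Sum.inl j)) = v (Sum.inr (Sum.inl j)) :=
    fun j => hEface (Sum.inr (Sum.inl j))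
  have hEw : ∀ j : Fin s, u₁ (Sum.inr (Sum.inr j)) = v (Sum.inr (Sum.inr j)) :=
    fun j => hEface (Sum.inr (Sum.inr j))
  -- invariance of the added polynomials
  have T1 := SepExt.t1_inv hlam m α hρx hρy hσx hσy
  have T2 := SepExt.t2_inv hlam m α hρx hρy hσx hσy
  have T3 := fun i => SepExt.t3_inv hlam m n hn α hρx hρy hσx hσy i
  have T4 := fun i => SepExt.t4_inv hp_prime hlam m n hn α hρx hρy hσx hσy i
  have T5 := fun i j => SepExt.t5_inv hlam m n hn α hρx hρy hρz hρw hσx hσy hσz hσw i j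
  have T6 := fun j => SepExt.t6_inv hlam m α hρx hρy hρz hρw hσx hσy hσz hσw j
  -- transfer the T-equalities to the pair (u₁, v)
  have E1 : eval u₁ (X (Sum.inl (Sum.inl (Fin.last r'))) * X (Sum.inl (Sum.inr (Fin.last r')))
      : MvPolynomial ((Fin (r' + 1) ⊕ Fin (r' + 1)) ⊕ (Fin s ⊕ Fin s)) F) =
      eval v (X (Sum.inl (Sum.inl (Fin.last r'))) * X (Sum.inl (Sum.inr (Fin.last r')))) := by
    rw [hu₁def, SepExt.eval_Tpt, T1 g]; exact h1
  have E2 : eval u₁ (X (Sum.inl (Sum.inl (Fin.last r'))) ^ p + X (Sum.inl (Sum.inr (Fin.last r'))) ^ p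
      : MvPolynomial ((Fin (r' + 1) ⊕ Fin (r' + 1)) ⊕ (Fin s ⊕ Fin s)) F) =
      eval v (X (Sum.inl (Sum.inl (Fin.last r'))) ^ p + X (Sum.inl (Sum.inr (Fin.last r'))) ^ p) := by
    rw [hu₁def, SepExt.eval_Tpt, T2 g]; exact h2
  have E3 : ∀ i : Fin r',
      eval u₁ (X (Sum.inl (Sum.inl (Fin.last r'))) * X (Sum.inl (Sum.inr i.castSucc)) ^ n i +
               X (Sum.inl (Sum.inr (Fin.last r'))) * X (Sum.inl (Sum.inl i.castSucc)) ^ n i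
        : MvPolynomial ((Fin (r' + 1) ⊕ Fin (r' + 1)) ⊕ (Fin s ⊕ Fin s)) F) =
      eval v (X (Sum.inl (Sum.inl (Fin.last r'))) * X (Sum.inl (Sum.inr i.castSucc)) ^ n i +
               X (Sum.inl (Sum.inr (Fin.last r'))) * X (Sum.inl (Sum.inl i.castSucc)) ^ n i) := by
    intro i
    rw [hu₁def, SepExt.eval_Tpt, T3 i g]; exact h3 i
  have E4 : ∀ i : Fin r',
      eval u₁ (X (Sum.inl (Sum.inl (Fin.last r'))) * X (Sum.inl (Sum.inl i.castSucc)) ^ (p - n i) +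
               X (Sum.inl (Sum.inr (Fin.last r'))) * X (Sum.inl (Sum.inr i.castSucc)) ^ (p - n i)
        : MvPolynomial ((Fin (r' + 1) ⊕ Fin (r' + 1)) ⊕ (Fin s ⊕ Fin s)) F) =
      eval v (X (Sum.inl (Sum.inl (Fin.last r'))) * X (Sum.inl (Sum.inl i.castSucc)) ^ (p - n i) +
               X (Sum.inl (Sum.inr (Fin.last r'))) * X (Sum.inl (Sum.inr i.castSucc)) ^ (p - n i)) := by
    intro i
    rw [hu₁def, SepExt.eval_Tpt, T4 i g]; exact h4 i
  have E5 : ∀ (i : Fin r') (j : Fin s),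
      eval u₁ (X (Sum.inl (Sum.inl (Fin.last r'))) * X (Sum.inl (Sum.inr i.castSucc)) ^ n i *
                 X (Sum.inr (Sum.inl j)) +
               X (Sum.inl (Sum.inr (Fin.last r'))) * X (Sum.inl (Sum.inl i.castSucc)) ^ n i *
                 X (Sum.inr (Sum.inr j))
        : MvPolynomial ((Fin (r' + 1) ⊕ Fin (r' + 1)) ⊕ (Fin s ⊕ Fin s)) F) =
      eval v (X (Sum.inl (Sum.inl (Fin.last r'))) * X (Sum.inl (Sum.inr i.castSucc)) ^ n i *
                 X (Sum.inr (Sum.inl j)) +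
               X (Sum.inl (Sum.inr (Fin.last r'))) * X (Sum.inl (Sum.inl i.castSucc)) ^ n i *
                 X (Sum.inr (Sum.inr j))) := by
    intro i j
    rw [hu₁def, SepExt.eval_Tpt, T5 i j g]; exact h5 i j
  have E6 : ∀ j : Fin s,
      eval u₁ (X (Sum.inl (Sum.inl (Fin.last r'))) ^ p * X (Sum.inr (Sum.inl j)) +
               X (Sum.inl (Sum.inr (Fin.last r'))) ^ p * X (Sum.inr (Sum.inr j))
        : MvPolynomial ((Fin (r' + 1) ⊕ Fin (r' + 1)) ⊕ (Fin s ⊕ Fin s)) F) =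
      eval v (X (Sum.inl (Sum.inl (Fin.last r'))) ^ p * X (Sum.inr (Sum.inl j)) +
               X (Sum.inl (Sum.inr (Fin.last r'))) ^ p * X (Sum.inr (Sum.inr j))) := by
    intro j
    rw [hu₁def, SepExt.eval_Tpt, T6 j g]; exact h6 j
  simp only [eval_mul, eval_add, eval_pow, eval_X] at E1 E2 E3 E4 E5 E6
  simp only [show ∀ i : Fin r', v (Sum.inl (Sum.inl i.castSucc)) = u₁ (Sum.inl (Sum.inl i.castSucc))
      from fun i => (hEx i).symm,
    show ∀ i : Fin r', v (Sum.inl (Sum.inr i.castSucc)) = u₁ (Sum.inl (Sum.inr i.castSucc))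
      from fun i => (hEy i).symm,
    show ∀ j : Fin s, v (Sum.inr (Sum.inl j)) = u₁ (Sum.inr (Sum.inl j))
      from fun j => (hEz j).symm,
    show ∀ j : Fin s, v (Sum.inr (Sum.inr j)) = u₁ (Sum.inr (Sum.inr j))
      from fun j => (hEw j).symm] at E3 E4 E5 E6
  have conclude : ∀ gg : DihedralGroup p, (∀ idx, v idx = eval u₁ (α gg (X idx))) →
      eval u f = eval v f := by
    intro gg hvw
    have hveq : v = SepExt.Tpt α gg u₁ := funext hvw
    rw [hveq, SepExt.eval_Tpt, hf gg, hu₁def, SepExt.eval_Tpt, hf g]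
  by_cases hz : u₁ (Sum.inl (Sum.inl (Fin.last r'))) = 0 ∧
      u₁ (Sum.inl (Sum.inr (Fin.last r'))) = 0
  · obtain ⟨hz1, hz2⟩ := hz
    have hprod : v (Sum.inl (Sum.inl (Fin.last r'))) * v (Sum.inl (Sum.inr (Fin.last r'))) = 0 := by
      rw [← E1, hz1, zero_mul]
    have hsum : v (Sum.inl (Sum.inl (Fin.last r'))) ^ p +
        v (Sum.inl (Sum.inr (Fin.last r'))) ^ p = 0 := by
      rw [← E2, hz1, hz2, zero_pow hp_prime.ne_zero, add_zero]
    have hv0 : v (Sum.inl (Sum.inl (Fin.last r'))) = 0 ∧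
        v (Sum.inl (Sum.inr (Fin.last r'))) = 0 := by
      rcases mul_eq_zero.mp hprod with h | h
      · refine ⟨h, ?_⟩
        rw [h, zero_pow hp_prime.ne_zero, zero_add] at hsum
        exact pow_eq_zero_iff hp_prime.ne_zero |>.mp hsum
      · refine ⟨?_, h⟩
        rw [h, zero_pow hp_prime.ne_zero, add_zero] at hsum
        exact pow_eq_zero_iff hp_prime.ne_zero |>.mp hsum
    apply conclude 1
    intro idx
    rw [map_one]
    have hone : ((1 : MvPolynomial ((Fin (r' + 1) ⊕ Fin (r' + 1)) ⊕ (Fin s ⊕ Fin s)) F ≃ₐ[F]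
        MvPolynomial ((Fin (r' + 1) ⊕ Fin (r' + 1)) ⊕ (Fin s ⊕ Fin s)) F)) (X idx) = X idx := rfl
    rw [hone, eval_X]
    rcases idx with (i | i) | (j | j)
    · refine Fin.lastCases ?_ (fun i' => ?_) i
      · rw [hv0.1, hz1]
      · exact (hEx i').symm
    · refine Fin.lastCases ?_ (fun i' => ?_) i
      · rw [hv0.2, hz2]
      · exact (hEy i').symm
    · exact (hEz j).symm
    · exact (hEw j).symm
  · rcases not_and_or.mp hz with hA | hB
    · obtain ⟨hh, hvv⟩ := SepExt.key_lemma hp_prime hlam m hm n hn α hρx hρy hρz hρw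
        hσx hσy hσz hσw u₁ v hEx hEy hEz hEw hA E1 E2 E3 E4 E5 E6
      exact conclude hh hvv
    · -- twist by sr 0
      set u₂ := SepExt.Tpt α (DihedralGroup.sr 0) u₁ with hu₂def
      set v₂ := SepExt.Tpt α (DihedralGroup.sr 0) v with hv₂def
      have hu₂x : ∀ i, u₂ (Sum.inl (Sum.inl i)) = u₁ (Sum.inl (Sum.inr i)) := fun i => by
        show eval u₁ (α (DihedralGroup.sr 0) (X _)) = _
        rw [hσx, eval_X]
      have hu₂y : ∀ i, u₂ (Sum.inl (Sum.inr i)) = u₁ (Sum.inl (Sum.inl i)) := fun i => by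
        show eval u₁ (α (DihedralGroup.sr 0) (X _)) = _
        rw [hσy, eval_X]
      have hu₂z : ∀ j, u₂ (Sum.inr (Sum.inl j)) = u₁ (Sum.inr (Sum.inr j)) := fun j => by
        show eval u₁ (α (DihedralGroup.sr 0) (X _)) = _
        rw [hσz, eval_X]
      have hu₂w : ∀ j, u₂ (Sum.inr (Sum.inr j)) = u₁ (Sum.inr (Sum.inl j)) := fun j => by
        show eval u₁ (α (DihedralGroup.sr 0) (X _)) = _
        rw [hσw, eval_X]
      have hv₂x : ∀ i, v₂ (Sum.inl (Sum.inl i)) = v (Sum.inl (Sum.inr i)) := fun i => by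
        show eval v (α (DihedralGroup.sr 0) (X _)) = _
        rw [hσx, eval_X]
      have hv₂y : ∀ i, v₂ (Sum.inl (Sum.inr i)) = v (Sum.inl (Sum.inl i)) := fun i => by
        show eval v (α (DihedralGroup.sr 0) (X _)) = _
        rw [hσy, eval_X]
      have hv₂z : ∀ j, v₂ (Sum.inr (Sum.inl j)) = v (Sum.inr (Sum.inr j)) := fun j => by
        show eval v (α (DihedralGroup.sr 0) (X _)) = _
        rw [hσz, eval_X]
      have hv₂w : ∀ j, v₂ (Sum.inr (Sum.inr j)) = v (Sum.inr (Sum.inl j)) := fun j => by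
        show eval v (α (DihedralGroup.sr 0) (X _)) = _
        rw [hσw, eval_X]
      have hEx₂ : ∀ i : Fin r', u₂ (Sum.inl (Sum.inl i.castSucc)) =
          v₂ (Sum.inl (Sum.inl i.castSucc)) := fun i => by
        rw [hu₂x, hv₂x]; exact hEy i
      have hEy₂ : ∀ i : Fin r', u₂ (Sum.inl (Sum.inr i.castSucc)) =
          v₂ (Sum.inl (Sum.inr i.castSucc)) := fun i => by
        rw [hu₂y, hv₂y]; exact hEx i
      have hEz₂ : ∀ j : Fin s, u₂ (Sum.inr (Sum.inl j)) = v₂ (Sum.inr (Sum.inl j)) := fun j => by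
        rw [hu₂z, hv₂z]; exact hEw j
      have hEw₂ : ∀ j : Fin s, u₂ (Sum.inr (Sum.inr j)) = v₂ (Sum.inr (Sum.inr j)) := fun j => by
        rw [hu₂w, hv₂w]; exact hEz j
      have hA₂ : u₂ (Sum.inl (Sum.inl (Fin.last r'))) ≠ 0 := by
        rw [hu₂x]; exact hB
      have E1₂ : u₂ (Sum.inl (Sum.inl (Fin.last r'))) * u₂ (Sum.inl (Sum.inr (Fin.last r'))) =
          v₂ (Sum.inl (Sum.inl (Fin.last r'))) * v₂ (Sum.inl (Sum.inr (Fin.last r'))) := by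
        rw [hu₂x, hu₂y, hv₂x, hv₂y]
        linear_combination E1
      have E2₂ : u₂ (Sum.inl (Sum.inl (Fin.last r'))) ^ p +
          u₂ (Sum.inl (Sum.inr (Fin.last r'))) ^ p =
          v₂ (Sum.inl (Sum.inl (Fin.last r'))) ^ p + v₂ (Sum.inl (Sum.inr (Fin.last r'))) ^ p := by
        rw [hu₂x, hu₂y, hv₂x, hv₂y]
        linear_combination E2
      have E3₂ : ∀ i : Fin r',
          u₂ (Sum.inl (Sum.inl (Fin.last r'))) * u₂ (Sum.inl (Sum.inr i.castSucc)) ^ n i +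
          u₂ (Sum.inl (Sum.inr (Fin.last r'))) * u₂ (Sum.inl (Sum.inl i.castSucc)) ^ n i =
          v₂ (Sum.inl (Sum.inl (Fin.last r'))) * u₂ (Sum.inl (Sum.inr i.castSucc)) ^ n i +
          v₂ (Sum.inl (Sum.inr (Fin.last r'))) * u₂ (Sum.inl (Sum.inl i.castSucc)) ^ n i := by
        intro i
        rw [hu₂x (Fin.last r'), hu₂x i.castSucc, hu₂y (Fin.last r'), hu₂y i.castSucc,
          hv₂x (Fin.last r'), hv₂y (Fin.last r')]
        linear_combination E3 i
      have E4₂ : ∀ i : Fin r',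
          u₂ (Sum.inl (Sum.inl (Fin.last r'))) * u₂ (Sum.inl (Sum.inl i.castSucc)) ^ (p - n i) +
          u₂ (Sum.inl (Sum.inr (Fin.last r'))) * u₂ (Sum.inl (Sum.inr i.castSucc)) ^ (p - n i) =
          v₂ (Sum.inl (Sum.inl (Fin.last r'))) * u₂ (Sum.inl (Sum.inl i.castSucc)) ^ (p - n i) +
          v₂ (Sum.inl (Sum.inr (Fin.last r'))) * u₂ (Sum.inl (Sum.inr i.castSucc)) ^ (p - n i) := by
        intro i
        rw [hu₂x (Fin.last r'), hu₂x i.castSucc, hu₂y (Fin.last r'), hu₂y i.castSucc,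
          hv₂x (Fin.last r'), hv₂y (Fin.last r')]
        linear_combination E4 i
      have E5₂ : ∀ (i : Fin r') (j : Fin s),
          u₂ (Sum.inl (Sum.inl (Fin.last r'))) * u₂ (Sum.inl (Sum.inr i.castSucc)) ^ n i *
            u₂ (Sum.inr (Sum.inl j)) +
          u₂ (Sum.inl (Sum.inr (Fin.last r'))) * u₂ (Sum.inl (Sum.inl i.castSucc)) ^ n i *
            u₂ (Sum.inr (Sum.inr j)) =
          v₂ (Sum.inl (Sum.inl (Fin.last r'))) * u₂ (Sum.inl (Sum.inr i.castSucc)) ^ n i *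
            u₂ (Sum.inr (Sum.inl j)) +
          v₂ (Sum.inl (Sum.inr (Fin.last r'))) * u₂ (Sum.inl (Sum.inl i.castSucc)) ^ n i *
            u₂ (Sum.inr (Sum.inr j)) := by
        intro i j
        rw [hu₂x (Fin.last r'), hu₂x i.castSucc, hu₂y (Fin.last r'), hu₂y i.castSucc,
          hu₂z j, hu₂w j, hv₂x (Fin.last r'), hv₂y (Fin.last r')]
        linear_combination E5 i j
      have E6₂ : ∀ j : Fin s,
          u₂ (Sum.inl (Sum.inl (Fin.last r'))) ^ p * u₂ (Sum.inr (Sum.inl j)) +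
          u₂ (Sum.inl (Sum.inr (Fin.last r'))) ^ p * u₂ (Sum.inr (Sum.inr j)) =
          v₂ (Sum.inl (Sum.inl (Fin.last r'))) ^ p * u₂ (Sum.inr (Sum.inl j)) +
          v₂ (Sum.inl (Sum.inr (Fin.last r'))) ^ p * u₂ (Sum.inr (Sum.inr j)) := by
        intro j
        rw [hu₂x (Fin.last r'), hu₂y (Fin.last r'), hu₂z j, hu₂w j,
          hv₂x (Fin.last r'), hv₂y (Fin.last r')]
        linear_combination E6 j
      obtain ⟨hh, hvv⟩ := SepExt.key_lemma hp_prime hlam m hm n hn α hρx hρy hρz hρw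
        hσx hσy hσz hσw u₂ v₂ hEx₂ hEy₂ hEz₂ hEw₂ hA₂ E1₂ E2₂ E3₂ E4₂ E5₂ E6₂
      have hv₂eq : v₂ = SepExt.Tpt α hh u₂ := funext hvv
      have hsrsr : (DihedralGroup.sr 0 : DihedralGroup p) * DihedralGroup.sr 0 = 1 := by
        rw [DihedralGroup.sr_mul_sr, sub_self, ← DihedralGroup.one_def]
      have hback : v = SepExt.Tpt α (DihedralGroup.sr 0 * (hh * DihedralGroup.sr 0)) u₁ := by
        have e1' : SepExt.Tpt α (DihedralGroup.sr 0) v₂ = v := by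
          show SepExt.Tpt α (DihedralGroup.sr 0) (SepExt.Tpt α (DihedralGroup.sr 0) v) = v
          rw [SepExt.Tpt_comp, hsrsr, SepExt.Tpt_one]
        have e2' : SepExt.Tpt α (DihedralGroup.sr 0) v₂ =
            SepExt.Tpt α (DihedralGroup.sr 0 * (hh * DihedralGroup.sr 0)) u₁ := by
          rw [hv₂eq]
          show SepExt.Tpt α (DihedralGroup.sr 0)
            (SepExt.Tpt α hh (SepExt.Tpt α (DihedralGroup.sr 0) u₁)) = _
          rw [SepExt.Tpt_comp, SepExt.Tpt_comp]
        rw [← e1', e2']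
      exact conclude _ (fun idx => congrFun hback idx)
end
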